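/- arXiv:2010.05059 — 10 statements merged into one kernel-verified Lean document; each statement's English description precedes it below -/
import Mathlib

section
/- Let X, X', Y, Y' be integer-valued random variables such that X' and Y' take values in {0,1}, X stochastically dominates Y, and for every integer x, the conditional distribution of X' given X = x stochastically dominates the conditional distribution of Y' given Y = x. Then X + X' stochastically dominates Y + Y'. -/
open MeasureTheory

lemma aux_split {Ω : Type*} [MeasurableSpace Ω] (μ : Measure Ω)
    (X X' : Ω → ℤ) (hXm : Measurable X) (hX'm : Measurable X')
    (hX' : ∀ ω, X' ω = 0 ∨ X' ω = 1) (x : ℤ) :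
    μ {ω | x ≤ X ω + X' ω} = μ {ω | x ≤ X ω} + μ {ω | X ω = x - 1 ∧ X' ω = 1} := by
  have hset : {ω | x ≤ X ω + X' ω} = {ω | x ≤ X ω} ∪ {ω | X ω = x - 1 ∧ X' ω = 1} := by
    ext ω
    rcases hX' ω with h | h <;> simp [Set.mem_setOf_eq, h] <;> omega
  have hdisj : Disjoint {ω | x ≤ X ω} {ω | X ω = x - 1 ∧ X' ω = 1} := by
    rw [Set.disjoint_left]
    intro ω h1 h2
    simp only [Set.mem_setOf_eq] at h1 h2
    omega
  have hmeas : MeasurableSet {ω | X ω = x - 1 ∧ X' ω = 1} := by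
    have : {ω | X ω = x - 1 ∧ X' ω = 1} = X ⁻¹' {x - 1} ∩ X' ⁻¹' {1} := by
      ext ω; simp [Set.mem_setOf_eq]
    rw [this]
    exact (hXm (measurableSet_singleton _)).inter (hX'm (measurableSet_singleton _))
  rw [hset, measure_union hdisj hmeas]

lemma aux_split2 {Ω : Type*} [MeasurableSpace Ω] (μ : Measure Ω)
    (X : Ω → ℤ) (hXm : Measurable X) (x : ℤ) :
    μ {ω | x - 1 ≤ X ω} = μ {ω | x ≤ X ω} + μ {ω | X ω = x - 1} := by
  have hset : {ω | x - 1 ≤ X ω} = {ω | x ≤ X ω} ∪ {ω | X ω = x - 1} := by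
    ext ω; simp only [Set.mem_setOf_eq, Set.mem_union]; omega
  have hdisj : Disjoint {ω | x ≤ X ω} {ω | X ω = x - 1} := by
    rw [Set.disjoint_left]
    intro ω h1 h2
    simp only [Set.mem_setOf_eq] at h1 h2
    omega
  rw [hset, measure_union hdisj (hXm (measurableSet_singleton _))]

theorem stmt_0 {Ω₁ Ω₂ : Type*} [MeasurableSpace Ω₁] [MeasurableSpace Ω₂]
    (μ : Measure Ω₁) (ν : Measure Ω₂) [IsProbabilityMeasure μ] [IsProbabilityMeasure ν]
    (X X' : Ω₁ → ℤ) (Y Y' : Ω₂ → ℤ)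
    (hXm : Measurable X) (hX'm : Measurable X') (hYm : Measurable Y) (hY'm : Measurable Y')
    (hX' : ∀ ω, X' ω = 0 ∨ X' ω = 1) (hY' : ∀ ω, Y' ω = 0 ∨ Y' ω = 1)
    (hdom : ∀ x : ℤ, ν {ω | x ≤ Y ω} ≤ μ {ω | x ≤ X ω})
    (hcond : ∀ x : ℤ, μ {ω | X ω = x} ≠ 0 → ν {ω | Y ω = x} ≠ 0 →
      ν {ω | Y ω = x ∧ Y' ω = 1} / ν {ω | Y ω = x} ≤
        μ {ω | X ω = x ∧ X' ω = 1} / μ {ω | X ω = x}) :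
    ∀ x : ℤ, ν {ω | x ≤ Y ω + Y' ω} ≤ μ {ω | x ≤ X ω + X' ω} := by
  intro x
  rw [aux_split μ X X' hXm hX'm hX' x, aux_split ν Y Y' hYm hY'm hY' x]
  -- notation
  set q := ν {ω | x ≤ Y ω} with hq
  set p := μ {ω | x ≤ X ω} with hp
  set Q := ν {ω | Y ω = x - 1} with hQ
  set P := μ {ω | X ω = x - 1} with hP
  set B := ν {ω | Y ω = x - 1 ∧ Y' ω = 1} with hB
  set A := μ {ω | X ω = x - 1 ∧ X' ω = 1} with hA
  have hBQ : B ≤ Q := by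
    apply measure_mono; intro ω h; exact h.1
  have hAP : A ≤ P := by
    apply measure_mono; intro ω h; exact h.1
  have hqp : q ≤ p := hdom x
  have hsum : q + Q ≤ p + P := by
    rw [← aux_split2 ν Y hYm x, ← aux_split2 μ X hXm x]
    exact hdom (x - 1)
  by_cases hQ0 : Q = 0
  · have hB0 : B = 0 := le_antisymm (hQ0 ▸ hBQ) zero_le
    rw [hB0, add_zero]
    exact le_trans hqp le_self_add
  by_cases hP0 : P = 0
  · calc q + B ≤ q + Q := add_le_add_right hBQ q
      _ ≤ p + P := hsum
      _ = p := by rw [hP0, add_zero]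
      _ ≤ p + A := le_self_add
  -- both nonzero: convert to reals
  have hdiv := hcond (x - 1) hP0 hQ0
  have fp : p ≠ ⊤ := measure_ne_top μ _
  have fq : q ≠ ⊤ := measure_ne_top ν _
  have fP : P ≠ ⊤ := measure_ne_top μ _
  have fQ : Q ≠ ⊤ := measure_ne_top ν _
  have fA : A ≠ ⊤ := measure_ne_top μ _
  have fB : B ≠ ⊤ := measure_ne_top ν _
  rw [← ENNReal.toReal_le_toReal (by finiteness) (by finiteness),
    ENNReal.toReal_add fq fB, ENNReal.toReal_add fp fA]
  have hPpos : 0 < P.toReal := ENNReal.toReal_pos hP0 fP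
  have hQpos : 0 < Q.toReal := ENNReal.toReal_pos hQ0 fQ
  have hdivR : B.toReal / Q.toReal ≤ A.toReal / P.toReal := by
    rw [← ENNReal.toReal_div, ← ENNReal.toReal_div]
    exact ENNReal.toReal_le_toReal (by simp [ENNReal.div_eq_top, hQ0, fB]) 
      (by simp [ENNReal.div_eq_top, hP0, fA]) |>.mpr hdiv
  have hcross : B.toReal * P.toReal ≤ A.toReal * Q.toReal :=
    (div_le_div_iff₀ hQpos hPpos).mp hdivR
  have hqpR : q.toReal ≤ p.toReal := ENNReal.toReal_le_toReal fq fp |>.mpr hqp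
  have hsumR : q.toReal + Q.toReal ≤ p.toReal + P.toReal := by
    have := ENNReal.toReal_le_toReal (by finiteness) (by finiteness) |>.mpr hsum
    rwa [ENNReal.toReal_add fq fQ, ENNReal.toReal_add fp fP] at this
  have hAPR : A.toReal ≤ P.toReal := ENNReal.toReal_le_toReal fA fP |>.mpr hAP
  have hBQR : B.toReal ≤ Q.toReal := ENNReal.toReal_le_toReal fB fQ |>.mpr hBQ
  have hA0 : 0 ≤ A.toReal := ENNReal.toReal_nonneg
  have hB0 : 0 ≤ B.toReal := ENNReal.toReal_nonneg
  nlinarith [mul_nonneg (sub_nonneg.mpr hAPR) (sub_nonneg.mpr hqpR),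
    mul_nonneg hA0 (sub_nonneg.mpr hqpR)]
end

section
/- Let B_1, ..., B_k be (not necessarily independent) Bernoulli random variables such that for all t and all integers x, Pr[B_t = 1 | B_1 + ... + B_{t-1} = x] ≤ p whenever this conditional probability is defined. Then the sum B_1 + ... + B_k is stochastically dominated by a binomial random variable with k trials and success probability p. -/
open MeasureTheory

noncomputable def Ttail (p : ENNReal) (k j : ℕ) : ENNReal :=
  ∑ i ∈ Finset.Icc j k, (k.choose i : ENNReal) * p ^ i * (1 - p) ^ (k - i)

lemma Ttail_zero (p : ENNReal) (hp : p ≤ 1) (k : ℕ) : Ttail p k 0 = 1 := by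
  have h : Ttail p k 0 = (p + (1 - p)) ^ k := by
    rw [add_pow, Ttail, show Finset.Icc 0 k = Finset.range (k + 1) from by
      ext i; simp [Nat.lt_succ_iff]]
    exact Finset.sum_congr rfl fun i _ => by ring
  rw [h, add_tsub_cancel_of_le hp, one_pow]

lemma Ttail_rec (p : ENNReal) (hp : p ≤ 1) (k j : ℕ) (hj : j ≤ k) :
    Ttail p (k + 1) (j + 1) = (1 - p) * Ttail p k (j + 1) + p * Ttail p k j := by
  have hmap : Finset.Icc (j + 1) (k + 1) = Finset.map (addRightEmbedding 1) (Finset.Icc j k) := by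
    rw [Finset.map_add_right_Icc]
  have h1 : Ttail p (k + 1) (j + 1)
      = ∑ i ∈ Finset.Icc j k, ((k + 1).choose (i + 1) : ENNReal) * p ^ (i + 1) * (1 - p) ^ (k - i) := by
    rw [Ttail, hmap, Finset.sum_map]
    refine Finset.sum_congr rfl fun i hi => ?_
    simp only [addRightEmbedding_apply, Nat.succ_sub_succ]
  have h2 : ∀ i ∈ Finset.Icc j k,
      ((k + 1).choose (i + 1) : ENNReal) * p ^ (i + 1) * (1 - p) ^ (k - i)
      = (1 - p) * ((k.choose (i + 1) : ENNReal) * p ^ (i + 1) * (1 - p) ^ (k - (i + 1)))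
        + p * ((k.choose i : ENNReal) * p ^ i * (1 - p) ^ (k - i)) := by
    intro i hi
    have hik : i ≤ k := (Finset.mem_Icc.mp hi).2
    rw [Nat.choose_succ_succ]
    push_cast
    rcases lt_or_eq_of_le hik with h | h
    · have hk : k - i = (k - (i + 1)) + 1 := by omega
      rw [hk]; ring
    · subst h
      simp [Nat.choose_succ_self]
      ring
  have h3 : ∑ i ∈ Finset.Icc j k,
      ((k.choose (i + 1) : ENNReal) * p ^ (i + 1) * (1 - p) ^ (k - (i + 1)))
      = Ttail p k (j + 1) := by
    have := Finset.sum_map (Finset.Icc j k) (addRightEmbedding 1)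
      (fun i => (k.choose i : ENNReal) * p ^ i * (1 - p) ^ (k - i))
    simp only [addRightEmbedding_apply] at this
    rw [← this, ← hmap, Finset.sum_Icc_succ_top (by omega : j + 1 ≤ k + 1)]
    simp [Nat.choose_succ_self, Ttail]
  calc Ttail p (k + 1) (j + 1)
      = ∑ i ∈ Finset.Icc j k,
          ((1 - p) * ((k.choose (i + 1) : ENNReal) * p ^ (i + 1) * (1 - p) ^ (k - (i + 1)))
            + p * ((k.choose i : ENNReal) * p ^ i * (1 - p) ^ (k - i))) := by
        rw [h1]; exact Finset.sum_congr rfl h2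
    _ = (1 - p) * Ttail p k (j + 1) + p * Ttail p k j := by
        rw [Finset.sum_add_distrib, ← Finset.mul_sum, ← Finset.mul_sum, h3]
        simp only [Ttail]

lemma aux_dom {Ω : Type*} [MeasurableSpace Ω] (μ : Measure Ω) [IsProbabilityMeasure μ]
    (p : ENNReal) (hp : p ≤ 1) (B : ℕ → Ω → ℕ)
    (hmeas : ∀ t, Measurable (B t))
    (hB : ∀ t ω, B t ω = 0 ∨ B t ω = 1) :
    ∀ k : ℕ, (∀ t < k, ∀ x : ℕ,
      μ {ω | ∑ s ∈ Finset.range t, B s ω = x} ≠ 0 →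
      μ {ω | B t ω = 1 ∧ ∑ s ∈ Finset.range t, B s ω = x} /
        μ {ω | ∑ s ∈ Finset.range t, B s ω = x} ≤ p) →
    ∀ j : ℕ, μ {ω | j ≤ ∑ s ∈ Finset.range k, B s ω} ≤ Ttail p k j := by
  intro k
  induction k with
  | zero =>
    intro _ j
    cases j with
    | zero => rw [Ttail_zero p hp]; exact prob_le_one
    | succ j =>
      have h : {ω : Ω | j + 1 ≤ ∑ s ∈ Finset.range 0, B s ω} = ∅ := by
        ext ω; simp
      rw [h]; simp
  | succ k ih =>
    intro hcond j
    have ihk := ih (fun t ht => hcond t (ht.trans (Nat.lt_succ_self k)))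
    have hSle : ∀ ω, ∑ s ∈ Finset.range (k + 1), B s ω ≤ k + 1 := by
      intro ω
      calc ∑ s ∈ Finset.range (k + 1), B s ω
          ≤ ∑ s ∈ Finset.range (k + 1), 1 :=
            Finset.sum_le_sum fun s _ => by rcases hB s ω with h | h <;> omega
        _ = k + 1 := by simp
    cases j with
    | zero => rw [Ttail_zero p hp]; exact prob_le_one
    | succ j =>
      by_cases hj : j ≤ k
      · -- main case
        set S : Ω → ℕ := fun ω => ∑ s ∈ Finset.range k, B s ω with hS
        have hSmeas : Measurable S := Finset.measurable_sum _ fun i _ => hmeas i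
        set A : Set Ω := {ω | j + 1 ≤ S ω} with hA
        set C : Set Ω := {ω | S ω = j} with hC
        set E : Set Ω := {ω | B k ω = 1 ∧ S ω = j} with hE
        have hCmeas : MeasurableSet C :=
          hSmeas (MeasurableSpace.measurableSet_top : MeasurableSet ({j} : Set ℕ))
        have hsub : {ω | j + 1 ≤ ∑ s ∈ Finset.range (k + 1), B s ω} ⊆ A ∪ E := by
          intro ω hω
          simp only [Set.mem_setOf_eq, Finset.sum_range_succ] at hω
          rcases hB k ω with h | h
          · left; simp only [hA, Set.mem_setOf_eq, hS]; omega
          · by_cases h2 : j + 1 ≤ S ω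
            · left; exact h2
            · right; exact ⟨h, by simp only [hS] at h2 ⊢; omega⟩
        have hEC : μ E ≤ p * μ C := by
          by_cases h0 : μ C = 0
          · have : μ E = 0 := measure_mono_null (fun ω hω => hω.2) h0
            rw [this]; exact zero_le
          · have hc := hcond k (Nat.lt_succ_self k) j h0
            rwa [ENNReal.div_le_iff h0 (measure_ne_top μ _)] at hc
        have hdisj : Disjoint A C := by
          rw [Set.disjoint_left]
          intro ω hωA hωC
          simp only [hA, hC, Set.mem_setOf_eq] at hωA hωC
          omega
        have hAC : μ A + μ C = μ {ω | j ≤ S ω} := by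
          rw [← measure_union hdisj hCmeas]
          congr 1
          ext ω
          simp only [hA, hC, Set.mem_union, Set.mem_setOf_eq]
          omega
        calc μ {ω | j + 1 ≤ ∑ s ∈ Finset.range (k + 1), B s ω}
            ≤ μ (A ∪ E) := measure_mono hsub
          _ ≤ μ A + μ E := measure_union_le _ _
          _ ≤ μ A + p * μ C := add_le_add_right hEC _
          _ = (1 - p) * μ A + p * (μ A + μ C) := by
              rw [mul_add, ← add_assoc, ← add_mul, tsub_add_cancel_of_le hp, one_mul]
          _ = (1 - p) * μ A + p * μ {ω | j ≤ S ω} := by rw [hAC]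
          _ ≤ (1 - p) * Ttail p k (j + 1) + p * Ttail p k j :=
              add_le_add (mul_le_mul_right (ihk (j + 1)) _) (mul_le_mul_right (ihk j) _)
          _ = Ttail p (k + 1) (j + 1) := (Ttail_rec p hp k j hj).symm
      · -- empty case : j + 1 > k + 1
        have h : {ω : Ω | j + 1 ≤ ∑ s ∈ Finset.range (k + 1), B s ω} = ∅ := by
          ext ω
          simp only [Set.mem_setOf_eq, Set.mem_empty_iff_false, iff_false, not_le]
          have := hSle ω
          omega
        rw [h]
        simp

theorem stmt_1 {Ω : Type*} [MeasurableSpace Ω] (μ : Measure Ω) [IsProbabilityMeasure μ]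
    (k : ℕ) (p : ENNReal) (hp : p ≤ 1) (B : ℕ → Ω → ℕ)
    (hmeas : ∀ t, Measurable (B t))
    (hB : ∀ t ω, B t ω = 0 ∨ B t ω = 1)
    (hcond : ∀ t < k, ∀ x : ℕ,
      μ {ω | ∑ s ∈ Finset.range t, B s ω = x} ≠ 0 →
      μ {ω | B t ω = 1 ∧ ∑ s ∈ Finset.range t, B s ω = x} /
        μ {ω | ∑ s ∈ Finset.range t, B s ω = x} ≤ p) :
    ∀ j : ℕ, μ {ω | j ≤ ∑ s ∈ Finset.range k, B s ω} ≤
      ∑ i ∈ Finset.Icc j k, (k.choose i : ENNReal) * p ^ i * (1 - p) ^ (k - i) := by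
  intro j
  have := aux_dom μ p hp B hmeas hB k hcond j
  rwa [Ttail] at this
end

section
/- Let P_1, ..., P_k and R_1, ..., R_k be {0,1}-valued random variables satisfying: Pr[P_t = 1 | P_1, ..., P_{t-1}] ≤ (m - (P_1 + ... + P_{t-1}))/(N - t + 1) and Pr[R_t = 1 | R_1, ..., R_{t-1}] = (m - (R_1 + ... + R_{t-1}))/(N - t + 1) for all t ≤ k. Then R_1 + ... + R_k stochastically dominates P_1 + ... + P_k. -/
open MeasureTheory Finset

set_option linter.unusedSectionVars false
set_option maxHeartbeats 1000000

noncomputable def pcl (N m t j : ℕ) : ℝ := min 1 (max 0 (((m:ℝ) - j)/((N:ℝ) - t)))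

lemma pcl_nonneg (N m t j : ℕ) : 0 ≤ pcl N m t j :=
  le_min zero_le_one (le_max_left 0 _)

lemma pcl_le_one (N m t j : ℕ) : pcl N m t j ≤ 1 := min_le_left _ _

noncomputable def HH (N m k x : ℕ) : ℕ → ℕ → ℝ
  | 0, j => if x ≤ j then 1 else 0
  | (r+1), j => pcl N m (k-(r+1)) j * HH N m k x r (j+1)
      + (1 - pcl N m (k-(r+1)) j) * HH N m k x r j

lemma HH_mono (N m k x : ℕ) : ∀ r j, HH N m k x r j ≤ HH N m k x r (j+1) := by
  intro r
  induction r with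
  | zero =>
    intro j
    simp only [HH]
    split_ifs with h1 h2
    any_goals norm_num
    all_goals omega
  | succ r ih =>
    intro j
    have h1 := ih j
    have h2 := ih (j+1)
    simp only [HH]
    nlinarith [pcl_nonneg N m (k-(r+1)) (j+1), pcl_le_one N m (k-(r+1)) j,
      mul_nonneg (pcl_nonneg N m (k-(r+1)) (j+1)) (sub_nonneg.2 h2),
      mul_nonneg (sub_nonneg.2 (pcl_le_one N m (k-(r+1)) j)) (sub_nonneg.2 h1)]

section Ev
variable {Ω : Type*} [MeasurableSpace Ω]

/-- Event that the first `t` values of the 0/1 process `P` match the set `S`. -/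
def ev (P : ℕ → Ω → ℕ) (t : ℕ) (S : Finset ℕ) : Set Ω :=
  {ω | ∀ s < t, P s ω = if s ∈ S then 1 else 0}

lemma ev_meas (P : ℕ → Ω → ℕ) (hP : ∀ s, Measurable (P s)) (t : ℕ) (S : Finset ℕ) :
    MeasurableSet (ev P t S) := by
  have : ev P t S = ⋂ s, ⋂ (_ : s < t), (P s) ⁻¹' {if s ∈ S then 1 else 0} := by
    ext ω; simp [ev]
  rw [this]
  exact MeasurableSet.iInter fun s => MeasurableSet.iInter fun _ =>
    hP s (measurableSet_singleton _)

lemma mem_ev_iff (P : ℕ → Ω → ℕ) (hP01 : ∀ t ω, P t ω = 0 ∨ P t ω = 1)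
    {t : ℕ} {S : Finset ℕ} (hS : S ⊆ range t) (ω : Ω) :
    ω ∈ ev P t S ↔ S = (range t).filter (fun s => P s ω = 1) := by
  constructor
  · intro h
    ext s
    simp only [mem_filter, mem_range]
    constructor
    · intro hs
      have hst : s < t := mem_range.1 (hS hs)
      have := h s hst
      simp [hs] at this
      exact ⟨hst, this⟩
    · rintro ⟨hst, h1⟩
      have := h s hst
      by_contra hns
      simp [hns] at this
      omega
  · rintro rfl s hst
    rcases hP01 s ω with h0 | h1
    · have : s ∉ (range t).filter (fun s => P s ω = 1) := by simp [h0]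
      simp [this, h0]
    · have : s ∈ (range t).filter (fun s => P s ω = 1) := by
        simp [h1, mem_range.2 hst]
      simp [this, h1]

lemma ev_succ_one (P : ℕ → Ω → ℕ) {t : ℕ} {S : Finset ℕ} (hS : S ⊆ range t) :
    ev P (t+1) (insert t S) = {ω | P t ω = 1 ∧ ω ∈ ev P t S} := by
  have htS : t ∉ S := fun h => by simpa using mem_range.1 (hS h)
  ext ω
  simp only [ev, Set.mem_setOf_eq]
  constructor
  · intro h
    refine ⟨by simpa using h t (Nat.lt_succ_self t), fun s hst => ?_⟩
    have := h s (Nat.lt_succ_of_lt hst)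
    have hsne : s ≠ t := Nat.ne_of_lt hst
    simpa [mem_insert, hsne] using this
  · rintro ⟨h1, h⟩ s hst
    rcases Nat.lt_succ_iff_lt_or_eq.1 hst with hlt | rfl
    · have := h s hlt
      have hsne : s ≠ t := Nat.ne_of_lt hlt
      simpa [mem_insert, hsne] using this
    · simpa using h1

lemma ev_succ_zero (P : ℕ → Ω → ℕ) (hP01 : ∀ t ω, P t ω = 0 ∨ P t ω = 1)
    {t : ℕ} {S : Finset ℕ} (hS : S ⊆ range t) :
    ev P (t+1) S = {ω | ¬ (P t ω = 1) ∧ ω ∈ ev P t S} := by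
  have htS : t ∉ S := fun h => by simpa using mem_range.1 (hS h)
  ext ω
  simp only [ev, Set.mem_setOf_eq]
  constructor
  · intro h
    have ht := h t (Nat.lt_succ_self t)
    simp [htS] at ht
    exact ⟨by omega, fun s hst => h s (Nat.lt_succ_of_lt hst)⟩
  · rintro ⟨h1, h⟩ s hst
    rcases Nat.lt_succ_iff_lt_or_eq.1 hst with hlt | rfl
    · exact h s hlt
    · rcases hP01 s ω with h0 | hh1
      · simpa [htS] using h0
      · exact absurd hh1 h1

lemma ev_measure_split (μ : Measure Ω) (P : ℕ → Ω → ℕ)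
    (hPmeas : ∀ s, Measurable (P s)) (hP01 : ∀ t ω, P t ω = 0 ∨ P t ω = 1)
    {t : ℕ} {S : Finset ℕ} (hS : S ⊆ range t) :
    μ (ev P t S) = μ (ev P (t+1) S) + μ (ev P (t+1) (insert t S)) := by
  rw [ev_succ_zero P hP01 hS, ev_succ_one P hS]
  have hsplit : ev P t S =
      {ω | ¬ (P t ω = 1) ∧ ω ∈ ev P t S} ∪ {ω | P t ω = 1 ∧ ω ∈ ev P t S} := by
    ext ω
    simp only [Set.mem_union, Set.mem_setOf_eq]
    by_cases h : P t ω = 1 <;> tauto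
  have hdisj : Disjoint {ω | ¬ (P t ω = 1) ∧ ω ∈ ev P t S}
      {ω | P t ω = 1 ∧ ω ∈ ev P t S} := by
    rw [Set.disjoint_left]
    rintro ω ⟨h0, -⟩ ⟨h1, -⟩
    exact h0 h1
  have hm1 : MeasurableSet {ω | P t ω = 1 ∧ ω ∈ ev P t S} := by
    have : {ω | P t ω = 1 ∧ ω ∈ ev P t S} = (P t) ⁻¹' {1} ∩ ev P t S := rfl
    rw [this]
    exact (hPmeas t (measurableSet_singleton _)).inter (ev_meas P hPmeas t S)
  conv_lhs => rw [hsplit]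
  exact measure_union hdisj hm1

lemma sum_ev_eq_card (P : ℕ → Ω → ℕ) {t : ℕ} {S : Finset ℕ} (hS : S ⊆ range t)
    {ω : Ω} (hω : ω ∈ ev P t S) :
    ∑ s ∈ range t, P s ω = S.card := by
  have : ∀ s ∈ range t, P s ω = if s ∈ S then 1 else 0 := fun s hs =>
    hω s (mem_range.1 hs)
  rw [Finset.sum_congr rfl this, Finset.sum_ite_mem]
  rw [Finset.inter_eq_right.2 hS]
  simp

lemma Estep (μ : Measure Ω) [IsFiniteMeasure μ] (P : ℕ → Ω → ℕ)
    (hPmeas : ∀ s, Measurable (P s)) (hP01 : ∀ t ω, P t ω = 0 ∨ P t ω = 1)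
    (g : ℕ → ℝ) (t : ℕ) :
    ∑ S ∈ (range (t+1)).powerset, (μ (ev P (t+1) S)).toReal * g S.card
    = ∑ S ∈ (range t).powerset, ((μ (ev P t S)).toReal * g S.card
        + (μ (ev P (t+1) (insert t S))).toReal * (g (S.card+1) - g S.card)) := by
  have hdisj : Disjoint ((range t).powerset)
      (((range t).powerset).image (insert t)) := by
    rw [Finset.disjoint_left]
    intro S hS hS'
    rcases Finset.mem_image.1 hS' with ⟨S', -, rfl⟩
    exact (mem_range.1 ((mem_powerset.1 hS) (mem_insert_self t S'))).false
  have hinj : ∀ x ∈ (range t).powerset, ∀ y ∈ (range t).powerset,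
      insert t x = insert t y → x = y := by
    intro x hx y hy h
    have hxt : t ∉ x := fun hh => (mem_range.1 ((mem_powerset.1 hx) hh)).false
    have hyt : t ∉ y := fun hh => (mem_range.1 ((mem_powerset.1 hy) hh)).false
    rw [← Finset.erase_insert hxt, ← Finset.erase_insert hyt, h]
  have hsplit : ∀ S ∈ (range t).powerset, (μ (ev P (t+1) S)).toReal
      = (μ (ev P t S)).toReal - (μ (ev P (t+1) (insert t S))).toReal := by
    intro S hS
    have := ev_measure_split μ P hPmeas hP01 (mem_powerset.1 hS)
    rw [this, ENNReal.toReal_add (measure_ne_top μ _) (measure_ne_top μ _)]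
    ring
  calc ∑ S ∈ (range (t+1)).powerset, (μ (ev P (t+1) S)).toReal * g S.card
      = ∑ S ∈ (range t).powerset, (μ (ev P (t+1) S)).toReal * g S.card
        + ∑ S ∈ (range t).powerset,
            (μ (ev P (t+1) (insert t S))).toReal * g (S.card + 1) := by
        rw [range_add_one, powerset_insert, sum_union hdisj, sum_image hinj]
        congr 1
        refine sum_congr rfl fun S hS => ?_
        have hxt : t ∉ S := fun hh => (mem_range.1 ((mem_powerset.1 hS) hh)).false
        rw [card_insert_of_notMem hxt]
    _ = _ := by
        rw [← sum_add_distrib]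
        refine sum_congr rfl fun S hS => ?_
        rw [hsplit S hS]
        ring

lemma vS_sum {t : ℕ} {S : Finset ℕ} (hS : S ⊆ range t) :
    ∑ s ∈ range t, (((if s ∈ S then 1 else 0 : ℕ) : ℝ)) = S.card := by
  push_cast
  rw [Finset.sum_ite_mem, Finset.inter_eq_right.2 hS]
  simp

lemma key_le (N m k : ℕ) (μ : Measure Ω) [IsFiniteMeasure μ] (P : ℕ → Ω → ℕ)
    (hcond : ∀ t < k, ∀ v : ℕ → ℕ, μ {ω | ∀ s < t, P s ω = v s} ≠ 0 →
      (μ {ω | P t ω = 1 ∧ ∀ s < t, P s ω = v s}).toReal /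
          (μ {ω | ∀ s < t, P s ω = v s}).toReal ≤
        ((m : ℝ) - ∑ s ∈ Finset.range t, (v s : ℝ)) / ((N : ℝ) - t))
    {t : ℕ} (ht : t < k) {S : Finset ℕ} (hS : S ⊆ range t) :
    (μ (ev P (t+1) (insert t S))).toReal
      ≤ (μ (ev P t S)).toReal * pcl N m t S.card := by
  set a := μ (ev P t S) with ha_def
  set b := μ (ev P (t+1) (insert t S)) with hb_def
  have hba : b ≤ a := by
    rw [hb_def, ev_succ_one P hS]
    exact measure_mono fun ω hω => hω.2
  by_cases ha : a = 0
  · have hb : b = 0 := le_antisymm (ha ▸ hba) zero_le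
    simp [ha, hb]
  · have h := hcond t ht (fun s => if s ∈ S then 1 else 0) ha
    have hbeq : {ω | P t ω = 1 ∧ ∀ s < t, P s ω = if s ∈ S then 1 else 0}
        = ev P (t+1) (insert t S) := by
      rw [ev_succ_one P hS]; rfl
    rw [hbeq, vS_sum hS] at h
    have ha' : 0 < a.toReal := ENNReal.toReal_pos ha (measure_ne_top μ _)
    have hq : b.toReal ≤ ((m : ℝ) - S.card) / ((N : ℝ) - t) * a.toReal :=
      (div_le_iff₀ ha').1 h
    have hbar : b.toReal ≤ a.toReal :=
      ENNReal.toReal_mono (measure_ne_top μ _) hba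
    rcases min_cases (1 : ℝ) (max 0 (((m:ℝ) - S.card)/((N:ℝ) - t))) with
      ⟨hmin, -⟩ | ⟨hmin, -⟩
    · rw [pcl, hmin, mul_one]; exact hbar
    · rw [pcl, hmin]
      calc b.toReal ≤ ((m : ℝ) - S.card) / ((N : ℝ) - t) * a.toReal := hq
        _ ≤ max 0 (((m:ℝ) - S.card)/((N:ℝ) - t)) * a.toReal :=
            mul_le_mul_of_nonneg_right (le_max_right _ _) ha'.le
        _ = a.toReal * max 0 (((m:ℝ) - S.card)/((N:ℝ) - t)) := mul_comm _ _

lemma key_eq (N m k : ℕ) (μ : Measure Ω) [IsFiniteMeasure μ] (P : ℕ → Ω → ℕ)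
    (hcond : ∀ t < k, ∀ v : ℕ → ℕ, μ {ω | ∀ s < t, P s ω = v s} ≠ 0 →
      (μ {ω | P t ω = 1 ∧ ∀ s < t, P s ω = v s}).toReal /
          (μ {ω | ∀ s < t, P s ω = v s}).toReal =
        ((m : ℝ) - ∑ s ∈ Finset.range t, (v s : ℝ)) / ((N : ℝ) - t))
    {t : ℕ} (ht : t < k) {S : Finset ℕ} (hS : S ⊆ range t) :
    (μ (ev P (t+1) (insert t S))).toReal
      = (μ (ev P t S)).toReal * pcl N m t S.card := by
  set a := μ (ev P t S) with ha_def
  set b := μ (ev P (t+1) (insert t S)) with hb_def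
  have hba : b ≤ a := by
    rw [hb_def, ev_succ_one P hS]
    exact measure_mono fun ω hω => hω.2
  by_cases ha : a = 0
  · have hb : b = 0 := le_antisymm (ha ▸ hba) zero_le
    simp [ha, hb]
  · have h := hcond t ht (fun s => if s ∈ S then 1 else 0) ha
    have hbeq : {ω | P t ω = 1 ∧ ∀ s < t, P s ω = if s ∈ S then 1 else 0}
        = ev P (t+1) (insert t S) := by
      rw [ev_succ_one P hS]; rfl
    rw [hbeq, vS_sum hS] at h
    have ha' : 0 < a.toReal := ENNReal.toReal_pos ha (measure_ne_top μ _)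
    have hbar : b.toReal ≤ a.toReal :=
      ENNReal.toReal_mono (measure_ne_top μ _) hba
    have hq0 : 0 ≤ ((m : ℝ) - S.card) / ((N : ℝ) - t) := by
      rw [← h]; positivity
    have hq1 : ((m : ℝ) - S.card) / ((N : ℝ) - t) ≤ 1 := by
      rw [← h]; exact (div_le_one ha').2 hbar
    have hpcl : pcl N m t S.card = ((m : ℝ) - S.card) / ((N : ℝ) - t) := by
      rw [pcl, max_eq_right hq0, min_eq_right hq1]
    have haeq : {ω | ∀ s < t, P s ω = (fun s => if s ∈ S then 1 else 0) s}
        = ev P t S := rfl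
    rw [haeq] at h
    rw [hpcl, ← h, mul_comm, div_mul_cancel₀ _ ha'.ne']

/-- The expected value of the backward value function at time `t`. -/
noncomputable def Ee (N m k x : ℕ) (μ : Measure Ω) (P : ℕ → Ω → ℕ) (t : ℕ) : ℝ :=
  ∑ S ∈ (range t).powerset, (μ (ev P t S)).toReal * HH N m k x (k - t) S.card

lemma Ee_zero (N m k x : ℕ) (μ : Measure Ω) [IsProbabilityMeasure μ]
    (P : ℕ → Ω → ℕ) : Ee N m k x μ P 0 = HH N m k x k 0 := by
  have huniv : ev P 0 ∅ = Set.univ := by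
    ext ω; simp [ev]
  rw [Ee, range_zero, powerset_empty, sum_singleton, huniv]
  simp

lemma Ee_succ_le (N m k x : ℕ) (μ : Measure Ω) [IsProbabilityMeasure μ]
    (P : ℕ → Ω → ℕ)
    (hPmeas : ∀ s, Measurable (P s)) (hP01 : ∀ t ω, P t ω = 0 ∨ P t ω = 1)
    (hcond : ∀ t < k, ∀ v : ℕ → ℕ, μ {ω | ∀ s < t, P s ω = v s} ≠ 0 →
      (μ {ω | P t ω = 1 ∧ ∀ s < t, P s ω = v s}).toReal /
          (μ {ω | ∀ s < t, P s ω = v s}).toReal ≤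
        ((m : ℝ) - ∑ s ∈ Finset.range t, (v s : ℝ)) / ((N : ℝ) - t))
    {t : ℕ} (ht : t < k) :
    Ee N m k x μ P (t+1) ≤ Ee N m k x μ P t := by
  rw [Ee, Ee, Estep μ P hPmeas hP01 (fun j => HH N m k x (k - (t+1)) j) t]
  refine sum_le_sum fun S hS => ?_
  have hSsub := mem_powerset.1 hS
  have hkey := key_le N m k μ P hcond ht hSsub
  have hmono := HH_mono N m k x (k-(t+1)) S.card
  have h1 : k - t = (k - (t+1)) + 1 := by omega
  have h2 : k - ((k - (t+1)) + 1) = t := by omega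
  rw [h1]
  simp only [HH]
  rw [h2]
  have hΔ : (μ (ev P (t+1) (insert t S))).toReal
        * (HH N m k x (k-(t+1)) (S.card+1) - HH N m k x (k-(t+1)) S.card)
      ≤ (μ (ev P t S)).toReal * pcl N m t S.card
        * (HH N m k x (k-(t+1)) (S.card+1) - HH N m k x (k-(t+1)) S.card) :=
    mul_le_mul_of_nonneg_right hkey (sub_nonneg.2 hmono)
  nlinarith [hΔ]

lemma Ee_succ_eq (N m k x : ℕ) (μ : Measure Ω) [IsProbabilityMeasure μ]
    (P : ℕ → Ω → ℕ)
    (hPmeas : ∀ s, Measurable (P s)) (hP01 : ∀ t ω, P t ω = 0 ∨ P t ω = 1)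
    (hcond : ∀ t < k, ∀ v : ℕ → ℕ, μ {ω | ∀ s < t, P s ω = v s} ≠ 0 →
      (μ {ω | P t ω = 1 ∧ ∀ s < t, P s ω = v s}).toReal /
          (μ {ω | ∀ s < t, P s ω = v s}).toReal =
        ((m : ℝ) - ∑ s ∈ Finset.range t, (v s : ℝ)) / ((N : ℝ) - t))
    {t : ℕ} (ht : t < k) :
    Ee N m k x μ P (t+1) = Ee N m k x μ P t := by
  rw [Ee, Ee, Estep μ P hPmeas hP01 (fun j => HH N m k x (k - (t+1)) j) t]
  refine sum_congr rfl fun S hS => ?_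
  have hSsub := mem_powerset.1 hS
  have hkey := key_eq N m k μ P hcond ht hSsub
  have h1 : k - t = (k - (t+1)) + 1 := by omega
  have h2 : k - ((k - (t+1)) + 1) = t := by omega
  rw [h1]
  simp only [HH]
  rw [h2, hkey]
  ring

lemma Ee_tail (N m k x : ℕ) (μ : Measure Ω) [IsProbabilityMeasure μ]
    (P : ℕ → Ω → ℕ)
    (hPmeas : ∀ s, Measurable (P s)) (hP01 : ∀ t ω, P t ω = 0 ∨ P t ω = 1) :
    (μ {ω | x ≤ ∑ t ∈ Finset.range k, P t ω}).toReal = Ee N m k x μ P k := by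
  have hT : {ω | x ≤ ∑ t ∈ Finset.range k, P t ω}
      = ⋃ S ∈ (range k).powerset.filter (fun S => x ≤ S.card), ev P k S := by
    ext ω
    simp only [Set.mem_setOf_eq, Set.mem_iUnion, exists_prop, mem_filter,
      mem_powerset]
    constructor
    · intro hx
      have hev : ω ∈ ev P k ((range k).filter (fun s => P s ω = 1)) :=
        (mem_ev_iff P hP01 (filter_subset _ _) ω).2 rfl
      have hcard := sum_ev_eq_card P (filter_subset _ _) hev
      exact ⟨_, ⟨filter_subset _ _, hcard ▸ hx⟩, hev⟩
    · rintro ⟨S, ⟨hSsub, hxc⟩, hev⟩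
      have := sum_ev_eq_card P hSsub hev
      omega
  have hpd : Set.PairwiseDisjoint
      ↑((range k).powerset.filter (fun S => x ≤ S.card)) (ev P k) := by
    intro S hS S' hS' hne
    simp only [coe_filter, Set.mem_setOf_eq, mem_powerset] at hS hS'
    rw [Function.onFun, Set.disjoint_left]
    intro ω hω hω'
    have h1 := (mem_ev_iff P hP01 hS.1 ω).1 hω
    have h2 := (mem_ev_iff P hP01 hS'.1 ω).1 hω'
    exact hne (h1.trans h2.symm)
  have hm : ∀ S ∈ (range k).powerset.filter (fun S => x ≤ S.card),
      MeasurableSet (ev P k S) := fun S _ => ev_meas P hPmeas k S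
  rw [hT, measure_biUnion_finset hpd hm,
    ENNReal.toReal_sum (fun S _ => measure_ne_top μ _)]
  rw [Ee, Nat.sub_self, Finset.sum_filter]
  refine sum_congr rfl fun S hS => ?_
  simp only [HH]
  split_ifs <;> ring

end Ev

theorem stmt_2 {Ω₁ Ω₂ : Type*} [MeasurableSpace Ω₁] [MeasurableSpace Ω₂]
    (μ : Measure Ω₁) (ν : Measure Ω₂) [IsProbabilityMeasure μ] [IsProbabilityMeasure ν]
    (N m k : ℕ) (hk : 0 < k) (hkN : k ≤ N) (hmN : m ≤ N)
    (P : ℕ → Ω₁ → ℕ) (R : ℕ → Ω₂ → ℕ)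
    (hPmeas : ∀ t, Measurable (P t)) (hRmeas : ∀ t, Measurable (R t))
    (hP01 : ∀ t ω, P t ω = 0 ∨ P t ω = 1) (hR01 : ∀ t ω, R t ω = 0 ∨ R t ω = 1)
    (hPcond : ∀ t < k, ∀ v : ℕ → ℕ, μ {ω | ∀ s < t, P s ω = v s} ≠ 0 →
      (μ {ω | P t ω = 1 ∧ ∀ s < t, P s ω = v s}).toReal /
          (μ {ω | ∀ s < t, P s ω = v s}).toReal ≤
        ((m : ℝ) - ∑ s ∈ Finset.range t, (v s : ℝ)) / ((N : ℝ) - t))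
    (hRcond : ∀ t < k, ∀ v : ℕ → ℕ, ν {ω | ∀ s < t, R s ω = v s} ≠ 0 →
      (ν {ω | R t ω = 1 ∧ ∀ s < t, R s ω = v s}).toReal /
          (ν {ω | ∀ s < t, R s ω = v s}).toReal =
        ((m : ℝ) - ∑ s ∈ Finset.range t, (v s : ℝ)) / ((N : ℝ) - t)) :
    ∀ x : ℕ, μ {ω | x ≤ ∑ t ∈ Finset.range k, P t ω} ≤
      ν {ω | x ≤ ∑ t ∈ Finset.range k, R t ω} := by
  intro x
  have hEμ : ∀ t, t ≤ k → Ee N m k x μ P t ≤ HH N m k x k 0 := by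
    intro t
    induction t with
    | zero => intro _; exact le_of_eq (Ee_zero N m k x μ P)
    | succ t ih =>
      intro ht
      exact le_trans
        (Ee_succ_le N m k x μ P hPmeas hP01 hPcond (by omega)) (ih (by omega))
  have hEν : ∀ t, t ≤ k → Ee N m k x ν R t = HH N m k x k 0 := by
    intro t
    induction t with
    | zero => intro _; exact Ee_zero N m k x ν R
    | succ t ih =>
      intro ht
      rw [Ee_succ_eq N m k x ν R hRmeas hR01 hRcond (by omega), ih (by omega)]
  have hfin : (μ {ω | x ≤ ∑ t ∈ Finset.range k, P t ω}).toReal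
      ≤ (ν {ω | x ≤ ∑ t ∈ Finset.range k, R t ω}).toReal := by
    rw [Ee_tail N m k x μ P hPmeas hP01, Ee_tail N m k x ν R hRmeas hR01,
      hEν k le_rfl]
    exact hEμ k le_rfl
  exact (ENNReal.toReal_le_toReal (measure_ne_top μ _) (measure_ne_top ν _)).1 hfin
end

section
/- Fix nonnegative integer vectors m = (m_1, ..., m_n) and a = (a_1, ..., a_n) with ‖a‖ < ‖m‖ (where ‖v‖ denotes the sum of the entries). Let f_i(m, a) be the fraction of all (m,a)-permutations whose last term is i. Then for every i with at least one (m,a)-permutation existing, f_i(m, a) ≤ m_i / (‖m‖ - a_i). -/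
/-- An `(m, a)`-permutation: a word of length `‖m‖ = ∑ i, m i` over the alphabet `Fin n`
in which letter `i` appears exactly `m i` times, and where the block of `a i` consecutive
positions starting at `∑_{j < i} a j` is forbidden from taking the value `i`. -/
def IsMAPerm (n : ℕ) (m a : Fin n → ℕ) (w : Fin (∑ i, m i) → Fin n) : Prop :=
  (∀ i : Fin n, (Finset.univ.filter (fun p => w p = i)).card = m i) ∧
  ∀ i : Fin n, ∀ p : Fin (∑ i, m i),
    (∑ j ∈ Finset.univ.filter (fun j => j < i), a j) ≤ (p : ℕ) →
    (p : ℕ) < (∑ j ∈ Finset.univ.filter (fun j => j < i), a j) + a i →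
    w p ≠ i

section Key
open Finset
variable {n : ℕ} {m a : Fin n → ℕ}

lemma offset_add_le (a : Fin n → ℕ) (i : Fin n) :
    (∑ j ∈ univ.filter (fun j => j < i), a j) + a i ≤ ∑ j, a j := by
  have : (∑ j ∈ univ.filter (fun j => j < i), a j) + a i
      = ∑ j ∈ insert i (univ.filter (fun j => j < i)), a j := by
    rw [Finset.sum_insert (by simp), add_comm]
  rw [this]
  exact Finset.sum_le_sum_of_subset (by intro x _; simp)

lemma swap_count {N : ℕ} (w : Fin N → Fin n) (e : Equiv.Perm (Fin N)) (j : Fin n) :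
    (univ.filter (fun p => w (e p) = j)).card = (univ.filter (fun p => w p = j)).card := by
  apply Finset.card_bij (fun p _ => e p)
  · intro p hp; simp_all
  · intro p _ q _ h; exact e.injective h
  · intro p hp; exact ⟨e.symm p, by simp_all, by simp⟩

lemma key (hA : ∑ i, a i < ∑ i, m i) (i : Fin n) :
    Nat.card {w : Fin (∑ i, m i) → Fin n //
        IsMAPerm n m a w ∧ w ⟨(∑ i, m i) - 1, by have := hA; omega⟩ = i} * (∑ i, m i - a i) ≤
      m i * Nat.card {w : Fin (∑ i, m i) → Fin n // IsMAPerm n m a w} := by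
  classical
  set N := ∑ i, m i with hN
  set off := ∑ j ∈ univ.filter (fun j => j < i), a j with hoff
  have hoffa : off + a i ≤ ∑ j, a j := offset_add_le a i
  have hlast : N - 1 < N := by omega
  set last : Fin N := ⟨N - 1, hlast⟩ with hlastdef
  -- count of allowed positions for i
  have hallowed : Nat.card {q : Fin N // ¬(off ≤ (q : ℕ) ∧ (q : ℕ) < off + a i)} = N - a i := by
    rw [Nat.card_eq_fintype_card, Fintype.card_subtype]
    have h1 : (univ.filter (fun q : Fin N => ¬(off ≤ (q : ℕ) ∧ (q : ℕ) < off + a i))).card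
        = Fintype.card (Fin N)
          - (univ.filter (fun q : Fin N => off ≤ (q : ℕ) ∧ (q : ℕ) < off + a i)).card := by
      rw [Finset.filter_not, Finset.card_sdiff_of_subset (Finset.filter_subset _ _)]
      simp
    rw [h1, Fintype.card_fin]
    congr 1
    have h2 : (univ.filter (fun q : Fin N => off ≤ (q : ℕ) ∧ (q : ℕ) < off + a i))
        = (Finset.Ico off (off + a i)).attachFin (fun x hx => by
            rw [Finset.mem_Ico] at hx; omega) := by
      ext q; simp [Finset.mem_attachFin, Finset.mem_Ico]
    rw [h2, Finset.card_attachFin, Nat.card_Ico]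
    omega
  -- the injection
  let D := {w : Fin N → Fin n // IsMAPerm n m a w ∧ w last = i}
      × {q : Fin N // ¬(off ≤ (q : ℕ) ∧ (q : ℕ) < off + a i)}
  let T := {x : {w : Fin N → Fin n // IsMAPerm n m a w} × Fin N // x.1.1 x.2 = i}
  have hswap : ∀ (w : Fin N → Fin n), IsMAPerm n m a w → w last = i →
      ∀ q : Fin N, ¬(off ≤ (q : ℕ) ∧ (q : ℕ) < off + a i) →
      IsMAPerm n m a (w ∘ Equiv.swap last q) := by
    intro w hw hwl q hq
    constructor
    · intro j; exact (swap_count w (Equiv.swap last q) j).trans (hw.1 j)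
    · intro j p h1 h2
      have hja : (∑ k ∈ univ.filter (fun k => k < j), a k) + a j ≤ ∑ k, a k :=
        offset_add_le a j
      have hpne : p ≠ last := by
        intro h
        subst h
        simp only [hlastdef] at h2
        omega
      by_cases hpq : p = q
      · subst hpq
        have : (w ∘ Equiv.swap last p) p = i := by
          simp [Equiv.swap_apply_right, hwl]
        rw [this]
        intro hij
        subst hij
        exact hq ⟨h1, h2⟩
      · have : (w ∘ Equiv.swap last q) p = w p := by
          simp [Equiv.swap_apply_of_ne_of_ne hpne hpq]
        rw [this]
        exact hw.2 j p h1 h2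
  let Φ : D → T := fun x =>
    ⟨(⟨x.1.1 ∘ Equiv.swap last x.2.1,
        hswap x.1.1 x.1.2.1 x.1.2.2 x.2.1 x.2.2⟩, x.2.1),
      by simp [Equiv.swap_apply_right, x.1.2.2]⟩
  have hΦ : Function.Injective Φ := by
    rintro ⟨⟨w1, hw1⟩, ⟨q1, hq1⟩⟩ ⟨⟨w2, hw2⟩, ⟨q2, hq2⟩⟩ h
    have hq : q1 = q2 := congrArg (fun t : T => t.1.2) h
    subst hq
    have hw : w1 ∘ Equiv.swap last q1 = w2 ∘ Equiv.swap last q1 :=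
      congrArg (fun t : T => t.1.1.1) h
    have hweq : w1 = w2 := by
      funext p
      have := congrFun hw (Equiv.swap last q1 p)
      simpa using this
    simp [hweq]
  have hcardT : Nat.card T = m i * Nat.card {w : Fin N → Fin n // IsMAPerm n m a w} := by
    have e : T ≃ Σ w : {w : Fin N → Fin n // IsMAPerm n m a w}, {p : Fin N // w.1 p = i} :=
      Equiv.subtypeProdEquivSigmaSubtype (fun (w : {w : Fin N → Fin n // IsMAPerm n m a w}) (p : Fin N) => w.1 p = i)
    rw [Nat.card_congr e, Nat.card_eq_fintype_card, Fintype.card_sigma]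
    have h3 : ∀ w : {w : Fin N → Fin n // IsMAPerm n m a w},
        Fintype.card {p : Fin N // w.1 p = i} = m i := by
      intro w
      rw [Fintype.card_subtype]
      exact w.2.1 i
    rw [Finset.sum_congr rfl (fun w _ => h3 w), Finset.sum_const, Nat.card_eq_fintype_card]
    simp [mul_comm]
  have hDT : Nat.card D ≤ Nat.card T := Nat.card_le_card_of_injective Φ hΦ
  have hcardD : Nat.card D = Nat.card {w : Fin N → Fin n //
      IsMAPerm n m a w ∧ w last = i} * (N - a i) := by
    rw [Nat.card_prod, hallowed]
  exact le_trans (le_of_eq hcardD.symm) (hDT.trans (le_of_eq hcardT))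
end Key

theorem stmt_3 (n : ℕ) (m a : Fin n → ℕ) (hA : ∑ i, a i < ∑ i, m i)
    (hne : Nonempty {w : Fin (∑ i, m i) → Fin n // IsMAPerm n m a w}) (i : Fin n) :
    (Nat.card {w : Fin (∑ i, m i) → Fin n //
        IsMAPerm n m a w ∧ w ⟨(∑ i, m i) - 1, by omega⟩ = i} : ℝ) /
      (Nat.card {w : Fin (∑ i, m i) → Fin n // IsMAPerm n m a w} : ℝ) ≤
      (m i : ℝ) / ((∑ i, m i : ℕ) - (a i : ℝ)) := by
  have hai : a i ≤ ∑ j, a j := Finset.single_le_sum (fun _ _ => Nat.zero_le _) (Finset.mem_univ i)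
  have haiN : a i < ∑ i, m i := by omega
  have hkey := key hA i
  have hT : 0 < Nat.card {w : Fin (∑ i, m i) → Fin n // IsMAPerm n m a w} := Nat.card_pos
  have hcast : (a i : ℝ) < ((∑ i, m i : ℕ) : ℝ) := by exact_mod_cast haiN
  rw [div_le_div_iff₀ (by exact_mod_cast hT) (by linarith)]
  have : ((∑ i, m i : ℕ) : ℝ) - (a i : ℝ) = ((∑ i, m i - a i : ℕ) : ℝ) := by
    push_cast [Nat.cast_sub (le_of_lt haiN)]; ring
  rw [this]
  exact_mod_cast hkey
end

section
/- Let N, m, b be positive integers with N ≥ m² + m and b ≤ N, and let S ~ Hyp(N, m, b) be a hypergeometric random variable. Then for every integer k with 0 ≤ k ≤ m, Pr[S = k] ≤ 3 · C(m,k) q^k (1-q)^{m-k}, where q = b/N. -/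
private lemma one_add_inv_pow_le_three (m : ℕ) (hm : 0 < m) :
    (1 + 1 / (m : ℝ)) ^ m ≤ 3 := by
  have hm0 : (0 : ℝ) < m := by exact_mod_cast hm
  have h1 : (1 : ℝ) + 1 / m ≤ Real.exp (1 / m) := by
    have := Real.add_one_le_exp (1 / (m : ℝ)); linarith
  have h2 : (1 + 1 / (m : ℝ)) ^ m ≤ Real.exp (1 / m) ^ m := by
    apply pow_le_pow_left₀ (by positivity) h1
  have h3 : Real.exp (1 / (m : ℝ)) ^ m = Real.exp 1 := by
    rw [← Real.exp_nat_mul]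
    congr 1
    field_simp
  have h4 : Real.exp 1 < 3 := by
    have := Real.exp_one_lt_d9; linarith
  rw [h3] at h2
  linarith

theorem stmt_6 (N m b : ℕ) (hm : 0 < m) (hb : 0 < b) (hN : m ^ 2 + m ≤ N) (hbN : b ≤ N)
    (k : ℕ) (hk : k ≤ m) :
    ((b.choose k : ℝ) * ((N - b).choose (m - k) : ℝ)) / (N.choose m : ℝ) ≤
      3 * (m.choose k : ℝ) * ((b : ℝ) / N) ^ k * (1 - (b : ℝ) / N) ^ (m - k) := by
  have hmN : m ≤ N := le_trans (by nlinarith) hN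
  have hN0 : 0 < N := lt_of_lt_of_le hb hbN
  have hN0' : (0 : ℝ) < N := by exact_mod_cast hN0
  have hq1 : (b : ℝ) / N ≤ 1 := by
    rw [div_le_one hN0']; exact_mod_cast hbN
  have hRHSnn : 0 ≤ 3 * (m.choose k : ℝ) * ((b : ℝ) / N) ^ k * (1 - (b : ℝ) / N) ^ (m - k) := by
    have h1 : (0:ℝ) ≤ ((b : ℝ) / N) ^ k := by positivity
    have h2 : (0:ℝ) ≤ (1 - (b : ℝ) / N) ^ (m - k) := pow_nonneg (by linarith) _
    have h3 : (0:ℝ) ≤ (m.choose k : ℝ) := by positivity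
    positivity
  by_cases hkb : k ≤ b
  · by_cases hmk : m - k ≤ N - b
    · -- main case
      have hCN : 0 < N.choose m := Nat.choose_pos hmN
      have hCN' : (0 : ℝ) < N.choose m := by exact_mod_cast hCN
      -- key combinatorial identity in ℕ
      have hid : b.choose k * ((N - b).choose (m - k)) * N.descFactorial m
          = m.choose k * b.descFactorial k * ((N - b).descFactorial (m - k)) * N.choose m := by
        rw [Nat.descFactorial_eq_factorial_mul_choose N m,
          Nat.descFactorial_eq_factorial_mul_choose b k,
          Nat.descFactorial_eq_factorial_mul_choose (N - b) (m - k),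
          ← Nat.choose_mul_factorial_mul_factorial hk]
        ring
      have hid' : (b.choose k : ℝ) * ((N - b).choose (m - k) : ℝ) * (N.descFactorial m : ℝ)
          = (m.choose k : ℝ) * (b.descFactorial k : ℝ) * ((N - b).descFactorial (m - k) : ℝ)
            * (N.choose m : ℝ) := by exact_mod_cast congrArg (Nat.cast (R := ℝ)) hid
      have hDN : 0 < N.descFactorial m := by
        rw [Nat.descFactorial_eq_factorial_mul_choose]
        exact Nat.mul_pos (Nat.factorial_pos m) hCN
      have hDN' : (0 : ℝ) < N.descFactorial m := by exact_mod_cast hDN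
      -- rewrite RHS powers
      have hNb : ((N - b : ℕ) : ℝ) = (N : ℝ) - b := by
        rw [Nat.cast_sub hbN]
      have hq : (1 : ℝ) - (b : ℝ) / N = ((N - b : ℕ) : ℝ) / N := by
        rw [hNb]; field_simp
      have hpow : ((b : ℝ) / N) ^ k * (((N - b : ℕ) : ℝ) / N) ^ (m - k)
          = (b : ℝ) ^ k * ((N - b : ℕ) : ℝ) ^ (m - k) / (N : ℝ) ^ m := by
        rw [div_pow, div_pow, div_mul_div_comm, ← pow_add,
          Nat.add_sub_cancel' hk]
      -- key analytic bound : N^m ≤ 3 * descFactorial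
      have h3DN : ((N : ℝ)) ^ m ≤ 3 * (N.descFactorial m : ℝ) := by
        have htm : ((m:ℝ))^2 + m ≤ (N : ℝ) := by exact_mod_cast hN
        have ht : (0:ℝ) < (N : ℝ) - m := by
          have hm1 : (1:ℝ) ≤ m := by exact_mod_cast hm
          nlinarith
        have hstep1 : (N : ℝ) ≤ (1 + 1 / m) * ((N : ℝ) - m) := by
          have hm0 : (0 : ℝ) < m := by exact_mod_cast hm
          have hdm : (m : ℝ) ≤ ((N : ℝ) - m) / m := by
            rw [le_div_iff₀ hm0]; nlinarith
          have hexp : (1 + 1 / (m : ℝ)) * ((N : ℝ) - m)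
              = ((N : ℝ) - m) + ((N : ℝ) - m) / m := by ring
          linarith
        have hstep2 : ((N : ℝ)) ^ m ≤ (1 + 1 / m) ^ m * ((N : ℝ) - m) ^ m := by
          rw [← mul_pow]
          exact pow_le_pow_left₀ (by positivity) hstep1 m
        have hstep3 : (1 + 1 / (m:ℝ)) ^ m ≤ 3 := one_add_inv_pow_le_three m hm
        have hstep4 : ((N : ℝ) - m) ^ m ≤ (N.descFactorial m : ℝ) := by
          have h1 : ((N : ℝ) - m) ≤ ((N + 1 - m : ℕ) : ℝ) := by
            rw [Nat.cast_sub (by omega)]; push_cast; linarith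
          calc ((N : ℝ) - m) ^ m ≤ ((N + 1 - m : ℕ) : ℝ) ^ m :=
                pow_le_pow_left₀ (le_of_lt ht) h1 m
            _ ≤ (N.descFactorial m : ℝ) := by
                exact_mod_cast Nat.pow_sub_le_descFactorial N m
        calc ((N : ℝ)) ^ m ≤ (1 + 1 / m) ^ m * ((N : ℝ) - m) ^ m := hstep2
          _ ≤ 3 * (N.descFactorial m : ℝ) := by
              apply mul_le_mul hstep3 hstep4 (by positivity) (by norm_num)
      -- main chain
      have hDb : (b.descFactorial k : ℝ) ≤ (b : ℝ) ^ k := by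
        exact_mod_cast Nat.descFactorial_le_pow b k
      have hDnb : ((N - b).descFactorial (m - k) : ℝ) ≤ ((N - b : ℕ) : ℝ) ^ (m - k) := by
        exact_mod_cast Nat.descFactorial_le_pow (N - b) (m - k)
      rw [hq, div_le_iff₀ hCN']
      have hNm : (N : ℝ) ^ k * (N : ℝ) ^ (m - k) = (N : ℝ) ^ m := by
        rw [← pow_add, Nat.add_sub_cancel' hk]
      have heq : 3 * (m.choose k : ℝ) * ((b : ℝ) / N) ^ k * (((N - b : ℕ) : ℝ) / N) ^ (m - k)
            * (N.choose m : ℝ)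
          = 3 * (m.choose k : ℝ) * ((b : ℝ) ^ k * ((N - b : ℕ) : ℝ) ^ (m - k))
            * (N.choose m : ℝ) / (N : ℝ) ^ m := by
        rw [div_pow, div_pow, ← hNm]
        ring
      rw [heq, le_div_iff₀ (by positivity)]
      have hmain : (m.choose k : ℝ) * (b.descFactorial k : ℝ)
            * ((N - b).descFactorial (m - k) : ℝ) * (N : ℝ) ^ m
          ≤ (m.choose k : ℝ) * ((b : ℝ) ^ k) * (((N - b : ℕ) : ℝ) ^ (m - k))
            * (3 * (N.descFactorial m : ℝ)) := by
        gcongr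
      rw [← mul_le_mul_iff_of_pos_right hDN']
      calc (b.choose k : ℝ) * ((N - b).choose (m - k) : ℝ) * (N : ℝ) ^ m
            * (N.descFactorial m : ℝ)
          = ((b.choose k : ℝ) * ((N - b).choose (m - k) : ℝ) * (N.descFactorial m : ℝ))
            * (N : ℝ) ^ m := by ring
        _ = ((m.choose k : ℝ) * (b.descFactorial k : ℝ) * ((N - b).descFactorial (m - k) : ℝ)
            * (N.choose m : ℝ)) * (N : ℝ) ^ m := by rw [hid']
        _ = ((m.choose k : ℝ) * (b.descFactorial k : ℝ) * ((N - b).descFactorial (m - k) : ℝ)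
            * (N : ℝ) ^ m) * (N.choose m : ℝ) := by ring
        _ ≤ ((m.choose k : ℝ) * ((b : ℝ) ^ k) * (((N - b : ℕ) : ℝ) ^ (m - k))
            * (3 * (N.descFactorial m : ℝ))) * (N.choose m : ℝ) :=
            mul_le_mul_of_nonneg_right hmain (by positivity)
        _ = 3 * (m.choose k : ℝ) * ((b : ℝ) ^ k * ((N - b : ℕ) : ℝ) ^ (m - k))
            * (N.choose m : ℝ) * (N.descFactorial m : ℝ) := by ring
    · push_neg at hmk
      rw [Nat.choose_eq_zero_of_lt hmk, Nat.cast_zero, mul_zero, zero_div]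
      exact hRHSnn
  · push_neg at hkb
    rw [Nat.choose_eq_zero_of_lt hkb, Nat.cast_zero, zero_mul, zero_div]
    exact hRHSnn
end

section
/- Let m ≥ 1, q ∈ [0,1], and N ≥ m² + m an integer with b = qN an integer, 0 ≤ b ≤ N. Then for all 0 ≤ k ≤ m, C(qN, k) · C((1-q)N, m-k) / C(N, m) ≤ C(m,k) q^k (1-q)^{m-k} · e^{m²/(N-m)}. -/
lemma stmt_8_nat (N m b k : ℕ) (hk : k ≤ m) (hmN : m ≤ N) :
    b.choose k * (N - b).choose (m - k) * (N - m) ^ m ≤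
      m.choose k * (b ^ k * (N - b) ^ (m - k)) * N.choose m := by
  have key : b.descFactorial k * (N - b).descFactorial (m - k) * (N - m) ^ m ≤
      b ^ k * (N - b) ^ (m - k) * N.descFactorial m := by
    refine Nat.mul_le_mul (Nat.mul_le_mul (Nat.descFactorial_le_pow _ _)
      (Nat.descFactorial_le_pow _ _)) ?_
    calc (N - m) ^ m ≤ (N + 1 - m) ^ m := Nat.pow_le_pow_left (by omega) m
      _ ≤ N.descFactorial m := Nat.pow_sub_le_descFactorial N m
  have hfac : m.factorial = m.choose k * (k.factorial * (m - k).factorial) := by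
    rw [← Nat.choose_mul_factorial_mul_factorial hk]; ring
  refine Nat.le_of_mul_le_mul_left ?_ (Nat.mul_pos k.factorial_pos (m - k).factorial_pos)
  calc k.factorial * (m - k).factorial *
        (b.choose k * (N - b).choose (m - k) * (N - m) ^ m)
      = b.descFactorial k * (N - b).descFactorial (m - k) * (N - m) ^ m := by
        rw [Nat.descFactorial_eq_factorial_mul_choose,
          Nat.descFactorial_eq_factorial_mul_choose]; ring
    _ ≤ b ^ k * (N - b) ^ (m - k) * N.descFactorial m := key
    _ = k.factorial * (m - k).factorial *
        (m.choose k * (b ^ k * (N - b) ^ (m - k)) * N.choose m) := by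
        rw [Nat.descFactorial_eq_factorial_mul_choose, hfac]; ring

theorem stmt_8 (N m b : ℕ) (hm : 1 ≤ m) (hN : m ^ 2 + m ≤ N) (hbN : b ≤ N)
    (q : ℝ) (hq : q = (b : ℝ) / N) (k : ℕ) (hk : k ≤ m) :
    ((b.choose k : ℝ) * ((N - b).choose (m - k) : ℝ)) / (N.choose m : ℝ) ≤
      (m.choose k : ℝ) * q ^ k * (1 - q) ^ (m - k) *
        Real.exp ((m : ℝ) ^ 2 / ((N : ℝ) - m)) := by
  have hm2 : m ^ 2 ≥ 1 := Nat.one_le_pow _ _ hm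
  have hmN : m < N := by omega
  have hN0 : (0:ℝ) < (N:ℝ) := by exact_mod_cast (by omega : 0 < N)
  have hNm : (0:ℝ) < (N:ℝ) - m := by
    have : (m:ℝ) < N := by exact_mod_cast hmN
    linarith
  have hC : (0:ℝ) < (N.choose m : ℝ) := by exact_mod_cast Nat.choose_pos hmN.le
  have hcastNb : ((N - b : ℕ) : ℝ) = (N:ℝ) - b := by
    push_cast [Nat.cast_sub hbN]; ring
  have hcastNm : ((N - m : ℕ) : ℝ) = (N:ℝ) - m := by
    push_cast [Nat.cast_sub hmN.le]; ring
  have hbR : (0:ℝ) ≤ (b:ℝ) := Nat.cast_nonneg b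
  have hNbR : (0:ℝ) ≤ (N:ℝ) - b := by
    have : (b:ℝ) ≤ N := by exact_mod_cast hbN
    linarith
  have hq0 : 0 ≤ q := by rw [hq]; positivity
  have h1q : 1 - q = ((N:ℝ) - b) / N := by rw [hq]; field_simp
  have h1q0 : 0 ≤ 1 - q := by rw [h1q]; positivity
  have hsplit : (N:ℝ) ^ m = (N:ℝ) ^ k * (N:ℝ) ^ (m - k) := by
    rw [← pow_add]; congr 1; omega
  have step1 : ((b.choose k : ℝ) * ((N - b).choose (m - k) : ℝ)) / (N.choose m : ℝ) ≤
      ((m.choose k : ℝ) * ((b:ℝ) ^ k * ((N:ℝ) - b) ^ (m - k))) / ((N:ℝ) - m) ^ m := by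
    rw [div_le_div_iff₀ hC (by positivity)]
    have := stmt_8_nat N m b k hk hmN.le
    calc (b.choose k : ℝ) * ((N - b).choose (m - k) : ℝ) * ((N:ℝ) - m) ^ m
        = ((b.choose k * (N - b).choose (m - k) * (N - m) ^ m : ℕ) : ℝ) := by
          push_cast [hcastNm]; ring
      _ ≤ ((m.choose k * (b ^ k * (N - b) ^ (m - k)) * N.choose m : ℕ) : ℝ) := by
          exact_mod_cast this
      _ = (m.choose k : ℝ) * ((b:ℝ) ^ k * ((N:ℝ) - b) ^ (m - k)) * (N.choose m : ℝ) := by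
          push_cast [hcastNb]; ring
  have hexp : ((N:ℝ) / ((N:ℝ) - m)) ^ m ≤ Real.exp ((m : ℝ) ^ 2 / ((N : ℝ) - m)) := by
    have hbase : (N:ℝ) / ((N:ℝ) - m) = (m:ℝ) / ((N:ℝ) - m) + 1 := by field_simp; ring
    calc ((N:ℝ) / ((N:ℝ) - m)) ^ m ≤ (Real.exp ((m:ℝ) / ((N:ℝ) - m))) ^ m := by
          apply pow_le_pow_left₀ (by positivity)
          rw [hbase]; exact Real.add_one_le_exp _
      _ = Real.exp ((m:ℝ) * ((m:ℝ) / ((N:ℝ) - m))) := by rw [Real.exp_nat_mul]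
      _ = Real.exp ((m : ℝ) ^ 2 / ((N : ℝ) - m)) := by congr 1; ring
  calc ((b.choose k : ℝ) * ((N - b).choose (m - k) : ℝ)) / (N.choose m : ℝ)
      ≤ ((m.choose k : ℝ) * ((b:ℝ) ^ k * ((N:ℝ) - b) ^ (m - k))) / ((N:ℝ) - m) ^ m := step1
    _ = (m.choose k : ℝ) * q ^ k * (1 - q) ^ (m - k) * ((N:ℝ) / ((N:ℝ) - m)) ^ m := by
        rw [h1q, hq, div_pow, div_pow, div_pow, hsplit]
        field_simp
    _ ≤ (m.choose k : ℝ) * q ^ k * (1 - q) ^ (m - k) *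
        Real.exp ((m : ℝ) ^ 2 / ((N : ℝ) - m)) := by
        apply mul_le_mul_of_nonneg_left hexp
        positivity
end

section
/- For a uniformly random π from S_{m,n} with m ≥ 2 fixed and n → ∞, let T_m be the smallest index t such that π_t is the m-th occurrence of some card type. Then Σ_{t ≥ 1} Pr[T_m ≥ t] = Θ(n^{1 - 1/m}); that is, there are constants c_1, c_2 > 0 depending only on m such that for all sufficiently large n, c_1 n^{1-1/m} ≤ E[T_m] ≤ c_2 n^{1-1/m}. -/
/-- The finset of words of length `m * n` over `Fin n` where each letter appears
exactly `m` times (the deck `S_{m,n}`). -/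
def wordFinset (m n : ℕ) : Finset (Fin (m * n) → Fin n) :=
  Finset.univ.filter
    (fun w => ∀ i : Fin n, (Finset.univ.filter (fun p => w p = i)).card = m)

/-- `Tstat m n w` is the smallest index `t` (1-indexed) such that among the first `t`
letters of `w` some letter appears `m` times. -/
noncomputable def Tstat (m n : ℕ) (w : Fin (m * n) → Fin n) : ℕ :=
  sInf {t : ℕ | ∃ i : Fin n,
    m ≤ (Finset.univ.filter (fun p : Fin (m * n) => (p : ℕ) < t ∧ w p = i)).card}

open Finset

lemma exists_perm_pair {α : Type*} [Fintype α] [DecidableEq α]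
    (A₁ A₂ B₁ B₂ : Finset α) (h1 : A₁.card = B₁.card) (h2 : A₂.card = B₂.card)
    (hA : Disjoint A₁ A₂) (hB : Disjoint B₁ B₂) :
    ∃ σ : Equiv.Perm α, ∀ p, (σ p ∈ A₁ ↔ p ∈ B₁) ∧ (σ p ∈ A₂ ↔ p ∈ B₂) := by
  classical
  have e₁ : {x // x ∈ B₁} ≃ {x // x ∈ A₁} := Finset.equivOfCardEq h1.symm
  have e₂ : {x // x ∈ B₂} ≃ {x // x ∈ A₂} := Finset.equivOfCardEq h2.symm
  have hcard : ((B₁ ∪ B₂)ᶜ : Finset α).card = ((A₁ ∪ A₂)ᶜ : Finset α).card := by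
    rw [Finset.card_compl, Finset.card_compl, Finset.card_union_of_disjoint hB,
      Finset.card_union_of_disjoint hA, h1, h2]
  have e₃ : {x // x ∈ (B₁ ∪ B₂)ᶜ} ≃ {x // x ∈ (A₁ ∪ A₂)ᶜ} := Finset.equivOfCardEq hcard
  set f : α → α := fun p =>
    if h : p ∈ B₁ then (e₁ ⟨p, h⟩ : α)
    else if h' : p ∈ B₂ then (e₂ ⟨p, h'⟩ : α)
    else (e₃ ⟨p, by simp [Finset.mem_compl, h, h']⟩ : α) with hf
  have key : ∀ p, (f p ∈ A₁ ↔ p ∈ B₁) ∧ (f p ∈ A₂ ↔ p ∈ B₂) := by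
    intro p
    by_cases h : p ∈ B₁
    · have : f p ∈ A₁ := by simp [hf, h]
      refine ⟨⟨fun _ => h, fun _ => this⟩, ⟨fun hh => ?_, fun hh => ?_⟩⟩
      · exact absurd this (Finset.disjoint_right.mp hA hh)
      · exact absurd hh (Finset.disjoint_left.mp hB h)
    · by_cases h' : p ∈ B₂
      · have : f p ∈ A₂ := by simp [hf, h, h']
        exact ⟨⟨fun hh => absurd this (Finset.disjoint_left.mp hA hh), fun hh => absurd hh h⟩,
          ⟨fun _ => h', fun _ => this⟩⟩
      · have hmem : f p ∈ (A₁ ∪ A₂)ᶜ := by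
          simp only [hf, dif_neg h, dif_neg h']
          exact Finset.coe_mem _
        rw [Finset.mem_compl, Finset.mem_union] at hmem
        push_neg at hmem
        exact ⟨⟨fun hh => absurd hh hmem.1, fun hh => absurd hh h⟩,
          ⟨fun hh => absurd hh hmem.2, fun hh => absurd hh h'⟩⟩
  have hinj : Function.Injective f := by
    intro p q hpq
    by_cases hp1 : p ∈ B₁ <;> by_cases hq1 : q ∈ B₁
    · have := hpq; simp only [hf, dif_pos hp1, dif_pos hq1] at this
      have := e₁.injective (Subtype.coe_injective this)
      exact Subtype.mk_eq_mk.mp this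
    · exact absurd ((key q).1.mp (hpq ▸ (key p).1.mpr hp1)) hq1
    · exact absurd ((key p).1.mp (hpq ▸ (key q).1.mpr hq1)) hp1
    · by_cases hp2 : p ∈ B₂ <;> by_cases hq2 : q ∈ B₂
      · have := hpq; simp only [hf, dif_neg hp1, dif_neg hq1, dif_pos hp2, dif_pos hq2] at this
        have := e₂.injective (Subtype.coe_injective this)
        exact Subtype.mk_eq_mk.mp this
      · exact absurd ((key q).2.mp (hpq ▸ (key p).2.mpr hp2)) hq2
      · exact absurd ((key p).2.mp (hpq ▸ (key q).2.mpr hq2)) hp2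
      · have := hpq
        simp only [hf, dif_neg hp1, dif_neg hq1, dif_neg hp2, dif_neg hq2] at this
        have := e₃.injective (Subtype.coe_injective this)
        exact Subtype.mk_eq_mk.mp this
  refine ⟨Equiv.ofBijective f (Finite.injective_iff_bijective.mp hinj), key⟩

namespace BDay

variable (m n : ℕ)

/-- positions with value less than `s` -/
def Ival (s : ℕ) : Finset (Fin (m * n)) := Finset.univ.filter (fun p => (p : ℕ) < s)

/-- set of positions of letter `i` -/
def pos (w : Fin (m * n) → Fin n) (i : Fin n) : Finset (Fin (m * n)) :=
  Finset.univ.filter (fun p => w p = i)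

variable {m n}

lemma mem_word {w : Fin (m * n) → Fin n} :
    w ∈ wordFinset m n ↔ ∀ i, (pos m n w i).card = m := by
  simp [wordFinset, pos]

lemma card_Ival {s : ℕ} (hs : s ≤ m * n) : (Ival m n s).card = s := by
  classical
  rw [Ival]
  rw [Finset.card_bij (fun (p : Fin (m*n)) _ => (p : ℕ)) ?_ ?_ ?_]
  · exact Finset.card_range s
  · intro a ha; simp at ha ⊢; exact ha
  · intro a _ b _ h; exact Fin.val_injective h
  · intro b hb
    simp only [Finset.mem_range] at hb
    exact ⟨⟨b, lt_of_lt_of_le hb hs⟩, by simp [hb], rfl⟩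

lemma Ival_top : Ival m n (m * n) = Finset.univ := by
  ext p; simp [Ival, p.isLt]

lemma mem_pos {w : Fin (m * n) → Fin n} {i : Fin n} {p : Fin (m * n)} :
    p ∈ pos m n w i ↔ w p = i := by simp [pos]

lemma pos_comp_perm (σ : Equiv.Perm (Fin (m * n))) (w : Fin (m * n) → Fin n) (i : Fin n)
    {p : Fin (m * n)} : p ∈ pos m n (w ∘ σ) i ↔ σ p ∈ pos m n w i := by
  simp [pos]

lemma card_pos_comp (σ : Equiv.Perm (Fin (m * n))) (w : Fin (m * n) → Fin n) (i : Fin n) :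
    (pos m n (w ∘ σ) i).card = (pos m n w i).card := by
  classical
  refine Finset.card_bij (fun p _ => σ p) ?_ ?_ ?_
  · intro a ha; exact (pos_comp_perm σ w i).mp ha
  · intro a _ b _ h; exact σ.injective h
  · intro b hb; exact ⟨σ.symm b, by simpa [pos_comp_perm] using hb, by simp⟩

lemma comp_perm_mem {w : Fin (m * n) → Fin n} (hw : w ∈ wordFinset m n)
    (σ : Equiv.Perm (Fin (m * n))) : w ∘ σ ∈ wordFinset m n := by
  rw [mem_word] at hw ⊢
  intro i; rw [card_pos_comp]; exact hw i

lemma pos_letter (τ : Equiv.Perm (Fin n)) (w : Fin (m * n) → Fin n) (i : Fin n) :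
    pos m n (τ ∘ w) i = pos m n w (τ.symm i) := by
  ext p; simp [pos, Equiv.eq_symm_apply, eq_comm]

lemma comp_letter_mem {w : Fin (m * n) → Fin n} (hw : w ∈ wordFinset m n)
    (τ : Equiv.Perm (Fin n)) : τ ∘ w ∈ wordFinset m n := by
  rw [mem_word] at hw ⊢
  intro i; rw [pos_letter]; exact hw _

/-- counting invariance under position permutation -/
lemma card_filter_comp (σ : Equiv.Perm (Fin (m * n)))
    (pred : (Fin (m * n) → Fin n) → Prop) [DecidablePred pred] :
    ((wordFinset m n).filter (fun w => pred (w ∘ σ))).card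
      = ((wordFinset m n).filter pred).card := by
  classical
  refine Finset.card_bij (fun w _ => w ∘ σ) ?_ ?_ ?_
  · intro w hw
    simp only [Finset.mem_filter] at hw ⊢
    exact ⟨comp_perm_mem hw.1 σ, hw.2⟩
  · intro a _ b _ h
    funext p
    have := congrFun h (σ.symm p); simpa using this
  · intro w hw
    simp only [Finset.mem_filter] at hw
    refine ⟨w ∘ σ.symm, ?_, ?_⟩
    · simp only [Finset.mem_filter]
      constructor
      · exact comp_perm_mem hw.1 σ.symm
      · have : (w ∘ σ.symm) ∘ σ = w := by funext p; simp
        rw [this]; exact hw.2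
    · funext p; simp

/-- counting invariance under letter permutation -/
lemma card_filter_letter (τ : Equiv.Perm (Fin n))
    (pred : (Fin (m * n) → Fin n) → Prop) [DecidablePred pred] :
    ((wordFinset m n).filter (fun w => pred (τ ∘ w))).card
      = ((wordFinset m n).filter pred).card := by
  classical
  refine Finset.card_bij (fun w _ => τ ∘ w) ?_ ?_ ?_
  · intro w hw
    simp only [Finset.mem_filter] at hw ⊢
    exact ⟨comp_letter_mem hw.1 τ, hw.2⟩
  · intro a _ b _ h
    funext p
    have := congrFun h p
    simpa using τ.injective (by simpa using this)
  · intro w hw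
    simp only [Finset.mem_filter] at hw
    refine ⟨τ.symm ∘ w, ?_, ?_⟩
    · simp only [Finset.mem_filter]
      constructor
      · exact comp_letter_mem hw.1 τ.symm
      · have : τ ∘ (τ.symm ∘ w) = w := by funext p; simp
        rw [this]; exact hw.2
    · funext p; simp


lemma filter_pos_eq_comp (σ : Equiv.Perm (Fin (m * n))) {A B : Finset (Fin (m * n))}
    (hσ : ∀ p, σ p ∈ B ↔ p ∈ A) (w : Fin (m * n) → Fin n) (i : Fin n) :
    pos m n (w ∘ σ) i = A ↔ pos m n w i = B := by
  constructor
  · intro h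
    ext q
    have h1 := fun p => (Finset.ext_iff.mp h p)
    have h2 := h1 (σ.symm q)
    rw [pos_comp_perm] at h2
    simp only [Equiv.apply_symm_apply] at h2
    rw [h2, ← hσ (σ.symm q), Equiv.apply_symm_apply]
  · intro h
    ext p
    rw [pos_comp_perm, h, hσ]

/-- All single-letter fibers have the same cardinality. -/
lemma fiber_eq {A B : Finset (Fin (m * n))} (hA : A.card = m) (hB : B.card = m)
    (i j : Fin n) :
    ((wordFinset m n).filter (fun w => pos m n w i = A)).card
      = ((wordFinset m n).filter (fun w => pos m n w j = B)).card := by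
  classical
  -- letter step : reduce j to i
  obtain ⟨σ, hσ⟩ := exists_perm_pair B ∅ A ∅ (hB.trans hA.symm) rfl
    (Finset.disjoint_empty_right _) (Finset.disjoint_empty_right _)
  have hstep1 : ((wordFinset m n).filter (fun w => pos m n w i = B)).card
      = ((wordFinset m n).filter (fun w => pos m n w i = A)).card := by
    rw [← card_filter_comp σ (fun w => pos m n w i = A)]
    congr 1
    apply Finset.filter_congr
    intro w _
    exact (filter_pos_eq_comp σ (fun p => (hσ p).1) w i).symm
  have hstep2 : ((wordFinset m n).filter (fun w => pos m n w j = B)).card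
      = ((wordFinset m n).filter (fun w => pos m n w i = B)).card := by
    rw [← card_filter_letter (Equiv.swap i j) (fun w => pos m n w i = B)]
    congr 1
    apply Finset.filter_congr
    intro w _
    rw [pos_letter]
    simp [Equiv.swap_apply_left, Equiv.symm_swap, Equiv.swap_apply_left]
  rw [hstep2, hstep1]

/-- All two-letter fibers have the same cardinality. -/
lemma fiber_pair_eq {A B A' B' : Finset (Fin (m * n))}
    (hA : A.card = m) (hB : B.card = m) (hA' : A'.card = m) (hB' : B'.card = m)
    (hd : Disjoint A B) (hd' : Disjoint A' B')
    {i j k l : Fin n} (hij : i ≠ j) (hkl : k ≠ l) :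
    ((wordFinset m n).filter (fun w => pos m n w i = A ∧ pos m n w j = B)).card
      = ((wordFinset m n).filter (fun w => pos m n w k = A' ∧ pos m n w l = B')).card := by
  classical
  -- position step : change (A', B') to (A, B) with letters k, l
  obtain ⟨σ, hσ⟩ := exists_perm_pair A' B' A B (hA'.trans hA.symm) (hB'.trans hB.symm) hd' hd
  have hstep1 : ((wordFinset m n).filter (fun w => pos m n w k = A' ∧ pos m n w l = B')).card
      = ((wordFinset m n).filter (fun w => pos m n w k = A ∧ pos m n w l = B)).card := by
    rw [← card_filter_comp σ (fun w => pos m n w k = A ∧ pos m n w l = B)]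
    congr 1
    apply Finset.filter_congr
    intro w _
    exact and_congr (filter_pos_eq_comp σ (fun p => (hσ p).1) w k).symm
      (filter_pos_eq_comp σ (fun p => (hσ p).2) w l).symm
  -- letter step : change (i,j) to (k,l)
  obtain ⟨τ, hτ⟩ := exists_perm_pair ({i} : Finset (Fin n)) {j} {k} {l} (by simp) (by simp)
    (by simpa using hij) (by simpa using hkl)
  have hτk : τ k = i := by have := (hτ k).1; simp at this; exact this
  have hτl : τ l = j := by have := (hτ l).2; simp at this; exact this
  have hstep2 : ((wordFinset m n).filter (fun w => pos m n w k = A ∧ pos m n w l = B)).card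
      = ((wordFinset m n).filter (fun w => pos m n w i = A ∧ pos m n w j = B)).card := by
    rw [← card_filter_letter τ (fun w => pos m n w i = A ∧ pos m n w j = B)]
    congr 1
    apply Finset.filter_congr
    intro w _
    rw [pos_letter, pos_letter]
    rw [show τ.symm i = k from by rw [← hτk, Equiv.symm_apply_apply],
        show τ.symm j = l from by rw [← hτl, Equiv.symm_apply_apply]]
  rw [← hstep2, hstep1]


section Counting
variable {m n : ℕ}

/-- count of words with all `m` copies of letter `i` among the first `s` positions -/
lemma card_pos_sub (hs : s ≤ m * n) (i i₀ : Fin n) {A₀ : Finset (Fin (m * n))}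
    (hA₀ : A₀.card = m) :
    ((wordFinset m n).filter (fun w => pos m n w i ⊆ Ival m n s)).card
      = s.choose m * ((wordFinset m n).filter (fun w => pos m n w i₀ = A₀)).card := by
  classical
  rw [Finset.card_eq_sum_card_fiberwise (f := fun w => pos m n w i)
    (t := Finset.powersetCard m (Ival m n s)) ?_]
  · rw [Finset.sum_congr rfl (g := fun _ =>
        ((wordFinset m n).filter (fun w => pos m n w i₀ = A₀)).card) ?_]
    · rw [Finset.sum_const, Finset.card_powersetCard, card_Ival hs, smul_eq_mul]
    · intro A hA
      rw [Finset.mem_powersetCard] at hA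
      have : ((wordFinset m n).filter (fun w => pos m n w i ⊆ Ival m n s)).filter
          (fun w => pos m n w i = A) = (wordFinset m n).filter (fun w => pos m n w i = A) := by
        rw [Finset.filter_filter]
        apply Finset.filter_congr
        intro w _
        exact ⟨fun h => h.2, fun h => ⟨h ▸ hA.1, h⟩⟩
      rw [this]
      exact fiber_eq hA.2 hA₀ i i₀
  · intro w hw
    rw [Finset.mem_coe, Finset.mem_filter] at hw
    rw [Finset.mem_coe, Finset.mem_powersetCard]
    exact ⟨hw.2, (mem_word.mp hw.1) i⟩

lemma card_word (i₀ : Fin n) {A₀ : Finset (Fin (m * n))} (hA₀ : A₀.card = m) :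
    (wordFinset m n).card
      = (m * n).choose m * ((wordFinset m n).filter (fun w => pos m n w i₀ = A₀)).card := by
  classical
  have : wordFinset m n
      = (wordFinset m n).filter (fun w => pos m n w i₀ ⊆ Ival m n (m * n)) := by
    rw [Ival_top]
    simp [Finset.filter_true_of_mem, Finset.subset_univ]
  conv_lhs => rw [this]
  exact card_pos_sub le_rfl i₀ i₀ hA₀

lemma card_pos_sub_pair (hs : s ≤ m * n) {i j i₀ j₀ : Fin n} (hij : i ≠ j) (hij₀ : i₀ ≠ j₀)
    {A₀ B₀ : Finset (Fin (m * n))} (hA₀ : A₀.card = m) (hB₀ : B₀.card = m)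
    (hd₀ : Disjoint A₀ B₀) :
    ((wordFinset m n).filter
        (fun w => pos m n w i ⊆ Ival m n s ∧ pos m n w j ⊆ Ival m n s)).card
      = (s.choose m * (s - m).choose m) *
        ((wordFinset m n).filter (fun w => pos m n w i₀ = A₀ ∧ pos m n w j₀ = B₀)).card := by
  classical
  set t := (Finset.powersetCard m (Ival m n s) ×ˢ Finset.powersetCard m (Ival m n s)).filter
    (fun q => Disjoint q.1 q.2) with ht
  have hdisj : ∀ w : Fin (m * n) → Fin n, Disjoint (pos m n w i) (pos m n w j) := by
    intro w
    rw [Finset.disjoint_left]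
    intro p hp hq
    rw [mem_pos] at hp hq
    exact hij (hp ▸ hq ▸ rfl)
  rw [Finset.card_eq_sum_card_fiberwise (f := fun w => (pos m n w i, pos m n w j)) (t := t) ?_]
  · rw [Finset.sum_congr rfl (g := fun _ =>
        ((wordFinset m n).filter (fun w => pos m n w i₀ = A₀ ∧ pos m n w j₀ = B₀)).card) ?_]
    · rw [Finset.sum_const, smul_eq_mul]
      congr 1
      -- compute t.card
      rw [ht, Finset.card_filter, Finset.sum_product]
      rw [Finset.sum_congr rfl (g := fun A => (s - m).choose m) ?_]
      · rw [Finset.sum_const, Finset.card_powersetCard, card_Ival hs, smul_eq_mul]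
      · intro A hA
        rw [Finset.mem_powersetCard] at hA
        rw [← Finset.card_filter]
        have : (Finset.powersetCard m (Ival m n s)).filter (fun B => Disjoint A B)
            = Finset.powersetCard m ((Ival m n s) \ A) := by
          ext B
          rw [Finset.mem_filter, Finset.mem_powersetCard, Finset.mem_powersetCard,
            Finset.subset_sdiff]
          constructor
          · rintro ⟨⟨h1, h2⟩, h3⟩; exact ⟨⟨h1, h3.symm⟩, h2⟩
          · rintro ⟨⟨h1, h3⟩, h2⟩; exact ⟨⟨h1, h2⟩, h3.symm⟩
        rw [this, Finset.card_powersetCard, Finset.card_sdiff_of_subset hA.1, card_Ival hs, hA.2]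
    · intro q hq
      rw [ht, Finset.mem_filter, Finset.mem_product, Finset.mem_powersetCard,
        Finset.mem_powersetCard] at hq
      have : ((wordFinset m n).filter
            (fun w => pos m n w i ⊆ Ival m n s ∧ pos m n w j ⊆ Ival m n s)).filter
            (fun w => (pos m n w i, pos m n w j) = q)
          = (wordFinset m n).filter (fun w => pos m n w i = q.1 ∧ pos m n w j = q.2) := by
        rw [Finset.filter_filter]
        apply Finset.filter_congr
        intro w _
        rw [Prod.ext_iff]
        constructor
        · exact fun h => h.2
        · rintro ⟨h1, h2⟩
          exact ⟨⟨h1 ▸ hq.1.1.1, h2 ▸ hq.1.2.1⟩, h1, h2⟩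
      rw [this]
      exact fiber_pair_eq hq.1.1.2 hq.1.2.2 hA₀ hB₀ hq.2 hd₀ hij hij₀
  · intro w hw
    rw [Finset.mem_coe, Finset.mem_filter] at hw
    rw [ht, Finset.mem_coe, Finset.mem_filter, Finset.mem_product, Finset.mem_powersetCard,
      Finset.mem_powersetCard]
    exact ⟨⟨⟨hw.2.1, (mem_word.mp hw.1) i⟩, ⟨hw.2.2, (mem_word.mp hw.1) j⟩⟩, hdisj w⟩

lemma card_word_pair {i₀ j₀ : Fin n} (hij₀ : i₀ ≠ j₀)
    {A₀ B₀ : Finset (Fin (m * n))} (hA₀ : A₀.card = m) (hB₀ : B₀.card = m)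
    (hd₀ : Disjoint A₀ B₀) :
    (wordFinset m n).card
      = ((m * n).choose m * (m * n - m).choose m) *
        ((wordFinset m n).filter (fun w => pos m n w i₀ = A₀ ∧ pos m n w j₀ = B₀)).card := by
  classical
  have : wordFinset m n = (wordFinset m n).filter
      (fun w => pos m n w i₀ ⊆ Ival m n (m * n) ∧ pos m n w j₀ ⊆ Ival m n (m * n)) := by
    rw [Ival_top]
    simp [Finset.filter_true_of_mem, Finset.subset_univ]
  conv_lhs => rw [this]
  exact card_pos_sub_pair le_rfl hij₀ hij₀ hA₀ hB₀ hd₀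

end Counting


section Sums
variable {m n : ℕ}

/-- number of letters fully contained in the first `s` positions -/
def Xst (m n s : ℕ) (w : Fin (m * n) → Fin n) : ℕ :=
  (Finset.univ.filter (fun i => pos m n w i ⊆ Ival m n s)).card

lemma sum_X {s : ℕ} (hs : s ≤ m * n) (i₀ : Fin n) {A₀ : Finset (Fin (m * n))}
    (hA₀ : A₀.card = m) :
    ∑ w ∈ wordFinset m n, Xst m n s w
      = n * (s.choose m * ((wordFinset m n).filter (fun w => pos m n w i₀ = A₀)).card) := by
  classical
  calc ∑ w ∈ wordFinset m n, Xst m n s w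
      = ∑ w ∈ wordFinset m n, ∑ i : Fin n, (if pos m n w i ⊆ Ival m n s then 1 else 0) :=
        Finset.sum_congr rfl (fun w _ => Finset.card_filter _ _)
    _ = ∑ i : Fin n, ∑ w ∈ wordFinset m n, (if pos m n w i ⊆ Ival m n s then 1 else 0) :=
        Finset.sum_comm
    _ = ∑ i : Fin n, ((wordFinset m n).filter (fun w => pos m n w i ⊆ Ival m n s)).card :=
        Finset.sum_congr rfl (fun i _ => (Finset.card_filter _ _).symm)
    _ = ∑ _i : Fin n, (s.choose m *
          ((wordFinset m n).filter (fun w => pos m n w i₀ = A₀)).card) :=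
        Finset.sum_congr rfl (fun i _ => card_pos_sub hs i i₀ hA₀)
    _ = n * _ := by rw [Finset.sum_const, Finset.card_univ, Fintype.card_fin, smul_eq_mul]

lemma sum_X_sq {s : ℕ} (hs : s ≤ m * n) {i₀ j₀ : Fin n} (hij₀ : i₀ ≠ j₀)
    {A₀ B₀ : Finset (Fin (m * n))} (hA₀ : A₀.card = m) (hB₀ : B₀.card = m)
    (hd₀ : Disjoint A₀ B₀) :
    ∑ w ∈ wordFinset m n, (Xst m n s w) ^ 2
      = n * (s.choose m * ((wordFinset m n).filter (fun w => pos m n w i₀ = A₀)).card)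
        + n * ((n - 1) * ((s.choose m * (s - m).choose m) *
          ((wordFinset m n).filter
            (fun w => pos m n w i₀ = A₀ ∧ pos m n w j₀ = B₀)).card)) := by
  classical
  set K := ((wordFinset m n).filter (fun w => pos m n w i₀ = A₀)).card with hK
  set K₂ := ((wordFinset m n).filter
      (fun w => pos m n w i₀ = A₀ ∧ pos m n w j₀ = B₀)).card with hK₂
  have h1 : ∀ w : Fin (m * n) → Fin n, (Xst m n s w) ^ 2
      = ∑ i : Fin n, ∑ j : Fin n,
          (if pos m n w i ⊆ Ival m n s ∧ pos m n w j ⊆ Ival m n s then 1 else 0) := by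
    intro w
    rw [Xst, Finset.card_filter, sq, Finset.sum_mul_sum]
    refine Finset.sum_congr rfl fun i _ => Finset.sum_congr rfl fun j _ => ?_
    by_cases hi : pos m n w i ⊆ Ival m n s <;> by_cases hj : pos m n w j ⊆ Ival m n s <;>
      simp [hi, hj]
  calc ∑ w ∈ wordFinset m n, (Xst m n s w) ^ 2
      = ∑ w ∈ wordFinset m n, ∑ i : Fin n, ∑ j : Fin n,
          (if pos m n w i ⊆ Ival m n s ∧ pos m n w j ⊆ Ival m n s then 1 else 0) :=
        Finset.sum_congr rfl (fun w _ => h1 w)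
    _ = ∑ i : Fin n, ∑ j : Fin n, ∑ w ∈ wordFinset m n,
          (if pos m n w i ⊆ Ival m n s ∧ pos m n w j ⊆ Ival m n s then 1 else 0) := by
        rw [Finset.sum_comm]
        exact Finset.sum_congr rfl (fun i _ => Finset.sum_comm)
    _ = ∑ i : Fin n, ∑ j : Fin n, ((wordFinset m n).filter
          (fun w => pos m n w i ⊆ Ival m n s ∧ pos m n w j ⊆ Ival m n s)).card :=
        Finset.sum_congr rfl (fun i _ => Finset.sum_congr rfl
          (fun j _ => (Finset.card_filter _ _).symm))
    _ = ∑ _i : Fin n, (s.choose m * K + (n - 1) * ((s.choose m * (s - m).choose m) * K₂)) := by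
        refine Finset.sum_congr rfl fun i _ => ?_
        rw [← Finset.add_sum_erase _ _ (Finset.mem_univ i)]
        congr 1
        · have : (wordFinset m n).filter
              (fun w => pos m n w i ⊆ Ival m n s ∧ pos m n w i ⊆ Ival m n s)
              = (wordFinset m n).filter (fun w => pos m n w i ⊆ Ival m n s) := by
            apply Finset.filter_congr; intro w _; exact and_self_iff
          rw [this]
          exact card_pos_sub hs i i₀ hA₀
        · rw [Finset.sum_congr rfl (g := fun _ => (s.choose m * (s - m).choose m) * K₂) ?_]
          · rw [Finset.sum_const, Finset.card_erase_of_mem (Finset.mem_univ i),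
              Finset.card_univ, Fintype.card_fin, smul_eq_mul]
          · intro j hj
            exact card_pos_sub_pair hs ((Finset.mem_erase.mp hj).1.symm) hij₀ hA₀ hB₀ hd₀
    _ = _ := by
        rw [Finset.sum_const, Finset.card_univ, Fintype.card_fin, smul_eq_mul, Nat.mul_add]

end Sums

section TLemmas
variable {m n : ℕ}

lemma cnt_card (w : Fin (m * n) → Fin n) (i : Fin n) (s : ℕ) :
    (Finset.univ.filter (fun p : Fin (m * n) => (p : ℕ) < s ∧ w p = i)).card
      = (pos m n w i ∩ Ival m n s).card := by
  congr 1
  ext p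
  simp [pos, Ival, and_comm]

lemma cnt_le_iff {w : Fin (m * n) → Fin n} (hw : w ∈ wordFinset m n) (i : Fin n) (s : ℕ) :
    m ≤ (Finset.univ.filter (fun p : Fin (m * n) => (p : ℕ) < s ∧ w p = i)).card
      ↔ pos m n w i ⊆ Ival m n s := by
  rw [cnt_card]
  have hcard : (pos m n w i).card = m := (mem_word.mp hw) i
  constructor
  · intro h
    have hsub : pos m n w i ∩ Ival m n s ⊆ pos m n w i := Finset.inter_subset_left
    have := Finset.eq_of_subset_of_card_le hsub (hcard.le.trans h)
    rw [← Finset.inter_eq_left]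
    exact this
  · intro h
    rw [Finset.inter_eq_left.mpr h, hcard]

lemma Tstat_le_iff {w : Fin (m * n) → Fin n} (hw : w ∈ wordFinset m n) (hn : 0 < n)
    (s : ℕ) : Tstat m n w ≤ s ↔ ∃ i, pos m n w i ⊆ Ival m n s := by
  classical
  have hne : {t : ℕ | ∃ i : Fin n,
      m ≤ (Finset.univ.filter (fun p : Fin (m * n) => (p : ℕ) < t ∧ w p = i)).card}.Nonempty := by
    refine ⟨m * n, ⟨⟨0, hn⟩, ?_⟩⟩
    rw [cnt_le_iff hw]
    rw [Ival_top]
    exact Finset.subset_univ _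
  constructor
  · intro h
    obtain ⟨i, hi⟩ := Nat.sInf_mem hne
    refine ⟨i, ?_⟩
    rw [← cnt_le_iff hw]
    refine le_trans hi (Finset.card_le_card ?_)
    intro p hp
    simp only [Finset.mem_filter] at hp ⊢
    exact ⟨hp.1, lt_of_lt_of_le hp.2.1 h, hp.2.2⟩
  · rintro ⟨i, hi⟩
    exact Nat.sInf_le ⟨i, (cnt_le_iff hw i s).mpr hi⟩

lemma Tstat_le_top {w : Fin (m * n) → Fin n} (hw : w ∈ wordFinset m n) (hn : 0 < n) :
    Tstat m n w ≤ m * n := by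
  rw [Tstat_le_iff hw hn]
  exact ⟨⟨0, hn⟩, Ival_top ▸ Finset.subset_univ _⟩

lemma sum_T_eq (hn : 0 < n) :
    ∑ w ∈ wordFinset m n, Tstat m n w
      = ∑ s ∈ Finset.range (m * n), ((wordFinset m n).filter
          (fun w => s < Tstat m n w)).card := by
  classical
  have h1 : ∀ w ∈ wordFinset m n, Tstat m n w
      = ∑ s ∈ Finset.range (m * n), (if s < Tstat m n w then 1 else 0) := by
    intro w hw
    rw [← Finset.card_filter]
    have : (Finset.range (m * n)).filter (fun s => s < Tstat m n w)
        = Finset.range (Tstat m n w) := by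
      ext x
      simp only [Finset.mem_filter, Finset.mem_range]
      exact ⟨fun h => h.2, fun h => ⟨lt_of_lt_of_le h (Tstat_le_top hw hn), h⟩⟩
    rw [this, Finset.card_range]
  rw [Finset.sum_congr rfl h1, Finset.sum_comm]
  exact Finset.sum_congr rfl (fun s _ => (Finset.card_filter _ _).symm)

end TLemmas


section Nonempty
variable {m n : ℕ}

lemma word_nonempty (hm : 0 < m) (hn : 0 < n) : (wordFinset m n).Nonempty := by
  classical
  refine ⟨fun p => ⟨p.val / m, ?_⟩, ?_⟩
  · rw [Nat.div_lt_iff_lt_mul hm]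
    exact lt_of_lt_of_le p.isLt (le_of_eq (mul_comm m n))
  · rw [mem_word]
    intro i
    rw [pos]
    rw [Finset.card_bij' (i := fun (p : Fin (m * n)) _ => (p : ℕ) - i.val * m)
      (j := fun (x : ℕ) (hx : x ∈ Finset.range m) => (⟨i.val * m + x, by
        rw [Finset.mem_range] at hx
        calc i.val * m + x < i.val * m + m := by omega
          _ = (i.val + 1) * m := by ring
          _ ≤ n * m := Nat.mul_le_mul_right m i.isLt
          _ = m * n := mul_comm n m⟩ : Fin (m * n)))
      ?_ ?_ ?_ ?_]
    · exact Finset.card_range m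
    · intro p hp
      simp only [Finset.mem_filter, Finset.mem_univ, true_and, Fin.ext_iff] at hp
      have h1 : i.val * m ≤ (p : ℕ) := by
        have := Nat.div_mul_le_self (p : ℕ) m
        rw [hp] at this; omega
      have h2 : (p : ℕ) < (i.val + 1) * m := by
        rw [← Nat.div_lt_iff_lt_mul hm, hp]; omega
      rw [Finset.mem_range]
      show (p : ℕ) - i.val * m < m
      have h3 : (i.val + 1) * m = i.val * m + m := by ring
      omega
    · intro x hx
      rw [Finset.mem_range] at hx
      simp only [Finset.mem_filter, Finset.mem_univ, true_and, Fin.ext_iff]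
      show (i.val * m + x) / m = i.val
      apply Nat.div_eq_of_lt_le
      · exact Nat.le_add_right _ _
      · calc i.val * m + x < i.val * m + m := by omega
          _ = (i.val + 1) * m := by ring
    · intro p hp
      simp only [Finset.mem_filter, Finset.mem_univ, true_and, Fin.ext_iff] at hp
      have h1 : i.val * m ≤ (p : ℕ) := by
        have := Nat.div_mul_le_self (p : ℕ) m
        rw [hp] at this; omega
      apply Fin.ext
      show i.val * m + ((p : ℕ) - i.val * m) = (p : ℕ)
      omega
    · intro x hx
      rw [Finset.mem_range] at hx
      show i.val * m + x - i.val * m = x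
      omega

end Nonempty

section ChooseIneq

lemma descFactorial_cross (k : ℕ) : ∀ (j : ℕ) {a b : ℕ}, a ≤ b →
    (a - k).descFactorial j * b.descFactorial j
      ≤ a.descFactorial j * (b - k).descFactorial j := by
  intro j
  induction j with
  | zero => simp
  | succ j ih =>
    intro a b hab
    rw [Nat.descFactorial_succ, Nat.descFactorial_succ, Nat.descFactorial_succ,
      Nat.descFactorial_succ]
    have hcross : (a - k - j) * (b - j) ≤ (a - j) * (b - k - j) := by
      rcases le_or_gt a (k + j) with h | h
      · have h0 : a - k - j = 0 := by omega
        simp [h0]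
      · have h1 : a - j = (a - k - j) + k := by omega
        have h2 : b - j = (b - k - j) + k := by omega
        have h3 : a - k - j ≤ b - k - j := by omega
        rw [h1, h2, Nat.mul_add, Nat.add_mul]
        refine Nat.add_le_add_left ?_ _
        rw [mul_comm]
        exact Nat.mul_le_mul_left k h3
    calc (a - k - j) * (a - k).descFactorial j * ((b - j) * b.descFactorial j)
        = ((a - k - j) * (b - j)) * ((a - k).descFactorial j * b.descFactorial j) := by ring
      _ ≤ ((a - j) * (b - k - j)) * (a.descFactorial j * (b - k).descFactorial j) :=
          Nat.mul_le_mul hcross (ih hab)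
      _ = (a - j) * a.descFactorial j * ((b - k - j) * (b - k).descFactorial j) := by ring

lemma choose_cross {s N k : ℕ} (h : s ≤ N) :
    (s - k).choose k * N.choose k ≤ s.choose k * (N - k).choose k := by
  have hd := descFactorial_cross k k h
  rw [Nat.descFactorial_eq_factorial_mul_choose, Nat.descFactorial_eq_factorial_mul_choose,
    Nat.descFactorial_eq_factorial_mul_choose, Nat.descFactorial_eq_factorial_mul_choose] at hd
  have h2 : k.factorial ^ 2 * ((s - k).choose k * N.choose k)
      ≤ k.factorial ^ 2 * (s.choose k * (N - k).choose k) := by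
    calc k.factorial ^ 2 * ((s - k).choose k * N.choose k)
        = k.factorial * (s - k).choose k * (k.factorial * N.choose k) := by ring
      _ ≤ k.factorial * s.choose k * (k.factorial * (N - k).choose k) := hd
      _ = k.factorial ^ 2 * (s.choose k * (N - k).choose k) := by ring
  exact Nat.le_of_mul_le_mul_left h2 (by positivity)

end ChooseIneq


section Key
variable {m n : ℕ}

lemma key_lower_count (hn : 0 < n) {s : ℕ} (hs : s ≤ m * n) (i₀ : Fin n)
    {A₀ : Finset (Fin (m * n))} (hA₀ : A₀.card = m) :
    ((wordFinset m n).filter (fun w => Tstat m n w ≤ s)).card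
      ≤ n * (s.choose m * ((wordFinset m n).filter (fun w => pos m n w i₀ = A₀)).card) := by
  classical
  calc ((wordFinset m n).filter (fun w => Tstat m n w ≤ s)).card
      ≤ (Finset.univ.biUnion (fun i : Fin n =>
          (wordFinset m n).filter (fun w => pos m n w i ⊆ Ival m n s))).card := by
        apply Finset.card_le_card
        intro w hw
        rw [Finset.mem_filter] at hw
        obtain ⟨i, hi⟩ := (Tstat_le_iff hw.1 hn s).mp hw.2
        rw [Finset.mem_biUnion]
        exact ⟨i, Finset.mem_univ i, Finset.mem_filter.mpr ⟨hw.1, hi⟩⟩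
    _ ≤ ∑ i : Fin n, ((wordFinset m n).filter (fun w => pos m n w i ⊆ Ival m n s)).card :=
        Finset.card_biUnion_le
    _ = ∑ _i : Fin n, (s.choose m *
          ((wordFinset m n).filter (fun w => pos m n w i₀ = A₀)).card) :=
        Finset.sum_congr rfl (fun i _ => card_pos_sub hs i i₀ hA₀)
    _ = _ := by rw [Finset.sum_const, Finset.card_univ, Fintype.card_fin, smul_eq_mul]

set_option maxHeartbeats 1000000 in
lemma key_upper_count (hm : 0 < m) (hn2 : 2 ≤ n) {s : ℕ} (hs : s ≤ m * n) :
    ((wordFinset m n).filter (fun w => s < Tstat m n w)).card * (n * s.choose m)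
      ≤ (m * n).choose m * (wordFinset m n).card := by
  classical
  have hn0 : 0 < n := by omega
  have hmn : m ≤ m * n := by calc m = m * 1 := (mul_one m).symm
                                 _ ≤ m * n := Nat.mul_le_mul_left m hn0
  have h2mn : 2 * m ≤ m * n := by
    calc 2 * m = m * 2 := mul_comm 2 m
      _ ≤ m * n := Nat.mul_le_mul_left m hn2
  set i₀ : Fin n := ⟨0, hn0⟩ with hi₀
  set j₀ : Fin n := ⟨1, hn2⟩ with hj₀
  have hij₀ : i₀ ≠ j₀ := by simp [hi₀, hj₀, Fin.ext_iff]
  have hsub : Ival m n m ⊆ Ival m n (2 * m) := by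
    intro p hp
    simp only [Ival, Finset.mem_filter, Finset.mem_univ, true_and] at hp ⊢
    omega
  have hA₀ : (Ival m n m).card = m := card_Ival hmn
  have hB₀ : (Ival m n (2 * m) \ Ival m n m).card = m := by
    rw [Finset.card_sdiff_of_subset hsub, card_Ival h2mn, card_Ival hmn]
    omega
  have hd₀ : Disjoint (Ival m n m) (Ival m n (2 * m) \ Ival m n m) := Finset.disjoint_sdiff
  set K := ((wordFinset m n).filter (fun w => pos m n w i₀ = Ival m n m)).card with hK
  set K₂ := ((wordFinset m n).filter (fun w => pos m n w i₀ = Ival m n m ∧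
      pos m n w j₀ = Ival m n (2 * m) \ Ival m n m)).card with hK₂
  set S0 := (wordFinset m n).card with hS0def
  set Cs := s.choose m with hCs
  set Csm := (s - m).choose m with hCsm
  set CN := (m * n).choose m with hCN
  set CNm := (m * n - m).choose m with hCNm
  have hS0 : S0 = CN * K := card_word i₀ hA₀
  have hS0' : S0 = (CN * CNm) * K₂ := card_word_pair hij₀ hA₀ hB₀ hd₀
  set AA := n * (Cs * K) with hAAdef
  set XX := n * ((n - 1) * ((Cs * Csm) * K₂)) with hXXdef
  have hsumX : ∑ w ∈ wordFinset m n, Xst m n s w = AA := sum_X hs i₀ hA₀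
  have hsumX2 : ∑ w ∈ wordFinset m n, (Xst m n s w) ^ 2 = AA + XX :=
    sum_X_sq hs hij₀ hA₀ hB₀ hd₀
  set BB := AA + XX with hBBdef
  set U := ((wordFinset m n).filter (fun w => Tstat m n w ≤ s)).card with hU
  set G := ((wordFinset m n).filter (fun w => s < Tstat m n w)).card with hG
  -- (a) G + U = S0
  have ha : G + U = S0 := by
    rw [hG, hU, hS0def]
    rw [show ((wordFinset m n).filter (fun w => Tstat m n w ≤ s))
        = ((wordFinset m n).filter (fun w => ¬ (s < Tstat m n w))) from
      Finset.filter_congr (fun w _ => (not_lt).symm)]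
    exact Finset.card_filter_add_card_filter_not _
  have hUS0 : U ≤ S0 := by omega
  -- (b) Cauchy-Schwarz : AA^2 ≤ U * BB
  have hb : AA ^ 2 ≤ U * BB := by
    have hreal : (AA : ℝ) ^ 2 ≤ (U : ℝ) * (BB : ℝ) := by
      set E := (wordFinset m n).filter (fun w => Tstat m n w ≤ s) with hE
      have hsum1 : ∑ w ∈ E, (Xst m n s w : ℝ) = ∑ w ∈ wordFinset m n, (Xst m n s w : ℝ) := by
        apply Finset.sum_filter_of_ne
        intro w hw hne
        have hX : 0 < Xst m n s w := by
          by_contra hc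
          push_neg at hc
          rw [Nat.le_zero] at hc
          exact hne (by rw [hc]; norm_num)
        rw [Xst, Finset.card_pos] at hX
        obtain ⟨i, hi⟩ := hX
        rw [Finset.mem_filter] at hi
        exact (Tstat_le_iff hw hn0 s).mpr ⟨i, hi.2⟩
      have hcs := Finset.sum_mul_sq_le_sq_mul_sq E (fun _ => (1:ℝ)) (fun w => (Xst m n s w : ℝ))
      simp only [one_mul, one_pow] at hcs
      have h1 : ∑ _w ∈ E, (1:ℝ) = (U : ℝ) := by
        rw [Finset.sum_const, hE, ← hU]; simp
      have h2 : ∑ w ∈ E, (Xst m n s w : ℝ) ^ 2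
          ≤ ∑ w ∈ wordFinset m n, (Xst m n s w : ℝ) ^ 2 := by
        apply Finset.sum_le_sum_of_subset_of_nonneg (Finset.filter_subset _ _)
        intro w _ _
        positivity
      have h3 : ∑ w ∈ wordFinset m n, (Xst m n s w : ℝ) = (AA : ℝ) := by
        rw [← Nat.cast_sum, hsumX]
      have h4 : ∑ w ∈ wordFinset m n, (Xst m n s w : ℝ) ^ 2 = (BB : ℝ) := by
        rw [← hsumX2, Nat.cast_sum]
        exact Finset.sum_congr rfl (fun w _ => by push_cast; ring)
      calc (AA : ℝ) ^ 2 = (∑ w ∈ E, (Xst m n s w : ℝ)) ^ 2 := by rw [hsum1, h3]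
        _ ≤ (∑ _w ∈ E, (1:ℝ)) * ∑ w ∈ E, (Xst m n s w : ℝ) ^ 2 := hcs
        _ ≤ (U : ℝ) * (BB : ℝ) := by
            rw [h1]
            exact mul_le_mul_of_nonneg_left (le_trans h2 (le_of_eq h4)) (Nat.cast_nonneg U)
    exact_mod_cast hreal
  -- (c) negative correlation : BB * S0 ≤ AA * S0 + AA^2
  have hcc : Csm * CN ≤ Cs * CNm := choose_cross hs
  have hc : BB * S0 ≤ AA * S0 + AA ^ 2 := by
    have hXS : XX * S0 ≤ AA ^ 2 := by
      have hCNpos : 0 < CN := Nat.choose_pos hmn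
      have step : CN ^ 2 * (XX * S0) ≤ CN ^ 2 * AA ^ 2 := by
        calc CN ^ 2 * (XX * S0)
            = (n * (n - 1)) * ((Csm * CN) * (Cs * CN * K₂ * S0)) := by
              rw [hXXdef]; ring
          _ ≤ (n * n) * ((Cs * CNm) * (Cs * CN * K₂ * S0)) :=
              Nat.mul_le_mul (Nat.mul_le_mul_left n (Nat.sub_le n 1))
                (Nat.mul_le_mul_right _ hcc)
          _ = (n * Cs) * (n * Cs) * S0 * ((CN * CNm) * K₂) := by ring
          _ = (n * Cs) * (n * Cs) * S0 * S0 := by rw [← hS0']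
          _ = CN ^ 2 * AA ^ 2 := by rw [hAAdef, hS0]; ring
      exact Nat.le_of_mul_le_mul_left step (pow_pos hCNpos 2)
    calc BB * S0 = AA * S0 + XX * S0 := by rw [hBBdef]; ring
      _ ≤ AA * S0 + AA ^ 2 := by omega
  -- (e) combine : G * AA ≤ S0^2 (after cancelling BB)
  have he : G * AA * BB ≤ S0 ^ 2 * BB := by
    have e1 : G * AA * BB + U * AA * BB = S0 * AA * BB := by
      rw [← ha]; ring
    have e2 : AA ^ 3 ≤ U * AA * BB := by
      calc AA ^ 3 = AA * AA ^ 2 := by ring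
        _ ≤ AA * (U * BB) := Nat.mul_le_mul_left AA hb
        _ = U * AA * BB := by ring
    have e3 : S0 * AA * BB ≤ AA ^ 2 * S0 + AA ^ 3 := by
      calc S0 * AA * BB = AA * (BB * S0) := by ring
        _ ≤ AA * (AA * S0 + AA ^ 2) := Nat.mul_le_mul_left AA hc
        _ = AA ^ 2 * S0 + AA ^ 3 := by ring
    have e4 : AA ^ 2 * S0 ≤ S0 ^ 2 * BB := by
      calc AA ^ 2 * S0 ≤ (U * BB) * S0 := Nat.mul_le_mul_right S0 hb
        _ ≤ (S0 * BB) * S0 := Nat.mul_le_mul_right S0 (Nat.mul_le_mul_right BB hUS0)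
        _ = S0 ^ 2 * BB := by ring
    omega
  -- cancel BB and K
  rcases Nat.eq_zero_or_pos AA with hAA0 | hAApos
  · -- AA = 0 : then Cs * K = 0
    have : Cs * K = 0 := by
      rcases Nat.mul_eq_zero.mp hAA0 with h | h
      · omega
      · exact h
    rcases Nat.mul_eq_zero.mp this with h | h
    · rw [h]; simp
    · have hS00 : S0 = 0 := by rw [hS0, h]; ring
      have hG0 : G = 0 := by omega
      rw [hG0]; simp
  · have hBBpos : 0 < BB := by omega
    have hGA : G * AA ≤ S0 ^ 2 := Nat.le_of_mul_le_mul_right he hBBpos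
    have hKpos : 0 < K := by
      rcases Nat.eq_zero_or_pos K with h | h
      · exfalso; rw [hAAdef] at hAApos; rw [h] at hAApos; omega
      · exact h
    have final : (G * (n * Cs)) * K ≤ (CN * S0) * K := by
      calc (G * (n * Cs)) * K = G * AA := by rw [hAAdef]; ring
        _ ≤ S0 ^ 2 := hGA
        _ = (CN * S0) * K := by rw [hS0]; ring
    exact Nat.le_of_mul_le_mul_right final hKpos

end Key


section Tail
variable {m n : ℕ}

lemma GU_split (s : ℕ) :
    ((wordFinset m n).filter (fun w => s < Tstat m n w)).card
      + ((wordFinset m n).filter (fun w => Tstat m n w ≤ s)).card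
      = (wordFinset m n).card := by
  classical
  rw [show ((wordFinset m n).filter (fun w => Tstat m n w ≤ s))
      = ((wordFinset m n).filter (fun w => ¬ (s < Tstat m n w))) from
    Finset.filter_congr (fun w _ => (not_lt).symm)]
  exact Finset.card_filter_add_card_filter_not _

lemma tail_bound_nat (hm : 0 < m) (hn2 : 2 ≤ n) {s : ℕ} (hs : s ≤ m * n) :
    ((wordFinset m n).filter (fun w => s < Tstat m n w)).card * (n * (s + 1 - m) ^ m)
      ≤ (m * n) ^ m * (wordFinset m n).card := by
  have h1 := key_upper_count hm hn2 hs
  have h2 : (s + 1 - m) ^ m ≤ m.factorial * s.choose m := by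
    have := Nat.pow_sub_le_descFactorial s m
    rwa [Nat.descFactorial_eq_factorial_mul_choose] at this
  have h3 : m.factorial * (m * n).choose m ≤ (m * n) ^ m := by
    have := Nat.descFactorial_le_pow (m * n) m
    rwa [Nat.descFactorial_eq_factorial_mul_choose] at this
  set G := ((wordFinset m n).filter (fun w => s < Tstat m n w)).card
  set S0 := (wordFinset m n).card
  calc G * (n * (s + 1 - m) ^ m)
      ≤ G * (n * (m.factorial * s.choose m)) :=
        Nat.mul_le_mul_left _ (Nat.mul_le_mul_left _ h2)
    _ = m.factorial * (G * (n * s.choose m)) := by ring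
    _ ≤ m.factorial * ((m * n).choose m * S0) := Nat.mul_le_mul_left _ h1
    _ = (m.factorial * (m * n).choose m) * S0 := by ring
    _ ≤ (m * n) ^ m * S0 := Nat.mul_le_mul_right _ h3

end Tail

section TeleSum

lemma tail_sum {m : ℕ} (hm : 2 ≤ m) (a M : ℕ) (ha : 1 ≤ a) :
    ∑ j ∈ Finset.Ico a M, (1:ℝ) / ((j:ℝ) + (m:ℝ) - 1) ^ m
      ≤ 1 / (((m:ℝ) - 1) * ((a:ℝ)) ^ (m - 1)) := by
  have hm1 : ((m - 1 : ℕ) : ℝ) = (m:ℝ) - 1 := by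
    rw [Nat.cast_sub (by omega)]; simp
  have hm1pos : (0:ℝ) < (m:ℝ) - 1 := by
    have : (2:ℝ) ≤ (m:ℝ) := by exact_mod_cast hm
    linarith
  set h : ℕ → ℝ := fun j => 1 / ∏ i ∈ Finset.range (m - 1), ((j:ℝ) + (i:ℝ)) with hh
  have hprodpos : ∀ j : ℕ, 1 ≤ j → (0:ℝ) < ∏ i ∈ Finset.range (m - 1), ((j:ℝ) + (i:ℝ)) := by
    intro j hj
    apply Finset.prod_pos
    intro i _
    have h1 : (1:ℝ) ≤ (j:ℝ) := by exact_mod_cast hj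
    have h2 : (0:ℝ) ≤ (i:ℝ) := Nat.cast_nonneg i
    linarith
  have hQpos : ∀ j : ℕ, 1 ≤ j → (0:ℝ) < ∏ i ∈ Finset.range m, ((j:ℝ) + (i:ℝ)) := by
    intro j hj
    apply Finset.prod_pos
    intro i _
    have h1 : (1:ℝ) ≤ (j:ℝ) := by exact_mod_cast hj
    have h2 : (0:ℝ) ≤ (i:ℝ) := Nat.cast_nonneg i
    linarith
  have hanonneg : ∀ j i : ℕ, (0:ℝ) ≤ (j:ℝ) + (i:ℝ) := by
    intro j i; positivity
  have hstep : ∀ j : ℕ, 1 ≤ j →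
      ((m:ℝ) - 1) * ((1:ℝ) / ((j:ℝ) + (m:ℝ) - 1) ^ m) ≤ h j - h (j + 1) := by
    intro j hj
    have hPpos := hprodpos j hj
    have hP2pos := hprodpos (j + 1) (by omega)
    have hQp := hQpos j hj
    have hjm1pos : (0:ℝ) < (j:ℝ) + (m:ℝ) - 1 := by
      have h1 : (1:ℝ) ≤ (j:ℝ) := by exact_mod_cast hj
      linarith
    have hQ1 : ∏ i ∈ Finset.range m, ((j:ℝ) + (i:ℝ))
        = (∏ i ∈ Finset.range (m - 1), ((j:ℝ) + (i:ℝ))) * ((j:ℝ) + (m:ℝ) - 1) := by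
      conv_lhs => rw [show m = (m - 1) + 1 from by omega]
      rw [Finset.prod_range_succ, hm1]
      ring
    have hQ2 : ∏ i ∈ Finset.range m, ((j:ℝ) + (i:ℝ))
        = (∏ i ∈ Finset.range (m - 1), (((j + 1 : ℕ):ℝ) + (i:ℝ))) * (j:ℝ) := by
      conv_lhs => rw [show m = (m - 1) + 1 from by omega]
      rw [Finset.prod_range_succ']
      congr 1
      · exact Finset.prod_congr rfl (fun i _ => by push_cast; ring)
      · push_cast; ring
    have hhj : h j = ((j:ℝ) + (m:ℝ) - 1) / ∏ i ∈ Finset.range m, ((j:ℝ) + (i:ℝ)) := by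
      rw [hh]
      simp only
      rw [eq_div_iff hQp.ne', hQ1]
      field_simp
    have hhj1 : h (j + 1) = (j:ℝ) / ∏ i ∈ Finset.range m, ((j:ℝ) + (i:ℝ)) := by
      rw [hh]
      simp only
      rw [eq_div_iff hQp.ne', hQ2]
      field_simp
    have hdiff : h j - h (j + 1) = ((m:ℝ) - 1) / ∏ i ∈ Finset.range m, ((j:ℝ) + (i:ℝ)) := by
      rw [hhj, hhj1, div_sub_div_same]
      ring_nf
    rw [hdiff]
    have hQle : ∏ i ∈ Finset.range m, ((j:ℝ) + (i:ℝ)) ≤ ((j:ℝ) + (m:ℝ) - 1) ^ m := by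
      calc ∏ i ∈ Finset.range m, ((j:ℝ) + (i:ℝ))
          ≤ ∏ _i ∈ Finset.range m, ((j:ℝ) + (m:ℝ) - 1) := by
            apply Finset.prod_le_prod
            · intro i _; exact hanonneg j i
            · intro i hi
              rw [Finset.mem_range] at hi
              have : (i:ℝ) ≤ (m:ℝ) - 1 := by
                have : (i:ℝ) ≤ ((m - 1 : ℕ):ℝ) := by exact_mod_cast (by omega : i ≤ m - 1)
                rwa [hm1] at this
              linarith
        _ = ((j:ℝ) + (m:ℝ) - 1) ^ m := by rw [Finset.prod_const, Finset.card_range]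
    calc ((m:ℝ) - 1) * ((1:ℝ) / ((j:ℝ) + (m:ℝ) - 1) ^ m)
        = ((m:ℝ) - 1) / ((j:ℝ) + (m:ℝ) - 1) ^ m := by ring
      _ ≤ ((m:ℝ) - 1) / ∏ i ∈ Finset.range m, ((j:ℝ) + (i:ℝ)) :=
          div_le_div_of_nonneg_left (le_of_lt hm1pos) hQp hQle
  have hapow : (0:ℝ) < ((a:ℝ)) ^ (m - 1) := by
    have : (0:ℝ) < (a:ℝ) := by exact_mod_cast ha
    positivity
  rcases le_or_gt M a with hMa | haM
  · rw [Finset.Ico_eq_empty (by omega)]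
    rw [Finset.sum_empty]
    exact div_nonneg zero_le_one (le_of_lt (mul_pos hm1pos hapow))
  · have key : ((m:ℝ) - 1) * ∑ j ∈ Finset.Ico a M, (1:ℝ) / ((j:ℝ) + (m:ℝ) - 1) ^ m
        ≤ h a := by
      calc ((m:ℝ) - 1) * ∑ j ∈ Finset.Ico a M, (1:ℝ) / ((j:ℝ) + (m:ℝ) - 1) ^ m
          = ∑ j ∈ Finset.Ico a M, ((m:ℝ) - 1) * ((1:ℝ) / ((j:ℝ) + (m:ℝ) - 1) ^ m) :=
            Finset.mul_sum _ _ _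
        _ ≤ ∑ j ∈ Finset.Ico a M, (h j - h (j + 1)) := by
            apply Finset.sum_le_sum
            intro j hj
            rw [Finset.mem_Ico] at hj
            exact hstep j (le_trans ha hj.1)
        _ = (∑ j ∈ Finset.range M, (h j - h (j + 1)))
            - ∑ j ∈ Finset.range a, (h j - h (j + 1)) :=
            Finset.sum_Ico_eq_sub _ (le_of_lt haM)
        _ = (h 0 - h M) - (h 0 - h a) := by
            rw [Finset.sum_range_sub' h, Finset.sum_range_sub' h]
        _ = h a - h M := by ring
        _ ≤ h a := by
            have : (0:ℝ) ≤ h M := by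
              rw [hh]
              exact div_nonneg zero_le_one (le_of_lt (hprodpos M (by omega)))
            linarith
    have hha : h a ≤ 1 / ((a:ℝ)) ^ (m - 1) := by
      rw [hh]
      simp only
      apply one_div_le_one_div_of_le hapow
      calc ((a:ℝ)) ^ (m - 1) = ∏ _i ∈ Finset.range (m - 1), (a:ℝ) := by
            rw [Finset.prod_const, Finset.card_range]
        _ ≤ ∏ i ∈ Finset.range (m - 1), ((a:ℝ) + (i:ℝ)) := by
            apply Finset.prod_le_prod
            · intro i _; exact Nat.cast_nonneg a
            · intro i _
              have : (0:ℝ) ≤ (i:ℝ) := Nat.cast_nonneg i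
              linarith
    have final : ((m:ℝ) - 1) * ∑ j ∈ Finset.Ico a M, (1:ℝ) / ((j:ℝ) + (m:ℝ) - 1) ^ m
        ≤ 1 / ((a:ℝ)) ^ (m - 1) := le_trans key hha
    rw [le_div_iff₀ (mul_pos hm1pos hapow)]
    calc (∑ j ∈ Finset.Ico a M, (1:ℝ) / ((j:ℝ) + (m:ℝ) - 1) ^ m) * (((m:ℝ) - 1) * (a:ℝ) ^ (m - 1))
        = (((m:ℝ) - 1) * ∑ j ∈ Finset.Ico a M, (1:ℝ) / ((j:ℝ) + (m:ℝ) - 1) ^ m) * (a:ℝ) ^ (m - 1) := by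
          ring
      _ ≤ (1 / ((a:ℝ)) ^ (m - 1)) * (a:ℝ) ^ (m - 1) := by
          exact mul_le_mul_of_nonneg_right final (le_of_lt hapow)
      _ = 1 := by field_simp

end TeleSum


section Main
variable {m n : ℕ}

lemma rpow_pow {x : ℝ} (hx : 0 ≤ x) (e : ℝ) (k : ℕ) : (x ^ e) ^ k = x ^ (e * k) := by
  rw [Real.rpow_mul hx, Real.rpow_natCast]

lemma xpow_mul_x {m n : ℕ} (hm : 2 ≤ m) (hn : 1 ≤ n) :
    ((n:ℝ) ^ ((1:ℝ) - 1/(m:ℝ))) ^ (m - 1) * ((n:ℝ) ^ ((1:ℝ) - 1/(m:ℝ)))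
      = (n:ℝ) ^ (m - 1) := by
  have hn0 : (0:ℝ) ≤ (n:ℝ) := Nat.cast_nonneg n
  have hmR : (2:ℝ) ≤ (m:ℝ) := by exact_mod_cast hm
  have hm1 : ((m - 1 : ℕ) : ℝ) = (m:ℝ) - 1 := by
    rw [Nat.cast_sub (by omega)]; simp
  rw [rpow_pow hn0, ← Real.rpow_natCast (n:ℝ) (m - 1)]
  rw [show (n:ℝ) ^ (((1:ℝ) - 1/(m:ℝ)) * ((m - 1 : ℕ):ℝ)) * (n:ℝ) ^ ((1:ℝ) - 1/(m:ℝ))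
      = (n:ℝ) ^ (((1:ℝ) - 1/(m:ℝ)) * ((m - 1 : ℕ):ℝ) + ((1:ℝ) - 1/(m:ℝ))) from
    (Real.rpow_add (by exact_mod_cast (by omega : 0 < n)) _ _).symm]
  congr 1
  rw [hm1]
  field_simp
  ring

lemma xpow_m {m n : ℕ} (hm : 2 ≤ m) (hn : 1 ≤ n) :
    ((n:ℝ) ^ ((1:ℝ) - 1/(m:ℝ))) ^ m = (n:ℝ) ^ (m - 1) := by
  have hn0 : (0:ℝ) ≤ (n:ℝ) := Nat.cast_nonneg n
  have hmR : (2:ℝ) ≤ (m:ℝ) := by exact_mod_cast hm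
  have hm1 : ((m - 1 : ℕ) : ℝ) = (m:ℝ) - 1 := by
    rw [Nat.cast_sub (by omega)]; simp
  rw [rpow_pow hn0, ← Real.rpow_natCast (n:ℝ) (m - 1)]
  congr 1
  rw [hm1]
  field_simp

set_option maxHeartbeats 2000000 in
lemma upper_main (hm : 2 ≤ m) (hn : 64 * (m + 1) ≤ n) :
    (∑ w ∈ wordFinset m n, (Tstat m n w : ℝ))
      ≤ ((2:ℝ) + 2*(m:ℝ) + (m:ℝ)^m) * (n:ℝ) ^ ((1:ℝ) - 1/(m:ℝ))
        * ((wordFinset m n).card : ℝ) := by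
  classical
  have hm0 : 0 < m := by omega
  have hn2 : 2 ≤ n := by omega
  have hn0 : 0 < n := by omega
  have hnR : (1:ℝ) ≤ (n:ℝ) := by exact_mod_cast (by omega : 1 ≤ n)
  have hnR0 : (0:ℝ) < (n:ℝ) := by exact_mod_cast hn0
  have hmR : (2:ℝ) ≤ (m:ℝ) := by exact_mod_cast hm
  set e : ℝ := (1:ℝ) - 1/(m:ℝ) with he
  have he0 : 0 < e := by
    have h1 : 1/(m:ℝ) ≤ 1/2 := by
      apply one_div_le_one_div_of_le <;> linarith
    rw [he]; linarith
  have he1 : e ≤ 1 := by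
    have : 0 < 1/(m:ℝ) := by positivity
    rw [he]; linarith
  set x : ℝ := (n:ℝ) ^ e with hx
  have hx1 : 1 ≤ x := Real.one_le_rpow hnR he0.le
  have hxpos : 0 < x := lt_of_lt_of_le one_pos hx1
  have hxn : x ≤ (n:ℝ) := by
    calc x ≤ (n:ℝ) ^ (1:ℝ) := Real.rpow_le_rpow_of_exponent_le hnR he1
      _ = (n:ℝ) := Real.rpow_one _
  set c := ⌈x⌉₊ with hc
  have hcx : x ≤ (c:ℝ) := Nat.le_ceil x
  have hcx2 : (c:ℝ) ≤ x + 1 := (Nat.ceil_lt_add_one hxpos.le).le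
  have hcn : c ≤ n := by
    rw [hc, Nat.ceil_le]
    exact hxn
  set t₀ := c + 2*m with ht₀
  have h2n : 2*n ≤ m*n := Nat.mul_le_mul_right n hm
  have ht₀N : t₀ ≤ m*n := by omega
  set S0 := (wordFinset m n).card with hS0
  have hS0nonneg : (0:ℝ) ≤ (S0:ℝ) := Nat.cast_nonneg S0
  set G : ℕ → ℕ := fun s => ((wordFinset m n).filter (fun w => s < Tstat m n w)).card with hGdef
  have hcast : (∑ w ∈ wordFinset m n, (Tstat m n w : ℝ))
      = ∑ s ∈ Finset.range (m*n), ((G s : ℕ):ℝ) := by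
    rw [← Nat.cast_sum, sum_T_eq hn0, Nat.cast_sum]
  have hsplit : ∑ s ∈ Finset.range (m*n), ((G s : ℕ):ℝ)
      = ∑ s ∈ Finset.range t₀, ((G s : ℕ):ℝ) + ∑ s ∈ Finset.Ico t₀ (m*n), ((G s : ℕ):ℝ) := by
    rw [Finset.sum_range_add_sum_Ico _ ht₀N]
  -- head
  have hhead : ∑ s ∈ Finset.range t₀, ((G s : ℕ):ℝ) ≤ (t₀:ℝ) * (S0:ℝ) := by
    calc ∑ s ∈ Finset.range t₀, ((G s : ℕ):ℝ) ≤ ∑ _s ∈ Finset.range t₀, (S0:ℝ) := by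
          apply Finset.sum_le_sum
          intro s _
          exact_mod_cast Finset.card_filter_le _ _
      _ = (t₀:ℝ) * (S0:ℝ) := by rw [Finset.sum_const, Finset.card_range]; simp
  -- tail
  have htail : ∑ s ∈ Finset.Ico t₀ (m*n), ((G s : ℕ):ℝ) ≤ (m:ℝ)^m * x * (S0:ℝ) := by
    have hterm : ∀ s ∈ Finset.Ico t₀ (m*n), ((G s : ℕ):ℝ)
        ≤ (((m*n:ℕ))^m * S0 : ℕ) / ((n:ℝ) * (((s + 1 - m : ℕ)):ℝ)^m) := by
      intro s hs
      rw [Finset.mem_Ico] at hs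
      have hsm : 1 ≤ s + 1 - m := by omega
      have hdenpos : (0:ℝ) < (n:ℝ) * (((s + 1 - m : ℕ)):ℝ)^m := by
        have : (1:ℝ) ≤ (((s + 1 - m : ℕ)):ℝ) := by exact_mod_cast hsm
        positivity
      rw [le_div_iff₀ hdenpos]
      have := tail_bound_nat hm0 hn2 hs.2.le
      calc ((G s : ℕ):ℝ) * ((n:ℝ) * (((s + 1 - m : ℕ)):ℝ)^m)
          = ((G s * (n * (s + 1 - m)^m) : ℕ) : ℝ) := by push_cast; ring
        _ ≤ (((m*n:ℕ))^m * S0 : ℕ) := by exact_mod_cast this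
    have hsum2 : ∑ s ∈ Finset.Ico t₀ (m*n), ((G s : ℕ):ℝ)
        ≤ ∑ s ∈ Finset.Ico t₀ (m*n),
            ((((m*n:ℕ))^m * S0 : ℕ) : ℝ) * (1 / ((n:ℝ) * (((s + 1 - m : ℕ)):ℝ)^m)) := by
      apply Finset.sum_le_sum
      intro s hs
      rw [mul_one_div]
      exact hterm s hs
    have hreindex : ∑ s ∈ Finset.Ico t₀ (m*n), (1:ℝ) / (((s + 1 - m : ℕ)):ℝ)^m
        = ∑ j ∈ Finset.Ico (c+2) (m*n - (2*m-2)), (1:ℝ) / ((j:ℝ) + (m:ℝ) - 1)^m := by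
      have hmap : Finset.Ico t₀ (m*n)
          = (Finset.Ico (c+2) (m*n - (2*m-2))).map (addRightEmbedding (2*m-2)) := by
        rw [Finset.map_add_right_Ico]
        congr 1 <;> omega
      rw [hmap, Finset.sum_map]
      apply Finset.sum_congr rfl
      intro j hj
      rw [Finset.mem_Ico] at hj
      have h1 : addRightEmbedding (2*m-2) j = j + (2*m-2) := rfl
      rw [h1]
      have h2 : j + (2*m-2) + 1 - m = j + (m - 1) := by omega
      rw [h2]
      congr 2
      push_cast [Nat.cast_sub (by omega : 1 ≤ m)]
      ring
    have htele := tail_sum hm (c+2) (m*n - (2*m-2)) (by omega)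
    -- assemble
    have hC : (((((m*n:ℕ))^m * S0 : ℕ)) : ℝ) = (m:ℝ)^m * (n:ℝ)^m * (S0:ℝ) := by
      push_cast; ring
    have hsum3 : ∑ s ∈ Finset.Ico t₀ (m*n),
          ((((m*n:ℕ))^m * S0 : ℕ) : ℝ) * (1 / ((n:ℝ) * (((s + 1 - m : ℕ)):ℝ)^m))
        = ((m:ℝ)^m * (n:ℝ)^m * (S0:ℝ) / (n:ℝ)) *
            ∑ s ∈ Finset.Ico t₀ (m*n), (1:ℝ) / (((s + 1 - m : ℕ)):ℝ)^m := by
      rw [Finset.mul_sum]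
      apply Finset.sum_congr rfl
      intro s _
      rw [hC]
      field_simp
    have hccx : x ≤ ((c+2:ℕ):ℝ) := by
      push_cast
      linarith
    have hm1R : (1:ℝ) ≤ (m:ℝ) - 1 := by linarith
    have hxmm : x ^ (m-1) * x = (n:ℝ) ^ (m - 1) := xpow_mul_x hm (by omega)
    have hfinal : ((m:ℝ)^m * (n:ℝ)^m * (S0:ℝ) / (n:ℝ)) *
          (1 / (((m:ℝ) - 1) * (((c+2:ℕ)):ℝ) ^ (m - 1))) ≤ (m:ℝ)^m * x * (S0:ℝ) := by
      have hD : (0:ℝ) < ((m:ℝ) - 1) * (((c+2:ℕ)):ℝ) ^ (m - 1) := by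
        have h1 : (0:ℝ) < (((c+2:ℕ)):ℝ) := lt_of_lt_of_le hxpos hccx
        have h2 : (0:ℝ) < (m:ℝ) - 1 := by linarith
        positivity
      rw [div_mul_div_comm, mul_one, div_le_iff₀ (by positivity)]
      have hcp : x ^ (m-1) ≤ (((c+2:ℕ)):ℝ) ^ (m - 1) := pow_le_pow_left₀ hxpos.le hccx _
      have hnm : (n:ℝ)^m = (n:ℝ) * (n:ℝ)^(m-1) := by
        conv_lhs => rw [show m = (m-1)+1 from by omega]
        rw [pow_succ]
        ring
      calc (m:ℝ)^m * (n:ℝ)^m * (S0:ℝ)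
          = ((m:ℝ)^m * (S0:ℝ) * (n:ℝ)) * (1 * ((n:ℝ)^(m-1))) := by rw [hnm]; ring
        _ ≤ ((m:ℝ)^m * (S0:ℝ) * (n:ℝ)) * (((m:ℝ)-1) * (x ^ (m-1) * x)) := by
            apply mul_le_mul_of_nonneg_left _ (by positivity)
            rw [hxmm]
            apply mul_le_mul_of_nonneg_right hm1R (by positivity)
        _ ≤ ((m:ℝ)^m * (S0:ℝ) * (n:ℝ)) * (((m:ℝ)-1) * ((((c+2:ℕ)):ℝ)^(m-1) * x)) := by
            apply mul_le_mul_of_nonneg_left _ (by positivity)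
            apply mul_le_mul_of_nonneg_left _ (by linarith)
            exact mul_le_mul_of_nonneg_right hcp hxpos.le
        _ = (m:ℝ)^m * x * (S0:ℝ) * ((n:ℝ) * (((m:ℝ) - 1) * (((c+2:ℕ)):ℝ) ^ (m - 1))) := by
            ring
    calc ∑ s ∈ Finset.Ico t₀ (m*n), ((G s : ℕ):ℝ)
        ≤ ∑ s ∈ Finset.Ico t₀ (m*n),
            ((((m*n:ℕ))^m * S0 : ℕ) : ℝ) * (1 / ((n:ℝ) * (((s + 1 - m : ℕ)):ℝ)^m)) := hsum2
      _ = ((m:ℝ)^m * (n:ℝ)^m * (S0:ℝ) / (n:ℝ)) *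
            ∑ s ∈ Finset.Ico t₀ (m*n), (1:ℝ) / (((s + 1 - m : ℕ)):ℝ)^m := hsum3
      _ = ((m:ℝ)^m * (n:ℝ)^m * (S0:ℝ) / (n:ℝ)) *
            ∑ j ∈ Finset.Ico (c+2) (m*n - (2*m-2)), (1:ℝ) / ((j:ℝ) + (m:ℝ) - 1)^m := by
          rw [hreindex]
      _ ≤ ((m:ℝ)^m * (n:ℝ)^m * (S0:ℝ) / (n:ℝ)) *
            (1 / (((m:ℝ) - 1) * (((c+2:ℕ)):ℝ) ^ (m - 1))) := by
          apply mul_le_mul_of_nonneg_left _ (by positivity)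
          exact_mod_cast htele
      _ ≤ (m:ℝ)^m * x * (S0:ℝ) := hfinal
  -- combine
  have ht₀R : (t₀:ℝ) ≤ x + 1 + 2*(m:ℝ) := by
    rw [ht₀]
    push_cast
    linarith
  rw [hcast, hsplit]
  have hfin : (t₀:ℝ) * (S0:ℝ) + (m:ℝ)^m * x * (S0:ℝ)
      ≤ ((2:ℝ) + 2*(m:ℝ) + (m:ℝ)^m) * x * (S0:ℝ) := by
    have h1 : (t₀:ℝ) * (S0:ℝ) ≤ (x + 1 + 2*(m:ℝ)) * (S0:ℝ) :=
      mul_le_mul_of_nonneg_right ht₀R hS0nonneg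
    have h2 : (0:ℝ) ≤ (1 + 2*(m:ℝ)) * (x - 1) * (S0:ℝ) := by
      apply mul_nonneg _ hS0nonneg
      apply mul_nonneg (by linarith) (by linarith)
    nlinarith [h1, h2]
  calc ∑ s ∈ Finset.range t₀, ((G s : ℕ):ℝ) + ∑ s ∈ Finset.Ico t₀ (m*n), ((G s : ℕ):ℝ)
      ≤ (t₀:ℝ) * (S0:ℝ) + (m:ℝ)^m * x * (S0:ℝ) := add_le_add hhead htail
    _ ≤ ((2:ℝ) + 2*(m:ℝ) + (m:ℝ)^m) * x * (S0:ℝ) := hfin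

end Main


set_option maxHeartbeats 2000000 in
lemma lower_main (hm : 2 ≤ m) (hn : 64 * (m + 1) ≤ n) :
    (1/8 : ℝ) * (n:ℝ) ^ ((1:ℝ) - 1/(m:ℝ)) * ((wordFinset m n).card : ℝ)
      ≤ ∑ w ∈ wordFinset m n, (Tstat m n w : ℝ) := by
  classical
  have hm0 : 0 < m := by omega
  have hn0 : 0 < n := by omega
  have hnR : (1:ℝ) ≤ (n:ℝ) := by exact_mod_cast (by omega : 1 ≤ n)
  have hmR : (2:ℝ) ≤ (m:ℝ) := by exact_mod_cast hm
  set e : ℝ := (1:ℝ) - 1/(m:ℝ) with he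
  have heh : (1/2 : ℝ) ≤ e := by
    have h1 : 1/(m:ℝ) ≤ 1/2 := by
      apply one_div_le_one_div_of_le <;> linarith
    rw [he]; linarith
  set x : ℝ := (n:ℝ) ^ e with hx
  have hx8 : (8:ℝ) ≤ x := by
    have h64 : (64:ℝ) ≤ (n:ℝ) := by
      have : (64:ℕ) ≤ n := by omega
      exact_mod_cast this
    calc (8:ℝ) = (64:ℝ) ^ ((1:ℝ)/2) := by
          rw [show (64:ℝ) = 8^(2:ℕ) from by norm_num, ← Real.rpow_natCast (8:ℝ) 2,
            ← Real.rpow_mul (by norm_num)]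
          norm_num
      _ ≤ (n:ℝ) ^ ((1:ℝ)/2) := Real.rpow_le_rpow (by norm_num) h64 (by norm_num)
      _ ≤ (n:ℝ) ^ e := Real.rpow_le_rpow_of_exponent_le hnR (by linarith)
  have hxpos : (0:ℝ) < x := by linarith
  have hxn : x ≤ (n:ℝ) := by
    calc x ≤ (n:ℝ) ^ (1:ℝ) := Real.rpow_le_rpow_of_exponent_le hnR (by
        have : 0 < 1/(m:ℝ) := by positivity
        rw [he]; linarith)
      _ = (n:ℝ) := Real.rpow_one _
  set t₁ := ⌊x/2⌋₊ with ht₁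
  have hts : (t₁:ℝ) ≤ x/2 := Nat.floor_le (by positivity)
  have htlow : x/2 < (t₁:ℝ) + 1 := Nat.lt_floor_add_one _
  have ht₁n : t₁ ≤ n := by
    have : (t₁:ℝ) ≤ (n:ℝ) := by linarith
    exact_mod_cast this
  have htsN : t₁ ≤ m * n := le_trans ht₁n (by
    calc n = 1 * n := (one_mul n).symm
      _ ≤ m * n := Nat.mul_le_mul_right n hm0)
  have hmn : m ≤ m * n := by
    calc m = m * 1 := (mul_one m).symm
      _ ≤ m * n := Nat.mul_le_mul_left m hn0
  set i₀ : Fin n := ⟨0, hn0⟩ with hi₀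
  have hA₀ : (Ival m n m).card = m := card_Ival hmn
  set K := ((wordFinset m n).filter (fun w => pos m n w i₀ = Ival m n m)).card with hK
  set S0 := (wordFinset m n).card with hS0def
  set CN := (m * n).choose m with hCN
  set Ct := t₁.choose m with hCt
  have hS0 : S0 = CN * K := card_word i₀ hA₀
  set U := ((wordFinset m n).filter (fun w => Tstat m n w ≤ t₁)).card with hU
  have hU1 : U ≤ n * (Ct * K) := key_lower_count hn0 htsN i₀ hA₀
  -- half bound
  have h2 : 2 * (n:ℝ) * (Ct:ℝ) ≤ (CN:ℝ) := by
    have hfact : (0:ℝ) < (m.factorial : ℝ) := by exact_mod_cast m.factorial_pos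
    have hdF1 : ((m.factorial * Ct : ℕ):ℝ) ≤ (t₁:ℝ)^m := by
      have h := Nat.descFactorial_le_pow t₁ m
      rw [Nat.descFactorial_eq_factorial_mul_choose] at h
      exact_mod_cast h
    have hdF2 : ((n:ℝ))^m ≤ ((m.factorial * CN : ℕ):ℝ) := by
      have hkey : n + m ≤ m * n + 1 := by
        have h2n : 2*n ≤ m*n := Nat.mul_le_mul_right n hm
        omega
      have h1 : n ≤ m * n + 1 - m := by omega
      have h2 : n ^ m ≤ (m * n + 1 - m) ^ m := Nat.pow_le_pow_left h1 m
      have h3 := Nat.pow_sub_le_descFactorial (m * n) m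
      rw [Nat.descFactorial_eq_factorial_mul_choose] at h3
      exact_mod_cast le_trans h2 h3
    have htm : (t₁:ℝ)^m ≤ (x/2)^m := pow_le_pow_left₀ (Nat.cast_nonneg t₁) hts m
    have hxm : x ^ m = (n:ℝ) ^ (m-1) := xpow_m hm (by omega)
    have h2pow : (4:ℝ) ≤ 2^m := by
      calc (4:ℝ) = 2^(2:ℕ) := by norm_num
        _ ≤ 2^m := pow_le_pow_right₀ (by norm_num) hm
    have hnm : (n:ℝ)^m = (n:ℝ) * (n:ℝ)^(m-1) := by
      conv_lhs => rw [show m = (m-1)+1 from by omega]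
      rw [pow_succ]
      ring
    have hmain : (m.factorial:ℝ) * (2 * (n:ℝ) * (Ct:ℝ)) ≤ (m.factorial:ℝ) * (CN:ℝ) := by
      have h2pos : (0:ℝ) < 2^m := by positivity
      calc (m.factorial:ℝ) * (2 * (n:ℝ) * (Ct:ℝ))
          = 2 * (n:ℝ) * ((m.factorial * Ct : ℕ):ℝ) := by push_cast; ring
        _ ≤ 2 * (n:ℝ) * ((x/2)^m) := by
            apply mul_le_mul_of_nonneg_left (le_trans hdF1 htm) (by positivity)
        _ = 2 * (n:ℝ) * (x^m / 2^m) := by rw [div_pow]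
        _ = (2 / 2^m) * ((n:ℝ) * (n:ℝ)^(m-1)) := by rw [hxm]; ring
        _ ≤ 1 * ((n:ℝ) * (n:ℝ)^(m-1)) := by
            apply mul_le_mul_of_nonneg_right _ (by positivity)
            rw [div_le_one h2pos]
            linarith
        _ = (n:ℝ)^m := by rw [hnm]; ring
        _ ≤ ((m.factorial * CN : ℕ):ℝ) := hdF2
        _ = (m.factorial:ℝ) * (CN:ℝ) := by push_cast; ring
    exact le_of_mul_le_mul_left hmain hfact
  have hhalf : (U:ℝ) ≤ (S0:ℝ)/2 := by
    have hU1R : (U:ℝ) ≤ (n:ℝ) * ((Ct:ℝ) * (K:ℝ)) := by exact_mod_cast hU1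
    have hKnonneg : (0:ℝ) ≤ (K:ℝ) := Nat.cast_nonneg K
    have : (n:ℝ) * ((Ct:ℝ) * (K:ℝ)) ≤ (CN:ℝ)/2 * (K:ℝ) := by
      have := mul_le_mul_of_nonneg_right h2 hKnonneg
      nlinarith
    have hS0R : (S0:ℝ) = (CN:ℝ) * (K:ℝ) := by exact_mod_cast hS0
    rw [hS0R]
    linarith
  -- sum bound
  have hGge : ∀ s, s < t₁ → (S0:ℝ) - (U:ℝ)
      ≤ (((wordFinset m n).filter (fun w => s < Tstat m n w)).card : ℝ) := by
    intro s hs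
    have hsplit := GU_split (m := m) (n := n) s
    have hUs : ((wordFinset m n).filter (fun w => Tstat m n w ≤ s)).card ≤ U := by
      apply Finset.card_le_card
      intro w hw
      rw [Finset.mem_filter] at hw ⊢
      exact ⟨hw.1, le_trans hw.2 (le_of_lt hs)⟩
    have h1 : S0 ≤ ((wordFinset m n).filter (fun w => s < Tstat m n w)).card + U := by
      omega
    have := (Nat.cast_le (α := ℝ)).mpr h1
    push_cast at this
    linarith
  have hsum : (t₁:ℝ) * ((S0:ℝ)/2) ≤ ∑ w ∈ wordFinset m n, (Tstat m n w : ℝ) := by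
    have hcast : (∑ w ∈ wordFinset m n, (Tstat m n w : ℝ))
        = ∑ s ∈ Finset.range (m*n), ((((wordFinset m n).filter
            (fun w => s < Tstat m n w)).card : ℕ):ℝ) := by
      rw [← Nat.cast_sum, sum_T_eq hn0, Nat.cast_sum]
    rw [hcast]
    calc (t₁:ℝ) * ((S0:ℝ)/2)
        ≤ (t₁:ℝ) * ((S0:ℝ) - (U:ℝ)) := by
          apply mul_le_mul_of_nonneg_left (by linarith) (Nat.cast_nonneg t₁)
      _ = ∑ _s ∈ Finset.range t₁, ((S0:ℝ) - (U:ℝ)) := by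
          rw [Finset.sum_const, Finset.card_range]; simp
      _ ≤ ∑ s ∈ Finset.range t₁, ((((wordFinset m n).filter
            (fun w => s < Tstat m n w)).card : ℕ):ℝ) := by
          apply Finset.sum_le_sum
          intro s hs
          rw [Finset.mem_range] at hs
          exact hGge s hs
      _ ≤ ∑ s ∈ Finset.range (m*n), ((((wordFinset m n).filter
            (fun w => s < Tstat m n w)).card : ℕ):ℝ) := by
          apply Finset.sum_le_sum_of_subset_of_nonneg
            (Finset.range_subset_range.mpr htsN)
          intro s _ _
          positivity
  -- conclude
  have ht₁x : x/4 ≤ (t₁:ℝ) := by linarith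
  have hS0nonneg : (0:ℝ) ≤ (S0:ℝ) := Nat.cast_nonneg S0
  calc (1/8 : ℝ) * x * (S0:ℝ) = (x/4) * ((S0:ℝ)/2) := by ring
    _ ≤ (t₁:ℝ) * ((S0:ℝ)/2) := by
        apply mul_le_mul_of_nonneg_right ht₁x (by positivity)
    _ ≤ ∑ w ∈ wordFinset m n, (Tstat m n w : ℝ) := hsum

end BDay

theorem stmt_14 (m : ℕ) (hm : 2 ≤ m) :
    ∃ c₁ c₂ : ℝ, 0 < c₁ ∧ 0 < c₂ ∧ ∃ n₀ : ℕ, ∀ n : ℕ, n₀ ≤ n →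
      c₁ * (n : ℝ) ^ ((1 : ℝ) - 1 / m) ≤
          (∑ w ∈ wordFinset m n, (Tstat m n w : ℝ)) / ((wordFinset m n).card : ℝ) ∧
      (∑ w ∈ wordFinset m n, (Tstat m n w : ℝ)) / ((wordFinset m n).card : ℝ) ≤
          c₂ * (n : ℝ) ^ ((1 : ℝ) - 1 / m) := by
  refine ⟨1/8, (2:ℝ) + 2*(m:ℝ) + (m:ℝ)^m, by norm_num, by positivity, 64*(m+1), ?_⟩
  intro n hn
  have hm0 : 0 < m := by omega
  have hn0 : 0 < n := by omega
  have hS0pos : (0:ℝ) < ((wordFinset m n).card : ℝ) := by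
    exact_mod_cast Finset.card_pos.mpr (BDay.word_nonempty hm0 hn0)
  constructor
  · rw [le_div_iff₀ hS0pos]
    calc (1/8 : ℝ) * (n : ℝ) ^ ((1 : ℝ) - 1 / m) * ((wordFinset m n).card : ℝ)
        ≤ ∑ w ∈ wordFinset m n, (Tstat m n w : ℝ) := BDay.lower_main hm hn
      _ = _ := rfl
  · rw [div_le_iff₀ hS0pos]
    exact BDay.upper_main hm hn
end

section
/- Fix m ≥ 1 and 1 ≤ j ≤ m. For a uniformly random π from S_{m,n}, let T_j be the smallest index t such that π_t is the j-th occurrence of some card type. Then for t = γ n^{1 - 1/j} with γ > 0 (γ may depend on n, with t a positive integer at most mn), we have Pr[T_j > t] ≥ 1 - C γ^j for some constant C depending only on m. -/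
/-- `Tj m n j w` is the smallest index `t` (1-indexed) such that among the first `t`
letters of `w` some letter appears `j` times. -/
noncomputable def Tj (m n j : ℕ) (w : Fin (m * n) → Fin n) : ℕ :=
  sInf {t : ℕ | ∃ i : Fin n,
    j ≤ (Finset.univ.filter (fun p : Fin (m * n) => (p : ℕ) < t ∧ w p = i)).card}

open Finset

/-- Composing with a permutation of positions preserves membership in `wordFinset`. -/
lemma perm_mem_wordFinset {m n : ℕ} (σ : Equiv.Perm (Fin (m * n)))
    {w : Fin (m * n) → Fin n} (hw : w ∈ wordFinset m n) :
    (fun p => w (σ p)) ∈ wordFinset m n := by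
  simp only [wordFinset, Finset.mem_filter, Finset.mem_univ, true_and] at hw ⊢
  intro i
  refine Eq.trans ?_ (hw i)
  apply Finset.card_bij (fun p _ => σ p)
  · intro a ha
    simp only [Finset.mem_filter, Finset.mem_univ, true_and] at ha ⊢
    exact ha
  · intro a _ b _ h
    exact σ.injective h
  · intro b hb
    simp only [Finset.mem_filter, Finset.mem_univ, true_and] at hb ⊢
    exact ⟨σ.symm b, by simpa using hb, by simp⟩

/-- The number of words constant equal to `i` on a set `A` of positions depends only on
the cardinality of `A`. -/
lemma card_constrained_eq {m n j : ℕ} (i : Fin n) (A B : Finset (Fin (m * n)))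
    (hA : A.card = j) (hB : B.card = j) :
    ((wordFinset m n).filter (fun w => ∀ p ∈ A, w p = i)).card =
      ((wordFinset m n).filter (fun w => ∀ p ∈ B, w p = i)).card := by
  classical
  have e : {x // x ∈ A} ≃ {x // x ∈ B} := Finset.equivOfCardEq (hA.trans hB.symm)
  set σ : Equiv.Perm (Fin (m * n)) := Equiv.extendSubtype e with hσ
  have hAB : ∀ p ∈ A, σ p ∈ B := fun p hp => Equiv.extendSubtype_mem e p hp
  have himg : A.image σ = B := by
    apply Finset.eq_of_subset_of_card_le
    · intro q hq
      obtain ⟨p, hp, rfl⟩ := Finset.mem_image.mp hq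
      exact hAB p hp
    · rw [Finset.card_image_of_injective _ σ.injective, hA, hB]
  have hBA : ∀ q ∈ B, σ.symm q ∈ A := by
    intro q hq
    rw [← himg] at hq
    obtain ⟨p, hp, rfl⟩ := Finset.mem_image.mp hq
    simpa using hp
  symm
  apply Finset.card_bij' (fun w _ => fun p => w (σ p)) (fun w _ => fun p => w (σ.symm p))
  · intro w hw
    simp only [Finset.mem_filter] at hw ⊢
    refine ⟨perm_mem_wordFinset σ hw.1, fun p hp => hw.2 _ (hAB p hp)⟩
  · intro w hw
    simp only [Finset.mem_filter] at hw ⊢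
    refine ⟨perm_mem_wordFinset σ.symm hw.1, fun q hq => hw.2 _ (hBA q hq)⟩
  · intro w _; funext p; simp
  · intro w _; funext p; simp

/-- Exact count: `C(mn, j) * #{w ∈ W : w ≡ i on A} = #W * C(m, j)` for `#A = j`. -/
lemma key_count {m n j : ℕ} (i : Fin n) (A : Finset (Fin (m * n))) (hA : A.card = j) :
    (m * n).choose j * ((wordFinset m n).filter (fun w => ∀ p ∈ A, w p = i)).card
      = (wordFinset m n).card * m.choose j := by
  classical
  have h1 : ∑ B ∈ Finset.powersetCard j (Finset.univ : Finset (Fin (m * n))),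
      ((wordFinset m n).filter (fun w => ∀ p ∈ B, w p = i)).card
      = (m * n).choose j *
        ((wordFinset m n).filter (fun w => ∀ p ∈ A, w p = i)).card := by
    rw [Finset.sum_congr rfl
      (fun B hB => card_constrained_eq i B A (Finset.mem_powersetCard.mp hB).2 hA)]
    simp [Finset.card_powersetCard]
  have h2 : ∑ B ∈ Finset.powersetCard j (Finset.univ : Finset (Fin (m * n))),
      ((wordFinset m n).filter (fun w => ∀ p ∈ B, w p = i)).card
      = (wordFinset m n).card * m.choose j := by
    have hinner : ∀ w ∈ wordFinset m n,
        (∑ B ∈ Finset.powersetCard j (Finset.univ : Finset (Fin (m * n))),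
          if (∀ p ∈ B, w p = i) then (1 : ℕ) else 0) = m.choose j := by
      intro w hw
      rw [← Finset.card_filter]
      have hset : (Finset.powersetCard j (Finset.univ : Finset (Fin (m * n)))).filter
          (fun B => ∀ p ∈ B, w p = i)
          = Finset.powersetCard j (Finset.univ.filter (fun p => w p = i)) := by
        ext B
        simp only [Finset.mem_filter, Finset.mem_powersetCard, Finset.subset_iff,
          Finset.mem_univ, true_and, Finset.mem_filter]
        tauto
      rw [hset, Finset.card_powersetCard]
      have hw' : (Finset.univ.filter (fun p => w p = i)).card = m := by
        simp only [wordFinset, Finset.mem_filter, Finset.mem_univ, true_and] at hw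
        exact hw i
      rw [hw']
    calc ∑ B ∈ Finset.powersetCard j (Finset.univ : Finset (Fin (m * n))),
          ((wordFinset m n).filter (fun w => ∀ p ∈ B, w p = i)).card
        = ∑ B ∈ Finset.powersetCard j (Finset.univ : Finset (Fin (m * n))),
            ∑ w ∈ wordFinset m n, if (∀ p ∈ B, w p = i) then 1 else 0 := by
          refine Finset.sum_congr rfl (fun B _ => ?_)
          rw [Finset.card_filter]
      _ = ∑ w ∈ wordFinset m n,
            ∑ B ∈ Finset.powersetCard j (Finset.univ : Finset (Fin (m * n))),
              if (∀ p ∈ B, w p = i) then 1 else 0 := Finset.sum_comm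
      _ = ∑ w ∈ wordFinset m n, m.choose j := Finset.sum_congr rfl hinner
      _ = (wordFinset m n).card * m.choose j := by rw [Finset.sum_const, smul_eq_mul]
  rw [← h1, h2]

/-- Union bound for the "bad" event. -/
lemma bad_le {m n j t : ℕ} (ht : t ≤ m * n) :
    ((wordFinset m n).filter (fun w => ∃ i : Fin n,
        j ≤ (Finset.univ.filter
          (fun p : Fin (m * n) => (p : ℕ) < t ∧ w p = i)).card)).card
      * (m * n).choose j
    ≤ n * t.choose j * ((wordFinset m n).card * m.choose j) := by
  classical
  set T : Finset (Fin (m * n)) := Finset.univ.filter (fun p => (p : ℕ) < t) with hT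
  have hTcard : T.card = t := by
    rw [← Finset.card_range t]
    refine Finset.card_bij' (fun (p : Fin (m * n)) (_ : p ∈ T) => (p : ℕ))
      (fun k hk => (⟨k, lt_of_lt_of_le (Finset.mem_range.mp hk) ht⟩ : Fin (m * n)))
      ?_ ?_ ?_ ?_
    · intro p hp
      rw [hT, Finset.mem_filter] at hp
      exact Finset.mem_range.mpr hp.2
    · intro k hk
      rw [hT, Finset.mem_filter]
      exact ⟨Finset.mem_univ _, Finset.mem_range.mp hk⟩
    · intro p _; simp
    · intro k _; simp
  set P : Finset (Fin n × Finset (Fin (m * n))) :=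
    (Finset.univ : Finset (Fin n)) ×ˢ Finset.powersetCard j T with hP
  set g : Fin n × Finset (Fin (m * n)) → Finset (Fin (m * n) → Fin n) :=
    fun x => (wordFinset m n).filter (fun w => ∀ p ∈ x.2, w p = x.1) with hg
  have hsub : (wordFinset m n).filter (fun w => ∃ i : Fin n,
      j ≤ (Finset.univ.filter
        (fun p : Fin (m * n) => (p : ℕ) < t ∧ w p = i)).card) ⊆ P.biUnion g := by
    intro w hw
    obtain ⟨hwW, i, hi⟩ := Finset.mem_filter.mp hw
    obtain ⟨A, hAsub, hAcard⟩ := Finset.exists_subset_card_eq hi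
    refine Finset.mem_biUnion.mpr ⟨(i, A), ?_, ?_⟩
    · refine Finset.mem_product.mpr ⟨Finset.mem_univ _, ?_⟩
      refine Finset.mem_powersetCard.mpr ⟨?_, hAcard⟩
      intro p hp
      have := hAsub hp
      simp only [Finset.mem_filter, Finset.mem_univ, true_and] at this
      simp only [hT, Finset.mem_filter, Finset.mem_univ, true_and]
      exact this.1
    · refine Finset.mem_filter.mpr ⟨hwW, fun p hp => ?_⟩
      have := hAsub hp
      simp only [Finset.mem_filter, Finset.mem_univ, true_and] at this
      exact this.2
  calc ((wordFinset m n).filter (fun w => ∃ i : Fin n,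
        j ≤ (Finset.univ.filter
          (fun p : Fin (m * n) => (p : ℕ) < t ∧ w p = i)).card)).card * (m * n).choose j
      ≤ (∑ x ∈ P, (g x).card) * (m * n).choose j := by
        exact Nat.mul_le_mul_right _
          ((Finset.card_le_card hsub).trans (Finset.card_biUnion_le))
    _ = ∑ x ∈ P, (m * n).choose j * (g x).card := by
        rw [Finset.sum_mul]
        exact Finset.sum_congr rfl (fun x _ => mul_comm _ _)
    _ = ∑ x ∈ P, (wordFinset m n).card * m.choose j := by
        refine Finset.sum_congr rfl (fun x hx => ?_)
        have hx2 := (Finset.mem_product.mp hx).2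
        exact key_count x.1 x.2 (Finset.mem_powersetCard.mp hx2).2
    _ = P.card * ((wordFinset m n).card * m.choose j) := by
        rw [Finset.sum_const, smul_eq_mul]
    _ = n * t.choose j * ((wordFinset m n).card * m.choose j) := by
        rw [hP, Finset.card_product, Finset.card_powersetCard, hTcard,
          Finset.card_univ, Fintype.card_fin]

/-- `wordFinset` is nonempty. -/
lemma wordFinset_card_pos {m n : ℕ} (hm : 1 ≤ m) : 0 < (wordFinset m n).card := by
  rw [Finset.card_pos]
  refine ⟨fun p => ⟨(p : ℕ) / m, ?_⟩, ?_⟩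
  · exact Nat.div_lt_of_lt_mul p.isLt
  · simp only [wordFinset, Finset.mem_filter, Finset.mem_univ, true_and]
    intro i
    have hbij : (Finset.univ.filter
        (fun p : Fin (m * n) => (⟨(p : ℕ) / m, Nat.div_lt_of_lt_mul p.isLt⟩ : Fin n) = i)).card
        = (Finset.range m).card := by
      refine Finset.card_bij' (fun (p : Fin (m * n)) _ => (p : ℕ) - m * (i : ℕ))
        (fun k hk => (⟨m * (i : ℕ) + k, by
          have h1 : (i : ℕ) + 1 ≤ n := i.isLt
          have h2 : k < m := Finset.mem_range.mp hk
          calc m * (i : ℕ) + k < m * (i : ℕ) + m := by omega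
            _ = m * ((i : ℕ) + 1) := by ring
            _ ≤ m * n := Nat.mul_le_mul_left m h1⟩ : Fin (m * n)))
        ?_ ?_ ?_ ?_
      · intro p hp
        simp only [Finset.mem_filter, Finset.mem_univ, true_and] at hp
        have hdiv : (p : ℕ) / m = (i : ℕ) := congrArg Fin.val hp
        have hle : m * (i : ℕ) ≤ (p : ℕ) := by rw [← hdiv]; exact Nat.mul_div_le _ _
        have hlt : (p : ℕ) < m * ((p : ℕ) / m + 1) := Nat.lt_mul_div_succ _ hm
        rw [hdiv] at hlt
        refine Finset.mem_range.mpr ?_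
        show (p : ℕ) - m * (i : ℕ) < m
        have hmul : m * ((i : ℕ) + 1) = m * (i : ℕ) + m := by ring
        omega
      · intro k hk
        simp only [Finset.mem_filter, Finset.mem_univ, true_and]
        apply Fin.ext
        show ((m * (i : ℕ) + k) / m) = (i : ℕ)
        rw [Nat.mul_add_div hm, Nat.div_eq_of_lt (Finset.mem_range.mp hk)]
        omega
      · intro p hp
        simp only [Finset.mem_filter, Finset.mem_univ, true_and] at hp
        have hdiv : (p : ℕ) / m = (i : ℕ) := congrArg Fin.val hp
        have hle : m * (i : ℕ) ≤ (p : ℕ) := by rw [← hdiv]; exact Nat.mul_div_le _ _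
        apply Fin.ext
        show m * (i : ℕ) + ((p : ℕ) - m * (i : ℕ)) = (p : ℕ)
        omega
      · intro k hk
        show (m * (i : ℕ) + k) - m * (i : ℕ) = k
        omega
    rw [hbij, Finset.card_range]

/-- Characterization of `t < Tj`. -/
lemma Tj_gt_iff {m n j : ℕ} (hm : 1 ≤ m) (hjm : j ≤ m) (hn : 1 ≤ n)
    {w : Fin (m * n) → Fin n} (hw : w ∈ wordFinset m n) (t : ℕ) :
    t < Tj m n j w ↔
      ¬ ∃ i : Fin n, j ≤ (Finset.univ.filter
        (fun p : Fin (m * n) => (p : ℕ) < t ∧ w p = i)).card := by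
  classical
  set S : Set ℕ := {t : ℕ | ∃ i : Fin n,
    j ≤ (Finset.univ.filter (fun p : Fin (m * n) => (p : ℕ) < t ∧ w p = i)).card} with hS
  have hup : ∀ {s u : ℕ}, s ≤ u → s ∈ S → u ∈ S := by
    rintro s u hsu ⟨i, hi⟩
    refine ⟨i, hi.trans (Finset.card_le_card ?_)⟩
    intro p hp
    simp only [Finset.mem_filter, Finset.mem_univ, true_and] at hp ⊢
    exact ⟨lt_of_lt_of_le hp.1 hsu, hp.2⟩
  have hne : (m * n) ∈ S := by
    refine ⟨⟨0, hn⟩, ?_⟩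
    have : Finset.univ.filter
        (fun p : Fin (m * n) => (p : ℕ) < m * n ∧ w p = ⟨0, hn⟩)
        = Finset.univ.filter (fun p : Fin (m * n) => w p = ⟨0, hn⟩) := by
      refine Finset.filter_congr (fun p _ => ?_)
      simp [p.isLt]
    rw [this]
    have hw' : (Finset.univ.filter (fun p => w p = (⟨0, hn⟩ : Fin n))).card = m := by
      simp only [wordFinset, Finset.mem_filter, Finset.mem_univ, true_and] at hw
      exact hw _
    rw [hw']
    exact hjm
  constructor
  · intro h hc
    exact absurd (Nat.sInf_le hc) (not_le.mpr h)
  · intro h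
    by_contra hle
    push_neg at hle
    have hmem : Tj m n j w ∈ S := Nat.sInf_mem ⟨m * n, hne⟩
    exact h (hup hle hmem)

/-- The main natural-number inequality. -/
lemma nat_main {m n j t : ℕ} (hm : 1 ≤ m) (hjm : j ≤ m) (hn : 2 ≤ n) :
    n ^ j * (t.choose j * m.choose j) ≤ 2 ^ m * (t ^ j * (m * n).choose j) := by
  have hfac : 0 < j.factorial := Nat.factorial_pos j
  have key1 : n * m ≤ 2 * (m * (n - 1)) := by
    calc n * m = m * n := mul_comm _ _
      _ ≤ m * (2 * (n - 1)) := Nat.mul_le_mul_left m (by omega)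
      _ = 2 * (m * (n - 1)) := by ring
  have key2 : m * (n - 1) ≤ m * n + 1 - j := by
    have hsum : m * (n - 1) + m = m * n := by
      obtain ⟨n', rfl⟩ : ∃ n', n = n' + 1 := ⟨n - 1, by omega⟩
      simp [Nat.mul_add]
    generalize hA : m * (n - 1) = A at *
    generalize hB : m * n = B at *
    omega
  have keymain : (n * m) ^ j ≤ 2 ^ m * (m * n).descFactorial j := by
    calc (n * m) ^ j ≤ (2 * (m * (n - 1))) ^ j := Nat.pow_le_pow_left key1 j
      _ = 2 ^ j * (m * (n - 1)) ^ j := mul_pow _ _ _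
      _ ≤ 2 ^ m * (m * n + 1 - j) ^ j :=
          Nat.mul_le_mul (Nat.pow_le_pow_right (by norm_num) hjm)
            (Nat.pow_le_pow_left key2 j)
      _ ≤ 2 ^ m * (m * n).descFactorial j :=
          Nat.mul_le_mul_left _ (Nat.pow_sub_le_descFactorial (m * n) j)
  refine Nat.le_of_mul_le_mul_right ?_ hfac
  calc n ^ j * (t.choose j * m.choose j) * j.factorial
      = t.choose j * (n ^ j * (j.factorial * m.choose j)) := by ring
    _ = t.choose j * (n ^ j * m.descFactorial j) := by
        rw [Nat.descFactorial_eq_factorial_mul_choose]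
    _ ≤ t ^ j * (n ^ j * m ^ j) :=
        Nat.mul_le_mul (Nat.choose_le_pow _ _)
          (Nat.mul_le_mul_left _ (Nat.descFactorial_le_pow _ _))
    _ = t ^ j * (n * m) ^ j := by rw [mul_pow]
    _ ≤ t ^ j * (2 ^ m * (m * n).descFactorial j) := Nat.mul_le_mul_left _ keymain
    _ = 2 ^ m * (t ^ j * (j.factorial * (m * n).choose j)) := by
        rw [← Nat.descFactorial_eq_factorial_mul_choose]; ring
    _ = 2 ^ m * (t ^ j * (m * n).choose j) * j.factorial := by ring

theorem stmt_15 (m j : ℕ) (hm : 1 ≤ m) (hj1 : 1 ≤ j) (hjm : j ≤ m) :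
    ∃ C : ℝ, 0 < C ∧ ∃ n₀ : ℕ, ∀ n : ℕ, n₀ ≤ n → ∀ γ : ℝ, 0 < γ → ∀ t : ℕ,
      1 ≤ t → t ≤ m * n → (t : ℝ) = γ * (n : ℝ) ^ ((1 : ℝ) - 1 / j) →
      1 - C * γ ^ j ≤
        (((wordFinset m n).filter (fun w => t < Tj m n j w)).card : ℝ) /
          ((wordFinset m n).card : ℝ) := by
  classical
  refine ⟨2 ^ m, by positivity, 2, fun n hn γ hγ t ht1 ht2 htγ => ?_⟩
  have hn1 : 1 ≤ n := by omega
  have hWpos : 0 < (wordFinset m n).card := wordFinset_card_pos hm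
  set W := wordFinset m n with hWdef
  set bad := W.filter (fun w => ∃ i : Fin n,
      j ≤ (Finset.univ.filter
        (fun p : Fin (m * n) => (p : ℕ) < t ∧ w p = i)).card) with hbaddef
  -- good set equals complement of bad in W
  have hgood : W.filter (fun w => t < Tj m n j w) = W \ bad := by
    rw [hbaddef, ← Finset.filter_not]
    exact Finset.filter_congr (fun w hw => Tj_gt_iff hm hjm hn1 hw t)
  -- nat bound on bad
  have hchoosepos : 0 < (m * n).choose j := Nat.choose_pos (by
    calc j ≤ m := hjm
      _ = m * 1 := (mul_one m).symm
      _ ≤ m * n := Nat.mul_le_mul_left m hn1)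
  have hbad1 : bad.card * (m * n).choose j
      ≤ n * t.choose j * (W.card * m.choose j) := bad_le ht2
  have hbadnat : bad.card * n ^ j ≤ 2 ^ m * t ^ j * (n * W.card) := by
    refine Nat.le_of_mul_le_mul_right ?_ hchoosepos
    calc bad.card * n ^ j * (m * n).choose j
        = n ^ j * (bad.card * (m * n).choose j) := by ring
      _ ≤ n ^ j * (n * t.choose j * (W.card * m.choose j)) :=
          Nat.mul_le_mul_left _ hbad1
      _ = n * W.card * (n ^ j * (t.choose j * m.choose j)) := by ring
      _ ≤ n * W.card * (2 ^ m * (t ^ j * (m * n).choose j)) :=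
          Nat.mul_le_mul_left _ (nat_main hm hjm hn)
      _ = 2 ^ m * t ^ j * (n * W.card) * (m * n).choose j := by ring
  -- real versions
  have hWR : (0 : ℝ) < (W.card : ℝ) := by exact_mod_cast hWpos
  have hnR : (0 : ℝ) < (n : ℝ) := by exact_mod_cast (by omega : 0 < n)
  have hjR : ((j : ℝ)) ≠ 0 := by exact_mod_cast (by omega : j ≠ 0)
  -- t^j = γ^j * n^(j-1)
  have htpow : ((t : ℝ)) ^ j = γ ^ j * (n : ℝ) ^ (j - 1) := by
    rw [htγ, mul_pow]
    congr 1
    have hjj : ((1 : ℝ) - 1 / j) * j = ((j - 1 : ℕ) : ℝ) := by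
      push_cast [Nat.cast_sub hj1]
      field_simp
    rw [← Real.rpow_natCast ((n : ℝ) ^ ((1 : ℝ) - 1 / j)) j,
      ← Real.rpow_mul (le_of_lt hnR), hjj, Real.rpow_natCast]
  -- bad/W ≤ 2^m γ^j
  have hbadR : (bad.card : ℝ) ≤ 2 ^ m * γ ^ j * (W.card : ℝ) := by
    have h1 : (bad.card : ℝ) * (n : ℝ) ^ j
        ≤ 2 ^ m * (t : ℝ) ^ j * ((n : ℝ) * (W.card : ℝ)) := by
      exact_mod_cast hbadnat
    have h2 : 2 ^ m * (t : ℝ) ^ j * ((n : ℝ) * (W.card : ℝ))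
        = (2 ^ m * γ ^ j * (W.card : ℝ)) * (n : ℝ) ^ j := by
      rw [htpow]
      have hnj : (n : ℝ) ^ (j - 1) * (n : ℝ) = (n : ℝ) ^ j := by
        rw [← pow_succ]
        congr 1
        omega
      calc 2 ^ m * (γ ^ j * (n : ℝ) ^ (j - 1)) * ((n : ℝ) * (W.card : ℝ))
          = 2 ^ m * γ ^ j * (W.card : ℝ) * ((n : ℝ) ^ (j - 1) * (n : ℝ)) := by ring
        _ = (2 ^ m * γ ^ j * (W.card : ℝ)) * (n : ℝ) ^ j := by rw [hnj]
    rw [h2] at h1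
    exact le_of_mul_le_mul_right h1 (by positivity)
  -- conclude
  have hbadsub : bad ⊆ W := Finset.filter_subset _ _
  have hcard : (((W.filter (fun w => t < Tj m n j w)).card : ℝ))
      = (W.card : ℝ) - (bad.card : ℝ) := by
    rw [hgood, Finset.card_sdiff_of_subset hbadsub]
    exact_mod_cast Nat.cast_sub (Finset.card_le_card hbadsub)
  rw [hcard]
  rw [sub_div, div_self (ne_of_gt hWR)]
  have : (bad.card : ℝ) / (W.card : ℝ) ≤ 2 ^ m * γ ^ j := by
    rw [div_le_iff₀ hWR]
    exact hbadR
  linarith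
end

section
/- Consider the partial feedback card guessing game with deck S_{m,n}: a uniformly random π ∈ S_{m,n} is drawn, and at each step t the guesser guesses a card type and is told only whether the guess was correct (i.e., whether the guess equals π_t). For any history h_{t-1} of guesses and correct/incorrect feedback up to time t-1 with positive probability, and any card type i ∈ {1, ..., n}, we have Pr[π_t = i | H_{t-1} = h_{t-1}] ≤ m_i(h_{t-1}) / (mn - a_i(h_{t-1}) - Y(h_{t-1})), provided the denominator is positive. -/
/-- Given a (deterministic adaptive) strategy `G` mapping feedback histories to guesses,
`guessesOf n G y` is the sequence of guesses made when the feedback received is `y`. -/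
def guessesOf (n : ℕ) (G : List Bool → Fin n) (y : List Bool) : List (Fin n) :=
  (List.range y.length).map (fun s => G (y.take s))

/-- `fb m n G w t` is the list of feedback bits received during the first `t` steps of the
partial feedback game when the deck is `w` and the guesser plays strategy `G`. -/
def fb (m n : ℕ) (G : List Bool → Fin n) (w : Fin (m * n) → Fin n) : ℕ → List Bool
  | 0 => []
  | t + 1 =>
    fb m n G w t ++ [if h : t < m * n then decide (w ⟨t, h⟩ = G (fb m n G w t)) else true]

lemma fb_length (m n : ℕ) (G : List Bool → Fin n) (w : Fin (m * n) → Fin n) (t : ℕ) :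
    (fb m n G w t).length = t := by
  induction t with
  | zero => rfl
  | succ t ih => simp [fb, ih]

lemma fb_take (m n : ℕ) (G : List Bool → Fin n) (w : Fin (m * n) → Fin n) {s t : ℕ}
    (h : s ≤ t) : (fb m n G w t).take s = fb m n G w s := by
  induction t with
  | zero => simp at h; subst h; rfl
  | succ t ih =>
      rcases Nat.lt_or_ge s (t+1) with h'|h'
      · rw [fb, List.take_append_of_le_length (by rw [fb_length]; omega)]
        exact ih (by omega)
      · have : s = t + 1 := by omega
        subst this
        rw [List.take_of_length_le (by rw [fb_length])]

lemma fb_getD (m n : ℕ) (G : List Bool → Fin n) (w : Fin (m * n) → Fin n) {s t : ℕ}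
    (hs : s < t) (ht : t ≤ m * n) :
    (fb m n G w t).getD s false =
      decide (w ⟨s, by omega⟩ = G (fb m n G w s)) := by
  induction t with
  | zero => omega
  | succ t ih =>
      rcases Nat.lt_or_ge s t with h'|h'
      · rw [fb, List.getD_append _ _ _ _ (by simpa [fb_length] using h')]
        exact ih h' (by omega)
      · have hst : s = t := by omega
        subst hst
        rw [fb]
        rw [dif_pos (by omega)]
        rw [List.getD_eq_getElem _ _ (by simp [fb_length])]
        rw [List.getElem_append_right (by rw [fb_length])]
        simp [fb_length]

lemma fb_ext (m n : ℕ) (G : List Bool → Fin n) (w : Fin (m * n) → Fin n) (y : List Bool)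
    (hT : y.length ≤ m * n)
    (h : ∀ s (hs : s < y.length),
      y.getD s false = decide (w ⟨s, by omega⟩ = G (y.take s))) :
    fb m n G w y.length = y := by
  suffices H : ∀ u ≤ y.length, fb m n G w u = y.take u by
    have := H y.length le_rfl
    simpa using this
  intro u hu
  induction u with
  | zero => simp [fb]
  | succ u ih =>
      have hu' : u < y.length := by omega
      rw [fb, ih (by omega), dif_pos (by omega)]
      have hy : y.take (u+1) = y.take u ++ [y.getD u false] := by
        rw [List.getD_eq_getElem _ _ hu', ← List.take_concat_get hu']
        simp [List.concat_eq_append]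
      rw [hy, h u hu']

lemma fb_char (m n : ℕ) (G : List Bool → Fin n) (w : Fin (m * n) → Fin n) (y : List Bool)
    (hT : y.length ≤ m * n) (hw : fb m n G w y.length = y) :
    ∀ s (hs : s < y.length),
      y.getD s false = decide (w ⟨s, by omega⟩ = G (y.take s)) := by
  intro s hs
  have h1 : (fb m n G w y.length).getD s false
      = decide (w ⟨s, by omega⟩ = G (fb m n G w s)) := fb_getD m n G w hs hT
  have h2 : fb m n G w s = y.take s := by
    rw [← hw, fb_take m n G w (le_of_lt hs)]
  rw [hw] at h1
  rw [h1, h2]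

lemma countP_eq_card {α : Type*} (l : List α) (d : α) (p : α → Bool) :
    l.countP p = (Finset.univ.filter (fun s : Fin l.length => p (l.getD s.val d) = true)).card := by
  induction l with
  | nil => simp
  | cons a l ih =>
      rw [List.countP_cons, ih, Finset.card_filter, Finset.card_filter]
      rw [show (a :: l).length = l.length + 1 from rfl, Fin.sum_univ_succ]
      simp only [List.getD_cons_zero, List.getD_cons_succ, Fin.val_succ, Fin.val_zero]
      omega

lemma mem_wordFinset {m n : ℕ} {w : Fin (m * n) → Fin n} :
    w ∈ wordFinset m n ↔
      ∀ j : Fin n, (Finset.univ.filter (fun p => w p = j)).card = m := by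
  simp [wordFinset]

lemma wordFinset_comp (m n : ℕ) (w : Fin (m * n) → Fin n) (σ : Equiv.Perm (Fin (m * n)))
    (hw : w ∈ wordFinset m n) : (fun q => w (σ q)) ∈ wordFinset m n := by
  rw [mem_wordFinset] at *
  intro j
  have key : (Finset.univ.filter (fun p => w (σ p) = j)).card
      = (Finset.univ.filter (fun p => w p = j)).card := by
    apply Finset.card_bij' (fun p _ => σ p) (fun p _ => σ.symm p) <;> simp
  rw [key]; exact hw j

lemma main_count (m n : ℕ) (G : List Bool → Fin n) (y : List Bool) (i : Fin n)
    (hT : y.length < m * n) :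
    ((wordFinset m n).filter
        (fun w => fb m n G w y.length = y ∧ w ⟨y.length, hT⟩ = i)).card *
      (Finset.univ.filter (fun p : Fin (m * n) =>
        ¬(p.val < y.length ∧ (y.getD p.val false = true ∨ G (y.take p.val) = i)))).card
    ≤ ((wordFinset m n).filter (fun w => fb m n G w y.length = y)).card *
      (m - (Finset.univ.filter (fun p : Fin (m * n) =>
        p.val < y.length ∧ y.getD p.val false = true ∧ G (y.take p.val) = i)).card) := by
  classical
  set T := y.length with hTdef
  set pT : Fin (m * n) := ⟨T, hT⟩ with hpTdef
  set A : Finset (Fin (m * n) → Fin n) :=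
    (wordFinset m n).filter (fun w => fb m n G w T = y) with hA
  set W : Finset (Fin (m * n) → Fin n) :=
    (wordFinset m n).filter (fun w => fb m n G w T = y ∧ w pT = i) with hW
  set allowed : Finset (Fin (m * n)) :=
    Finset.univ.filter (fun p : Fin (m * n) =>
      ¬(p.val < T ∧ (y.getD p.val false = true ∨ G (y.take p.val) = i))) with hallowed
  set forbI : Finset (Fin (m * n)) :=
    Finset.univ.filter (fun p : Fin (m * n) =>
      p.val < T ∧ y.getD p.val false = true ∧ G (y.take p.val) = i) with hforbI
  -- basic membership facts
  have hWmem : ∀ w, w ∈ W ↔ w ∈ wordFinset m n ∧ fb m n G w T = y ∧ w pT = i := by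
    intro w; simp [hW, Finset.mem_filter, and_assoc]
  have hAmem : ∀ w, w ∈ A ↔ w ∈ wordFinset m n ∧ fb m n G w T = y := by
    intro w; simp [hA, Finset.mem_filter]
  have hWA : W ⊆ A := by
    intro w hw
    rw [hWmem] at hw; rw [hAmem]
    exact ⟨hw.1, hw.2.1⟩
  have fbfact : ∀ w ∈ A, ∀ s, ∀ hs : s < T,
      y.getD s false = decide (w ⟨s, by omega⟩ = G (y.take s)) := by
    intro w hw s hs
    exact fb_char m n G w y (le_of_lt hT) ((hAmem w).mp hw).2 s hs
  have cardi : ∀ w ∈ A, (Finset.univ.filter (fun p => w p = i)).card = m := by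
    intro w hw
    exact mem_wordFinset.mp ((hAmem w).mp hw).1 i
  have forbI_sub : ∀ w ∈ A, forbI ⊆ Finset.univ.filter (fun p => w p = i) := by
    intro w hw p hp
    simp only [hforbI, Finset.mem_filter, Finset.mem_univ, true_and] at hp ⊢
    obtain ⟨h1, h2, h3⟩ := hp
    have hfact := fbfact w hw p.val h1
    rw [h2] at hfact
    have h4 : w ⟨p.val, by omega⟩ = G (y.take p.val) := by
      have := hfact.symm
      simpa using this
    rw [Fin.eta] at h4
    rw [h4, h3]
  -- upper bound on allowed positions carrying letter i
  have keybound : ∀ w ∈ A, (allowed.filter (fun p => w p = i)).card ≤ m - forbI.card := by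
    intro w hw
    have hsub : allowed.filter (fun p => w p = i)
        ⊆ (Finset.univ.filter (fun p => w p = i)) \ forbI := by
      intro p hp
      rw [Finset.mem_filter] at hp
      rw [Finset.mem_sdiff]
      refine ⟨by simp [hp.2], ?_⟩
      intro hpf
      have hp1 := hp.1
      simp only [hallowed, Finset.mem_filter, Finset.mem_univ, true_and] at hp1
      simp only [hforbI, Finset.mem_filter, Finset.mem_univ, true_and] at hpf
      exact hp1 ⟨hpf.1, Or.inl hpf.2.1⟩
    calc (allowed.filter (fun p => w p = i)).card
        ≤ ((Finset.univ.filter (fun p => w p = i)) \ forbI).card := Finset.card_le_card hsub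
      _ = (Finset.univ.filter (fun p => w p = i)).card - forbI.card :=
          Finset.card_sdiff_of_subset (forbI_sub w hw)
      _ = m - forbI.card := by rw [cardi w hw]
  -- the swap map stays inside the game
  have swap_mem : ∀ w ∈ W, ∀ p ∈ allowed, w p ≠ i →
      (fun q => w (Equiv.swap p pT q)) ∈ A ∧
        ¬((fun q => w (Equiv.swap p pT q)) pT = i) ∧
        (fun q => w (Equiv.swap p pT q)) p = i := by
    intro w hw p hp hwp
    have hw' := (hWmem w).mp hw
    have hwA : w ∈ A := hWA hw
    have hppT : p ≠ pT := by
      intro h; apply hwp; rw [h]; exact hw'.2.2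
    have hpal : ¬(p.val < T ∧ (y.getD p.val false = true ∨ G (y.take p.val) = i)) := by
      simpa [hallowed] using hp
    refine ⟨?_, ?_, ?_⟩
    · rw [hAmem]
      refine ⟨wordFinset_comp m n w _ hw'.1, ?_⟩
      apply fb_ext m n G _ y (le_of_lt hT)
      intro s hs
      set q : Fin (m * n) := ⟨s, by omega⟩ with hq
      by_cases hqp : q = p
      · rw [hqp, Equiv.swap_apply_left, hw'.2.2]
        have hps : p.val = s := by rw [← hqp]
        have := hpal
        rw [hps] at this
        push_neg at this
        obtain ⟨h1, h2⟩ := this hs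
        have h1' : y.getD s false = false := by simpa using h1
        rw [h1']
        symm
        simp only [decide_eq_false_iff_not]
        intro hcon
        exact h2 hcon.symm
      · have hqT : q ≠ pT := by
          intro h
          have : s = T := congrArg Fin.val h
          omega
        rw [Equiv.swap_apply_of_ne_of_ne hqp hqT]
        exact fbfact w hwA s hs
    · show ¬ w (Equiv.swap p pT pT) = i
      rw [Equiv.swap_apply_right]
      exact hwp
    · show w (Equiv.swap p pT p) = i
      rw [Equiv.swap_apply_left]
      exact hw'.2.2
  -- double counting via sigma sets
  set E : Finset ((_ : Fin (m * n) → Fin n) × Fin (m * n)) :=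
    W.sigma (fun w => allowed.filter (fun p => ¬(w p = i))) with hE
  set E' : Finset ((_ : Fin (m * n) → Fin n) × Fin (m * n)) :=
    (A \ W).sigma (fun w => allowed.filter (fun p => w p = i)) with hE'
  have hEcard : E.card = ∑ w ∈ W, (allowed.filter (fun p => ¬(w p = i))).card :=
    Finset.card_sigma _ _
  have hE'card : E'.card = ∑ w ∈ A \ W, (allowed.filter (fun p => w p = i)).card :=
    Finset.card_sigma _ _
  have hEE' : E.card ≤ E'.card := by
    apply Finset.card_le_card_of_injOn
      (fun q => ⟨fun x => q.1 (Equiv.swap q.2 pT x), q.2⟩)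
    · rintro ⟨w, p⟩ hq
      simp only [hE, Finset.mem_coe, Finset.mem_sigma, Finset.mem_filter] at hq
      obtain ⟨hwW, hpal, hwp⟩ := hq
      obtain ⟨h1, h2, h3⟩ := swap_mem w hwW p hpal hwp
      simp only [hE', Finset.mem_coe, Finset.mem_sigma, Finset.mem_filter, Finset.mem_sdiff]
      refine ⟨⟨h1, ?_⟩, hpal, h3⟩
      intro hcon
      exact h2 ((hWmem _).mp hcon).2.2
    · rintro ⟨w1, p1⟩ h1 ⟨w2, p2⟩ h2 heq
      have hp' : p1 = p2 := congrArg (fun s : (_ : Fin (m * n) → Fin n) × Fin (m * n) => s.2) heq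
      subst hp'
      have hf : (fun x => w1 (Equiv.swap p1 pT x)) = (fun x => w2 (Equiv.swap p1 pT x)) :=
        congrArg (fun s : (_ : Fin (m * n) → Fin n) × Fin (m * n) => s.1) heq
      have hw : w1 = w2 := by
        funext x
        have := congrFun hf (Equiv.swap p1 pT x)
        simpa [Equiv.swap_apply_self] using this
      rw [hw]
  -- lower bound for E
  have hlow : W.card * (allowed.card - (m - forbI.card)) ≤ E.card := by
    rw [hEcard]
    have hperw : ∀ w ∈ W, allowed.card - (m - forbI.card)
        ≤ (allowed.filter (fun p => ¬(w p = i))).card := by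
      intro w hw
      have h1 : allowed.filter (fun p => ¬(w p = i))
          = allowed \ allowed.filter (fun p => w p = i) := Finset.filter_not _ _
      rw [h1, Finset.card_sdiff_of_subset (Finset.filter_subset _ _)]
      exact Nat.sub_le_sub_left (keybound w (hWA hw)) _
    have := Finset.card_nsmul_le_sum W
      (fun w => (allowed.filter (fun p => ¬(w p = i))).card)
      (allowed.card - (m - forbI.card)) hperw
    simpa [smul_eq_mul] using this
  have hhigh : E'.card ≤ (A.card - W.card) * (m - forbI.card) := by
    rw [hE'card]
    have hperw : ∀ w ∈ A \ W,
        (allowed.filter (fun p => w p = i)).card ≤ m - forbI.card := by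
      intro w hw
      exact keybound w (Finset.sdiff_subset hw)
    have := Finset.sum_le_card_nsmul (A \ W)
      (fun w => (allowed.filter (fun p => w p = i)).card)
      (m - forbI.card) hperw
    rw [Finset.card_sdiff_of_subset hWA] at this
    simpa [smul_eq_mul] using this
  have hWle : W.card ≤ A.card := Finset.card_le_card hWA
  calc W.card * allowed.card
      ≤ W.card * ((allowed.card - (m - forbI.card)) + (m - forbI.card)) :=
        Nat.mul_le_mul_left _ le_tsub_add
    _ = W.card * (allowed.card - (m - forbI.card)) + W.card * (m - forbI.card) :=
        Nat.mul_add _ _ _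
    _ ≤ (A.card - W.card) * (m - forbI.card) + W.card * (m - forbI.card) :=
        Nat.add_le_add_right (le_trans hlow (le_trans hEE' hhigh)) _
    _ = ((A.card - W.card) + W.card) * (m - forbI.card) := (Nat.add_mul _ _ _).symm
    _ = A.card * (m - forbI.card) := by rw [Nat.sub_add_cancel hWle]

lemma guessesOf_length (n : ℕ) (G : List Bool → Fin n) (y : List Bool) :
    (guessesOf n G y).length = y.length := by simp [guessesOf]

lemma guessesOf_getD (n : ℕ) (G : List Bool → Fin n) (y : List Bool) {s : ℕ}
    (hs : s < y.length) (d : Fin n) :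
    (guessesOf n G y).getD s d = G (y.take s) := by
  rw [List.getD_eq_getElem _ _ (by rw [guessesOf_length]; exact hs)]
  simp [guessesOf]

lemma card_fin_eq {L L' : ℕ} (h : L = L') (p : ℕ → Prop) [DecidablePred p] :
    (Finset.univ.filter (fun s : Fin L => p s.val)).card
      = (Finset.univ.filter (fun s : Fin L' => p s.val)).card := by
  subst h; rfl

lemma card_fin_cast {M L : ℕ} (hL : L ≤ M) (p : ℕ → Prop) [DecidablePred p] :
    (Finset.univ.filter (fun s : Fin L => p s.val)).card
      = (Finset.univ.filter (fun q : Fin M => q.val < L ∧ p q.val)).card := by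
  refine Finset.card_bij' (fun s _ => (⟨s.val, lt_of_lt_of_le s.isLt hL⟩ : Fin M))
    (fun q hq => (⟨q.val, (Finset.mem_filter.mp hq).2.1⟩ : Fin L)) ?_ ?_ ?_ ?_
  · intro a ha
    simp only [Finset.mem_filter, Finset.mem_univ, true_and] at ha ⊢
    exact ⟨a.isLt, ha⟩
  · intro q hq
    simp only [Finset.mem_filter, Finset.mem_univ, true_and] at hq ⊢
    exact hq.2
  · intro a ha; rfl
  · intro q hq; rfl

theorem stmt_16 (m n : ℕ) (hm : 0 < m) (hn : 0 < n) (G : List Bool → Fin n)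
    (t : ℕ) (ht1 : 1 ≤ t) (ht2 : t ≤ m * n) (y : List Bool) (hy : y.length = t - 1)
    (i : Fin n)
    -- the history `y` has positive probability:
    (hpos : ((wordFinset m n).filter (fun w => fb m n G w (t - 1) = y)).Nonempty)
    -- the denominator `mn - a_i - Y` is positive:
    (hden : (guessesOf n G y).countP (fun g => decide (g = i)) + y.countP id < m * n) :
    (((wordFinset m n).filter
          (fun w => fb m n G w (t - 1) = y ∧ w ⟨t - 1, by omega⟩ = i)).card : ℝ) /
        (((wordFinset m n).filter (fun w => fb m n G w (t - 1) = y)).card : ℝ) ≤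
      ((m - ((guessesOf n G y).zip y).countP (fun q => decide (q.1 = i) && q.2) : ℕ) : ℝ) /
        ((m * n : ℝ) - (guessesOf n G y).countP (fun g => decide (g = i)) - y.countP id) := by
  obtain ⟨T, rfl⟩ : ∃ T, t = T + 1 := ⟨t - 1, by omega⟩
  simp only [Nat.add_sub_cancel] at hy hpos ⊢
  subst hy
  have hT : y.length < m * n := by omega
  -- Finset versions of the three list counts
  have ha : (guessesOf n G y).countP (fun g => decide (g = i))
      = (Finset.univ.filter (fun s : Fin y.length => G (y.take s.val) = i)).card := by
    rw [countP_eq_card _ i]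
    rw [card_fin_eq (guessesOf_length n G y)
      (fun s => (decide ((guessesOf n G y).getD s i = i)) = true)]
    congr 1
    apply Finset.filter_congr
    intro s _
    rw [guessesOf_getD n G y s.isLt i]
    simp
  have hY : y.countP id
      = (Finset.univ.filter (fun s : Fin y.length => y.getD s.val false = true)).card := by
    rw [countP_eq_card _ false]
    congr 1
  have hc : ((guessesOf n G y).zip y).countP (fun q => decide (q.1 = i) && q.2)
      = (Finset.univ.filter (fun s : Fin y.length =>
          y.getD s.val false = true ∧ G (y.take s.val) = i)).card := by
    rw [countP_eq_card _ (i, false)]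
    have hlen : ((guessesOf n G y).zip y).length = y.length := by
      rw [List.length_zip, guessesOf_length]
      simp
    rw [card_fin_eq hlen (fun s =>
      (decide ((((guessesOf n G y).zip y).getD s (i, false)).1 = i)
        && (((guessesOf n G y).zip y).getD s (i, false)).2) = true)]
    congr 1
    apply Finset.filter_congr
    intro s _
    have hs := s.isLt
    have hzip : ((guessesOf n G y).zip y).getD s.val (i, false)
        = (G (y.take s.val), y.getD s.val false) := by
      rw [List.getD_eq_getElem _ _ (by rw [hlen]; exact hs)]
      rw [List.getElem_zip]
      rw [Prod.mk.injEq]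
      constructor
      · rw [← guessesOf_getD n G y hs i]
        rw [List.getD_eq_getElem _ _ (by rw [guessesOf_length]; exact hs)]
      · rw [List.getD_eq_getElem _ _ hs]
    rw [hzip]
    simp [and_comm]
  -- the combinatorial core
  have hkey := main_count m n G y i hT
  set A : Finset (Fin (m * n) → Fin n) :=
    (wordFinset m n).filter (fun w => fb m n G w y.length = y) with hA
  set W : Finset (Fin (m * n) → Fin n) :=
    (wordFinset m n).filter
      (fun w => fb m n G w y.length = y ∧ w ⟨y.length, hT⟩ = i) with hW
  set allowed : Finset (Fin (m * n)) :=
    Finset.univ.filter (fun p : Fin (m * n) =>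
      ¬(p.val < y.length ∧ (y.getD p.val false = true ∨ G (y.take p.val) = i))) with hallowed
  set forbI : Finset (Fin (m * n)) :=
    Finset.univ.filter (fun p : Fin (m * n) =>
      p.val < y.length ∧ y.getD p.val false = true ∧ G (y.take p.val) = i) with hforbI
  -- identify forbI.card with the list count
  have hcF : forbI.card = ((guessesOf n G y).zip y).countP (fun q => decide (q.1 = i) && q.2) := by
    rw [hc, card_fin_cast (le_of_lt hT)
      (fun s => y.getD s false = true ∧ G (y.take s) = i)]
  -- lower bound on allowed.card
  have hforb_card : allowed.card
      + (Finset.univ.filter (fun p : Fin (m * n) =>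
          p.val < y.length ∧ (y.getD p.val false = true ∨ G (y.take p.val) = i))).card
      = m * n := by
    rw [hallowed]
    rw [Finset.filter_not, Finset.card_sdiff_of_subset (Finset.filter_subset _ _)]
    have h1 : (Finset.univ.filter (fun p : Fin (m * n) =>
        p.val < y.length ∧ (y.getD p.val false = true ∨ G (y.take p.val) = i))).card
        ≤ (Finset.univ : Finset (Fin (m * n))).card := Finset.card_le_card (Finset.filter_subset _ _)
    simp only [Finset.card_univ, Fintype.card_fin] at h1 ⊢
    omega
  have hforb_le : (Finset.univ.filter (fun p : Fin (m * n) =>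
        p.val < y.length ∧ (y.getD p.val false = true ∨ G (y.take p.val) = i))).card
      ≤ y.countP id + (guessesOf n G y).countP (fun g => decide (g = i)) := by
    rw [hY, ha,
      card_fin_cast (le_of_lt hT) (fun s => y.getD s false = true),
      card_fin_cast (le_of_lt hT) (fun s => G (y.take s) = i)]
    calc (Finset.univ.filter (fun p : Fin (m * n) =>
            p.val < y.length ∧ (y.getD p.val false = true ∨ G (y.take p.val) = i))).card
        ≤ ((Finset.univ.filter (fun q : Fin (m * n) =>
              q.val < y.length ∧ y.getD q.val false = true))
            ∪ (Finset.univ.filter (fun q : Fin (m * n) =>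
              q.val < y.length ∧ G (y.take q.val) = i))).card := by
          apply Finset.card_le_card
          intro p hp
          simp only [Finset.mem_filter, Finset.mem_univ, true_and, Finset.mem_union] at hp ⊢
          tauto
      _ ≤ _ := Finset.card_union_le _ _
  have hNge : m * n ≤ allowed.card
      + ((guessesOf n G y).countP (fun g => decide (g = i)) + y.countP id) := by omega
  -- positivity
  have hA0 : 0 < A.card := Finset.card_pos.mpr hpos
  -- pass to the reals
  set al := (guessesOf n G y).countP (fun g => decide (g = i)) with hal
  set Yl := y.countP id with hYl
  set cl := ((guessesOf n G y).zip y).countP (fun q => decide (q.1 = i) && q.2) with hcl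
  have hD : (0:ℝ) < (m * n : ℝ) - al - Yl := by
    have h1 : ((al + Yl : ℕ) : ℝ) < ((m * n : ℕ) : ℝ) := by exact_mod_cast hden
    push_cast at h1
    linarith
  rw [div_le_div_iff₀ (by exact_mod_cast hA0) hD]
  have hkeyR : (W.card : ℝ) * (allowed.card : ℝ) ≤ (A.card : ℝ) * ((m - cl : ℕ) : ℝ) := by
    rw [← hcF]
    exact_mod_cast hkey
  have hNR : (m * n : ℝ) - al - Yl ≤ (allowed.card : ℝ) := by
    have h1 : ((m * n : ℕ) : ℝ) ≤ ((allowed.card + (al + Yl) : ℕ) : ℝ) := by exact_mod_cast hNge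
    push_cast at h1
    linarith
  calc (W.card : ℝ) * ((m * n : ℝ) - al - Yl)
      ≤ (W.card : ℝ) * (allowed.card : ℝ) :=
        mul_le_mul_of_nonneg_left hNR (Nat.cast_nonneg _)
    _ ≤ (A.card : ℝ) * ((m - cl : ℕ) : ℝ) := hkeyR
    _ = ((m - cl : ℕ) : ℝ) * (A.card : ℝ) := mul_comm _ _
end

section
/- Let L(π), for π ∈ S_{m,n}, be the largest integer p such that there exist indices i_1 < i_2 < ... < i_p with π_{i_j} = j for all 1 ≤ j ≤ p. If the partial-feedback guessing bound P⁺_{m,n} ≤ m + E(m) holds (for some error function E), then E[L(π)] ≤ m + E(m) for π uniform on S_{m,n}; in particular, the strategy of guessing 1 until correct, then 2 until correct, etc., achieves at least L(π) correct guesses in the partial feedback game on π. -/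
/-- `Lstat m n w` is the largest `p` such that `w` contains `1, 2, …, p` (0-indexed:
`0, 1, …, p-1`) as a subsequence, the `j`-th found entry having value `j`. -/
noncomputable def Lstat (m n : ℕ) (w : Fin (m * n) → Fin n) : ℕ :=
  sSup {p : ℕ | ∃ hp : p ≤ n, ∃ f : Fin p → Fin (m * n), StrictMono f ∧
    ∀ j : Fin p, w (f j) = ⟨j.1, lt_of_lt_of_le j.2 hp⟩}

lemma cnt_mono (m n : ℕ) (G : List Bool → Fin n) (w : Fin (m*n) → Fin n) (t : ℕ) :
    (fb m n G w t).countP id ≤ (fb m n G w (t+1)).countP id := by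
  simp [fb, List.countP_append]

lemma cnt_mono' (m n : ℕ) (G : List Bool → Fin n) (w : Fin (m*n) → Fin n) :
    Monotone (fun t => (fb m n G w t).countP id) :=
  monotone_nat_of_le_succ (cnt_mono m n G w)

lemma cnt_succ (m n : ℕ) (G : List Bool → Fin n) (w : Fin (m*n) → Fin n) (t : ℕ) (ht : t < m*n) :
    (fb m n G w (t+1)).countP id =
      (fb m n G w t).countP id + (if w ⟨t, ht⟩ = G (fb m n G w t) then 1 else 0) := by
  simp [fb, List.countP_append, ht, List.countP_cons]

/-- Key step: at a position where the deck shows value `j` and at least `j` correct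
guesses have occurred, the sequential strategy reaches `j+1` correct guesses. -/
lemma key_step (m n : ℕ) (hn : 0 < n) (w : Fin (m*n) → Fin n) (t : Fin (m*n))
    (j : ℕ) (hj : j < n)
    (hw : w t = ⟨j, hj⟩)
    (hc : j ≤ (fb m n (fun y => ⟨min (y.countP id) (n - 1), by omega⟩) w t.1).countP id) :
    j + 1 ≤ (fb m n (fun y => ⟨min (y.countP id) (n - 1), by omega⟩) w (t.1+1)).countP id := by
  set G : List Bool → Fin n := fun y => ⟨min (y.countP id) (n - 1), by omega⟩ with hG
  rcases lt_or_eq_of_le hc with h | h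
  · exact le_trans h (cnt_mono m n G w t.1)
  · have hwt : w ⟨t.1, t.2⟩ = G (fb m n G w t.1) := by
      have hGv : (G (fb m n G w t.1)).1 = min ((fb m n G w t.1).countP id) (n-1) := rfl
      apply Fin.ext
      rw [show (⟨t.1, t.2⟩ : Fin (m*n)) = t from rfl, hw, hGv, ← h]
      simp only [Fin.val_mk]
      omega
    rw [cnt_succ m n G w t.1 t.2, ← h, if_pos hwt]

lemma key_s19 (m n : ℕ) (hn : 0 < n) (w : Fin (m*n) → Fin n)
    (p : ℕ) (hp : p ≤ n) (f : Fin p → Fin (m*n)) (hf : StrictMono f)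
    (hw : ∀ j : Fin p, w (f j) = ⟨j.1, lt_of_lt_of_le j.2 hp⟩) :
    ∀ j : ℕ, ∀ hjp : j < p,
      j + 1 ≤ (fb m n (fun y => ⟨min (y.countP id) (n - 1), by omega⟩) w ((f ⟨j, hjp⟩).1 + 1)).countP id := by
  set G : List Bool → Fin n := fun y => ⟨min (y.countP id) (n - 1), by omega⟩ with hG
  intro j
  induction j with
  | zero =>
    intro hjp
    exact key_step m n hn w (f ⟨0, hjp⟩) 0 (by omega) (hw ⟨0, hjp⟩) (Nat.zero_le _)
  | succ j ih =>
    intro hjp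
    have hj : j < p := by omega
    have h1 : j + 1 ≤ (fb m n G w ((f ⟨j, hj⟩).1 + 1)).countP id := ih hj
    have hle : (f ⟨j, hj⟩).1 + 1 ≤ (f ⟨j+1, hjp⟩).1 :=
      hf (show (⟨j, hj⟩ : Fin p) < ⟨j+1, hjp⟩ by simp)
    have h2 : j + 1 ≤ (fb m n G w ((f ⟨j+1, hjp⟩).1)).countP id :=
      le_trans h1 (cnt_mono' m n G w hle)
    exact key_step m n hn w (f ⟨j+1, hjp⟩) (j+1) (by omega) (hw ⟨j+1, hjp⟩) h2

lemma Lstat_le (m n : ℕ) (hn : 0 < n) (w : Fin (m*n) → Fin n) :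
    Lstat m n w ≤
      (fb m n (fun y => ⟨min (y.countP id) (n - 1), by omega⟩) w (m * n)).countP id := by
  set G : List Bool → Fin n := fun y => ⟨min (y.countP id) (n - 1), by omega⟩ with hG
  apply csSup_le
  · exact ⟨0, Nat.zero_le n, Fin.elim0, fun a => a.elim0, fun j => j.elim0⟩
  · rintro p ⟨hp, f, hf, hwf⟩
    rcases Nat.eq_zero_or_pos p with rfl | hppos
    · exact Nat.zero_le _
    have hjp : p - 1 < p := by omega
    have h := key_s19 m n hn w p hp f hf hwf (p-1) hjp
    have hle : (f ⟨p-1, hjp⟩).1 + 1 ≤ m * n := (f ⟨p-1, hjp⟩).2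
    calc p = (p - 1) + 1 := by omega
    _ ≤ (fb m n G w ((f ⟨p-1, hjp⟩).1 + 1)).countP id := h
    _ ≤ _ := cnt_mono' m n G w hle

theorem stmt_19 (m n : ℕ) (hm : 0 < m) (hn : 0 < n) (E : ℝ) :
    -- the sequential strategy (guess `1` until correct, then `2` until correct, …)
    -- always gets at least `L(w)` correct guesses:
    (∀ w ∈ wordFinset m n,
      Lstat m n w ≤
        (fb m n (fun y => ⟨min (y.countP id) (n - 1), by omega⟩) w (m * n)).countP id) ∧
    -- hence a bound `P⁺_{m,n} ≤ m + E` implies `𝔼[L] ≤ m + E`: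
    ((∀ G : List Bool → Fin n,
        (∑ w ∈ wordFinset m n, ((fb m n G w (m * n)).countP id : ℝ)) /
            ((wordFinset m n).card : ℝ) ≤ (m : ℝ) + E) →
      (∑ w ∈ wordFinset m n, (Lstat m n w : ℝ)) / ((wordFinset m n).card : ℝ) ≤
        (m : ℝ) + E) := by
  constructor
  · intro w _
    exact Lstat_le m n hn w
  · intro hP
    set G : List Bool → Fin n := fun y => ⟨min (y.countP id) (n - 1), by omega⟩ with hG
    refine le_trans ?_ (hP G)
    have hsum : (∑ w ∈ wordFinset m n, (Lstat m n w : ℝ)) ≤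
        ∑ w ∈ wordFinset m n, ((fb m n G w (m * n)).countP id : ℝ) := by
      apply Finset.sum_le_sum
      intro w _
      exact_mod_cast Lstat_le m n hn w
    gcongr
end
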